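/- arXiv:1401.4724 — 8 statements merged into one kernel-verified Lean document; each statement's English description precedes it below -/
import Mathlib

section
/- Let P, Q ∈ ℂ[[z,w]] be formal power series in two variables such that the constant coefficient of Q vanishes. Let p denote the constant coefficient of P and let q denote the coefficient of z in Q. Assume that for every positive integer r one has r² − (1 + p)r − q ≠ 0 (equivalently, the matrix L = [[0,1],[q, 1+p]] has no positive integer eigenvalue). Then there exists a unique formal power series ĥ(w) ∈ ℂ[[w]] with zero constant term such that w²·ĥ''(w) = w·P(ĥ(w), w)·ĥ'(w) + Q(ĥ(w), w) holds as an identity of formal power series in w. -/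
open Finset

/-- The coefficient of `z^k w^j` in a formal power series in two variables
(variable `0` is `z`, variable `1` is `w`). -/
noncomputable def mvCoeff (P : MvPowerSeries (Fin 2) ℂ) (k j : ℕ) : ℂ :=
  MvPowerSeries.coeff (Finsupp.single (0 : Fin 2) k + Finsupp.single (1 : Fin 2) j) P

/-- Substitution of `(h(w), w)` into a two-variable formal power series
`P(z,w) = Σ p_{kj} z^k w^j`. For `h` with zero constant term, the coefficient of `w^n`
in `P(h(w), w)` is the (finite) sum `Σ_{j ≤ n} Σ_{k ≤ n} p_{kj}·coeff_{n-j}(h^k)`. -/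
noncomputable def substSeries (P : MvPowerSeries (Fin 2) ℂ) (h : PowerSeries ℂ) :
    PowerSeries ℂ :=
  PowerSeries.mk fun n =>
    ∑ j ∈ range (n + 1), ∑ k ∈ range (n + 1),
      mvCoeff P k j * PowerSeries.coeff (n - j) (h ^ k)

namespace FSN

open PowerSeries

noncomputable def rhs (P Q : MvPowerSeries (Fin 2) ℂ) (h : PowerSeries ℂ) : PowerSeries ℂ :=
  PowerSeries.X * substSeries P h * h.derivativeFun + substSeries Q h

noncomputable def disc (P Q : MvPowerSeries (Fin 2) ℂ) (n : ℕ) : ℂ :=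
  (n : ℂ) ^ 2 - (1 + mvCoeff P 0 0) * (n : ℂ) - mvCoeff Q 1 0

lemma pow_dvd_sub {h g : PowerSeries ℂ} (h0 : constantCoeff h = 0)
    (g0 : constantCoeff g = 0) {n : ℕ} (hd : (X : PowerSeries ℂ) ^ n ∣ h - g) (k : ℕ) :
    (X : PowerSeries ℂ) ^ (n + k - 1) ∣ h ^ k - g ^ k := by
  induction k with
  | zero => simp
  | succ k ih =>
    have hX : (X : PowerSeries ℂ) ∣ h := X_dvd_iff.2 h0
    have gX : (X : PowerSeries ℂ) ∣ g := X_dvd_iff.2 g0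
    have e : h ^ (k + 1) - g ^ (k + 1) = h * (h ^ k - g ^ k) + (h - g) * g ^ k := by ring
    rw [e]
    have e2 : n + (k + 1) - 1 = n + k := by omega
    rw [e2]
    refine dvd_add ?_ ?_
    · rcases Nat.eq_zero_or_pos (n + k) with h0' | hpos
      · rw [h0', pow_zero]; exact one_dvd _
      · have : n + k = 1 + (n + k - 1) := by omega
        rw [this, pow_add, pow_one]
        exact mul_dvd_mul hX ih
    · rw [pow_add]
      exact mul_dvd_mul hd (pow_dvd_pow_of_dvd gX k)

lemma coeff_pow_congr {h g : PowerSeries ℂ} (h0 : constantCoeff h = 0)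
    (g0 : constantCoeff g = 0) {n : ℕ}
    (hag : ∀ i < n, coeff i h = coeff i g) {k m : ℕ} (hk : 2 ≤ k) (hm : m ≤ n) :
    coeff m (h ^ k) = coeff m (g ^ k) := by
  have hd : (X : PowerSeries ℂ) ^ n ∣ h - g := by
    rw [X_pow_dvd_iff]
    intro i hi
    simp [hag i hi]
  have h2 := pow_dvd_sub h0 g0 hd k
  have h3 : coeff m (h ^ k - g ^ k) = 0 :=
    X_pow_dvd_iff.1 h2 m (by omega)
  rw [map_sub, sub_eq_zero] at h3
  exact h3

lemma coeff_subst_congr (R : MvPowerSeries (Fin 2) ℂ) {h g : PowerSeries ℂ}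
    (h0 : constantCoeff h = 0) (g0 : constantCoeff g = 0) {n : ℕ}
    (hag : ∀ i < n, coeff i h = coeff i g) {m : ℕ} (hm : m < n) :
    coeff m (substSeries R h) = coeff m (substSeries R g) := by
  simp only [substSeries, coeff_mk]
  refine sum_congr rfl fun j _ => sum_congr rfl fun k _ => ?_
  congr 1
  match k with
  | 0 => rfl
  | 1 => simpa using hag (m - j) (lt_of_le_of_lt (Nat.sub_le m j) hm)
  | (k + 2) =>
    exact coeff_pow_congr h0 g0 hag (by omega) (le_trans (Nat.sub_le m j) (le_of_lt hm))

lemma coeff_subst_zero (R : MvPowerSeries (Fin 2) ℂ) (h : PowerSeries ℂ) :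
    coeff 0 (substSeries R h) = mvCoeff R 0 0 := by
  simp [substSeries]

lemma coeff_substQ (Q : MvPowerSeries (Fin 2) ℂ) {h g : PowerSeries ℂ}
    (h0 : constantCoeff h = 0) (g0 : constantCoeff g = 0) {n : ℕ} (hn : 1 ≤ n)
    (hag : ∀ i < n, coeff i h = coeff i g) :
    coeff n (substSeries Q h) - coeff n (substSeries Q g)
      = mvCoeff Q 1 0 * (coeff n h - coeff n g) := by
  simp only [substSeries, coeff_mk]
  rw [← Finset.sum_sub_distrib]
  have : ∀ j ∈ range (n + 1),
      (∑ k ∈ range (n + 1), mvCoeff Q k j * coeff (n - j) (h ^ k)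
        - ∑ k ∈ range (n + 1), mvCoeff Q k j * coeff (n - j) (g ^ k))
      = if j = 0 then mvCoeff Q 1 0 * (coeff n h - coeff n g) else 0 := by
    intro j hj
    rw [← Finset.sum_sub_distrib]
    by_cases hj0 : j = 0
    · subst hj0
      rw [if_pos rfl]
      rw [Finset.sum_eq_single_of_mem 1 (by simp [Nat.lt_succ_of_le hn])]
      · simp [mul_sub]
      · intro k _ hk1
        match k with
        | 0 => simp
        | 1 => exact absurd rfl hk1
        | (k + 2) =>
          rw [coeff_pow_congr h0 g0 hag (by omega) (by omega)]
          ring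
    · rw [if_neg hj0]
      apply Finset.sum_eq_zero
      intro k _
      have hjn : j ≤ n := by simpa using Nat.lt_succ_iff.1 (mem_range.1 hj)
      have hmn : n - j < n := by omega
      match k with
      | 0 => ring_nf
      | 1 =>
        rw [pow_one, pow_one, hag _ hmn]
        ring
      | (k + 2) =>
        rw [coeff_pow_congr h0 g0 hag (by omega) (le_of_lt hmn)]
        ring
  rw [Finset.sum_congr rfl this, Finset.sum_ite_eq' (range (n + 1)) 0]
  simp

lemma coeff_derivativeFun' (f : PowerSeries ℂ) (n : ℕ) :
    coeff n f.derivativeFun = coeff (n + 1) f * (n + 1) :=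
  coeff_derivative f n

lemma coeff_substP_part (Pp : MvPowerSeries (Fin 2) ℂ) {h g : PowerSeries ℂ}
    (h0 : constantCoeff h = 0) (g0 : constantCoeff g = 0) {n : ℕ} (hn : 1 ≤ n)
    (hag : ∀ i < n, coeff i h = coeff i g) :
    coeff n (X * substSeries Pp h * h.derivativeFun)
      - coeff n (X * substSeries Pp g * g.derivativeFun)
      = mvCoeff Pp 0 0 * n * (coeff n h - coeff n g) := by
  obtain ⟨m, rfl⟩ : ∃ m, n = m + 1 := ⟨n - 1, by omega⟩
  rw [mul_assoc, mul_assoc, coeff_succ_X_mul, coeff_succ_X_mul, coeff_mul, coeff_mul,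
    ← Finset.sum_sub_distrib]
  have key : ∀ x ∈ antidiagonal m,
      (coeff x.1 (substSeries Pp h) * coeff x.2 h.derivativeFun
        - coeff x.1 (substSeries Pp g) * coeff x.2 g.derivativeFun)
      = if x = (0, m) then
          mvCoeff Pp 0 0 * (m + 1 : ℕ) * (coeff (m + 1) h - coeff (m + 1) g) else 0 := by
    intro x hx
    rw [Finset.HasAntidiagonal.mem_antidiagonal] at hx
    by_cases hx0 : x = (0, m)
    · subst hx0
      rw [if_pos rfl]
      simp only [coeff_subst_zero, coeff_derivativeFun']
      push_cast
      ring
    · rw [if_neg hx0]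
      have hx1 : 1 ≤ x.1 := by
        rcases Nat.eq_zero_or_pos x.1 with h1 | h1
        · exfalso; apply hx0
          have : x.2 = m := by omega
          ext <;> simp [h1, this]
        · exact h1
      have e1 : coeff x.1 (substSeries Pp h) = coeff x.1 (substSeries Pp g) :=
        coeff_subst_congr Pp h0 g0 hag (by omega)
      have e2 : coeff x.2 h.derivativeFun = coeff x.2 g.derivativeFun := by
        rw [coeff_derivativeFun', coeff_derivativeFun', hag (x.2 + 1) (by omega)]
      rw [e1, e2]
      ring
  rw [Finset.sum_congr rfl key, Finset.sum_ite_eq' (antidiagonal m) ((0 : ℕ), m)]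
  simp

lemma coeff_rhs_key (P Q : MvPowerSeries (Fin 2) ℂ) {h g : PowerSeries ℂ}
    (h0 : constantCoeff h = 0) (g0 : constantCoeff g = 0) {n : ℕ} (hn : 1 ≤ n)
    (hag : ∀ i < n, coeff i h = coeff i g) :
    coeff n (rhs P Q h) - coeff n (rhs P Q g)
      = (mvCoeff P 0 0 * n + mvCoeff Q 1 0) * (coeff n h - coeff n g) := by
  simp only [rhs, map_add]
  have := coeff_substP_part P h0 g0 hn hag
  have := coeff_substQ Q h0 g0 hn hag
  linear_combination coeff_substP_part P h0 g0 hn hag + coeff_substQ Q h0 g0 hn hag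

lemma coeff_lhs (f : PowerSeries ℂ) (n : ℕ) :
    coeff n ((X : PowerSeries ℂ) ^ 2 * f.derivativeFun.derivativeFun)
      = (n : ℂ) * ((n : ℂ) - 1) * coeff n f := by
  have e : (X : PowerSeries ℂ) ^ 2 * f.derivativeFun.derivativeFun
      = X * (X * f.derivativeFun.derivativeFun) := by ring
  match n with
  | 0 =>
    rw [e, coeff_zero_eq_constantCoeff, map_mul, constantCoeff_X]
    simp
  | 1 =>
    rw [e, coeff_succ_X_mul, coeff_zero_eq_constantCoeff, map_mul, constantCoeff_X]
    simp
  | (m + 2) =>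
    rw [e, coeff_succ_X_mul]
    have : (m + 1 : ℕ) = m + 1 := rfl
    rw [show (m + 1 : ℕ) = m + 1 from rfl, coeff_succ_X_mul, coeff_derivativeFun',
      coeff_derivativeFun']
    push_cast
    ring

lemma coeff_rhs_zero (P Q : MvPowerSeries (Fin 2) ℂ)
    (hQ0 : MvPowerSeries.constantCoeff Q = 0) (h : PowerSeries ℂ) :
    coeff 0 (rhs P Q h) = 0 := by
  simp only [rhs, map_add, coeff_subst_zero]
  have e1 : coeff 0 (X * substSeries P h * h.derivativeFun) = 0 := by
    rw [coeff_zero_eq_constantCoeff, map_mul, map_mul, constantCoeff_X]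
    simp
  rw [e1]
  have : mvCoeff Q 0 0 = MvPowerSeries.constantCoeff Q := by
    simp [mvCoeff, MvPowerSeries.coeff_zero_eq_constantCoeff]
  rw [this, hQ0, zero_add]

noncomputable def sol (P Q : MvPowerSeries (Fin 2) ℂ) : ℕ → ℂ
  | 0 => 0
  | n + 1 =>
    coeff (n + 1)
        (rhs P Q (PowerSeries.mk fun i => if _ : i < n + 1 then sol P Q i else 0))
      / disc P Q (n + 1)

end FSN

/-- **Existence and uniqueness of a formal solution in the nonresonant case.**
Let `P, Q` be formal power series in two variables with `Q(0,0) = 0`, let `p` be the constant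
coefficient of `P` and `q` the coefficient of `z` in `Q`. If `r² − (1+p)r − q ≠ 0` for every
positive integer `r`, then the equation `w²ĥ'' = wP(ĥ,w)ĥ' + Q(ĥ,w)` has a unique formal power
series solution `ĥ` with zero constant term. -/
theorem formal_solution_nonresonant
    (P Q : MvPowerSeries (Fin 2) ℂ)
    (hQ0 : MvPowerSeries.constantCoeff Q = 0)
    (hres : ∀ r : ℕ, 0 < r →
      (r : ℂ) ^ 2 - (1 + mvCoeff P 0 0) * (r : ℂ) - mvCoeff Q 1 0 ≠ 0) :
    ∃! h : PowerSeries ℂ, PowerSeries.constantCoeff h = 0 ∧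
      (PowerSeries.X : PowerSeries ℂ) ^ 2 * h.derivativeFun.derivativeFun
        = PowerSeries.X * substSeries P h * h.derivativeFun + substSeries Q h := by
  classical
  open FSN PowerSeries in
  -- the candidate solution
  set h : PowerSeries ℂ := PowerSeries.mk (FSN.sol P Q) with hh
  have hdisc : ∀ n : ℕ, 1 ≤ n → FSN.disc P Q n ≠ 0 := fun n hn => hres n hn
  have hsol0 : FSN.sol P Q 0 = 0 := by simp [FSN.sol]
  have h0 : PowerSeries.constantCoeff h = 0 := by
    rw [hh, ← PowerSeries.coeff_zero_eq_constantCoeff, PowerSeries.coeff_mk, hsol0]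
  -- the truncation of h below n
  have htrunc0 : ∀ n : ℕ, 1 ≤ n →
      PowerSeries.constantCoeff
        (PowerSeries.mk fun i => if _ : i < n then FSN.sol P Q i else 0) = 0 := by
    intro n hn
    rw [← PowerSeries.coeff_zero_eq_constantCoeff, PowerSeries.coeff_mk, dif_pos (by omega),
      hsol0]
  -- coefficient-wise equation for h
  have main : ∀ n : ℕ, 1 ≤ n →
      PowerSeries.coeff n (FSN.rhs P Q h) = (n : ℂ) * ((n : ℂ) - 1) * FSN.sol P Q n := by
    intro n hn
    obtain ⟨m, rfl⟩ : ∃ m, n = m + 1 := ⟨n - 1, by omega⟩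
    set t : PowerSeries ℂ :=
      PowerSeries.mk fun i => if _ : i < m + 1 then FSN.sol P Q i else 0 with ht
    have hagt : ∀ i < m + 1, PowerSeries.coeff i h = PowerSeries.coeff i t := by
      intro i hi
      rw [hh, ht, PowerSeries.coeff_mk, PowerSeries.coeff_mk, dif_pos hi]
    have hkey := FSN.coeff_rhs_key P Q h0 (htrunc0 (m + 1) (by omega)) hn hagt
    have htn : PowerSeries.coeff (m + 1) t = 0 := by
      rw [ht, PowerSeries.coeff_mk, dif_neg (by omega)]
    have hval : PowerSeries.coeff (m + 1) (FSN.rhs P Q t)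
        = FSN.sol P Q (m + 1) * FSN.disc P Q (m + 1) := by
      have : FSN.sol P Q (m + 1)
          = PowerSeries.coeff (m + 1) (FSN.rhs P Q t) / FSN.disc P Q (m + 1) := by
        rw [FSN.sol]
      rw [this, div_mul_cancel₀ _ (hdisc (m + 1) (by omega))]
    have hcn : PowerSeries.coeff (m + 1) h = FSN.sol P Q (m + 1) := by
      rw [hh, PowerSeries.coeff_mk]
    rw [htn, hcn, sub_zero] at hkey
    have : PowerSeries.coeff (m + 1) (FSN.rhs P Q h)
        = FSN.sol P Q (m + 1) * FSN.disc P Q (m + 1)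
          + (mvCoeff P 0 0 * (m + 1 : ℕ) + mvCoeff Q 1 0) * FSN.sol P Q (m + 1) := by
      rw [← hval]; linear_combination hkey
    rw [this, FSN.disc]
    push_cast
    ring
  refine ⟨h, ⟨h0, ?_⟩, ?_⟩
  · -- existence
    apply PowerSeries.ext
    intro n
    have : PowerSeries.X * substSeries P h * h.derivativeFun + substSeries Q h
        = FSN.rhs P Q h := rfl
    rw [this, FSN.coeff_lhs]
    match n with
    | 0 =>
      rw [FSN.coeff_rhs_zero P Q hQ0]
      simp
    | (m + 1) =>
      rw [main (m + 1) (by omega)]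
      rw [hh, PowerSeries.coeff_mk]
  · -- uniqueness
    rintro g ⟨g0, geq⟩
    have geq' : ∀ n : ℕ,
        (n : ℂ) * ((n : ℂ) - 1) * PowerSeries.coeff n g
          = PowerSeries.coeff n (FSN.rhs P Q g) := by
      intro n
      rw [← FSN.coeff_lhs, geq]
      rfl
    have heq' : ∀ n : ℕ,
        (n : ℂ) * ((n : ℂ) - 1) * PowerSeries.coeff n h
          = PowerSeries.coeff n (FSN.rhs P Q h) := by
      intro n
      match n with
      | 0 => rw [FSN.coeff_rhs_zero P Q hQ0]; simp
      | (m + 1) =>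
        rw [main (m + 1) (by omega), hh, PowerSeries.coeff_mk]
    have : ∀ n, PowerSeries.coeff n g = PowerSeries.coeff n h := by
      intro n
      induction n using Nat.strong_induction_on with
      | _ n ih =>
        match n with
        | 0 =>
          simp only [PowerSeries.coeff_zero_eq_constantCoeff, g0, h0]
        | (m + 1) =>
          have hag : ∀ i < m + 1, PowerSeries.coeff i g = PowerSeries.coeff i h :=
            fun i hi => ih i hi
          have hkey := FSN.coeff_rhs_key P Q g0 h0 (show 1 ≤ m + 1 by omega) hag
          rw [← geq' (m + 1), ← heq' (m + 1)] at hkey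
          have hd := hdisc (m + 1) (by omega)
          have hz : FSN.disc P Q (m + 1)
              * (PowerSeries.coeff (m + 1) g - PowerSeries.coeff (m + 1) h) = 0 := by
            rw [FSN.disc]
            push_cast
            push_cast at hkey
            linear_combination hkey
          rcases mul_eq_zero.1 hz with hc | hc
          · exact absurd hc hd
          · exact sub_eq_zero.1 hc
    exact PowerSeries.ext fun n => this n
end

section
/- Let p, q, c ∈ ℂ with c ≠ 0, and let k be a positive integer satisfying k(k−1) = pk + q (i.e. k is a characteristic root of the Euler equation). Then for any 0 < r₁ < r₂ there is no holomorphic function z on the annulus A(r₁,r₂) = {w ∈ ℂ : r₁ < |w| < r₂} satisfying w²·z''(w) = p·w·z'(w) + q·z(w) + c·wᵏ for all w ∈ A(r₁,r₂). -/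
open Complex Real

/-- **Resonance obstruction for the inhomogeneous Euler equation.**
If `k` is a positive integer that is a characteristic root of the Euler equation,
i.e. `k(k−1) = pk + q`, and `c ≠ 0`, then the equation `w²z'' = pwz' + qz + cwᵏ` has no
holomorphic solution on any annulus `{r₁ < |w| < r₂}` around the origin. -/
theorem euler_resonance_no_holomorphic_solution
    (p q c : ℂ) (hc : c ≠ 0) (k : ℕ) (hk : 0 < k)
    (hres : (k : ℂ) * ((k : ℂ) - 1) = p * (k : ℂ) + q)
    (r₁ r₂ : ℝ) (hr₁ : 0 < r₁) (hr₁₂ : r₁ < r₂)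
    (z : ℂ → ℂ)
    (hz : DifferentiableOn ℂ z {w : ℂ | r₁ < ‖w‖ ∧ ‖w‖ < r₂}) :
    ¬ (∀ w : ℂ, r₁ < ‖w‖ → ‖w‖ < r₂ →
        w ^ 2 * deriv (deriv z) w = p * w * deriv z w + q * z w + c * w ^ k) := by
  intro h
  set S : Set ℂ := {w : ℂ | r₁ < ‖w‖ ∧ ‖w‖ < r₂} with hS
  have hSopen : IsOpen S := by
    have : S = (fun w : ℂ => ‖w‖) ⁻¹' (Set.Ioo r₁ r₂) := rfl
    rw [this]
    exact isOpen_Ioo.preimage continuous_norm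
  have hzA : AnalyticOnNhd ℂ z S := hz.analyticOnNhd hSopen
  have hz'A : AnalyticOnNhd ℂ (deriv z) S := hzA.deriv
  -- the "primitive" H
  set H : ℂ → ℂ := fun w => w ^ (1 - (k:ℤ)) * deriv z w
      + ((k:ℂ) - 1 - p) * (w ^ (-(k:ℤ)) * z w) with hH
  have key : ∀ w ∈ S, HasDerivAt H (c * w⁻¹) w := by
    intro w hw
    have hw0 : w ≠ 0 := by
      intro h0
      have := hw.1
      rw [h0] at this
      simp at this
      linarith
    have h1 : HasDerivAt z (deriv z w) w := (hzA w hw).differentiableAt.hasDerivAt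
    have h2 : HasDerivAt (deriv z) (deriv (deriv z) w) w :=
      (hz'A w hw).differentiableAt.hasDerivAt
    have h3 : HasDerivAt (fun w : ℂ => w ^ (1 - (k:ℤ)))
        (((1 - (k:ℤ) : ℤ) : ℂ) * w ^ (1 - (k:ℤ) - 1)) w :=
      hasDerivAt_zpow _ _ (Or.inl hw0)
    have h4 : HasDerivAt (fun w : ℂ => w ^ (-(k:ℤ)))
        (((-(k:ℤ) : ℤ) : ℂ) * w ^ (-(k:ℤ) - 1)) w :=
      hasDerivAt_zpow _ _ (Or.inl hw0)
    have hD : HasDerivAt H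
        ((((1 - (k:ℤ) : ℤ) : ℂ) * w ^ (1 - (k:ℤ) - 1)) * deriv z w
          + w ^ (1 - (k:ℤ)) * deriv (deriv z) w
          + ((k:ℂ) - 1 - p) * ((((-(k:ℤ) : ℤ) : ℂ) * w ^ (-(k:ℤ) - 1)) * z w
            + w ^ (-(k:ℤ)) * deriv z w))
        w := (h3.mul h2).add ((h4.mul h1).const_mul _)
    convert hD using 1
    have hode := h w hw.1 hw.2
    have hkpow : w ^ k ≠ 0 := pow_ne_zero _ hw0
    have e1 : w ^ (1 - (k:ℤ)) = w / w ^ k := by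
      rw [zpow_sub₀ hw0, zpow_one, zpow_natCast]
    have e2 : w ^ (-(k:ℤ)) = 1 / w ^ k := by
      rw [zpow_neg, zpow_natCast]; ring
    have e3 : w ^ (1 - (k:ℤ) - 1) = 1 / w ^ k := by
      rw [show (1 - (k:ℤ) - 1) = -(k:ℤ) by ring, zpow_neg, zpow_natCast]; ring
    have e4 : w ^ (-(k:ℤ) - 1) = 1 / (w ^ k * w) := by
      rw [sub_eq_add_neg, zpow_add₀ hw0, zpow_neg, zpow_neg, zpow_natCast, zpow_one]; ring
    rw [e1, e2, e3, e4]
    field_simp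
    push_cast
    linear_combination (-1) * hode + (z w) * hres
  -- circle of radius R
  set R : ℝ := (r₁ + r₂) / 2 with hR
  have hR0 : 0 < R := by simp only [hR]; linarith
  have hR1 : r₁ < R := by simp only [hR]; linarith
  have hR2 : R < r₂ := by simp only [hR]; linarith
  have hmem : ∀ θ : ℝ, ((R : ℂ) * Complex.exp (θ * Complex.I)) ∈ S := by
    intro θ
    have : ‖(R : ℂ) * Complex.exp (θ * Complex.I)‖ = R := by
      simp [Complex.norm_exp, abs_of_pos hR0]
    constructor <;> simp only [Set.mem_setOf_eq, this] <;> [exact hR1; exact hR2]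
  set φ : ℝ → ℂ := fun θ => H ((R : ℂ) * Complex.exp (θ * Complex.I)) with hφ
  have hφderiv : ∀ θ : ℝ, HasDerivAt φ (c * Complex.I) θ := by
    intro θ
    have hγ : HasDerivAt (fun s : ℂ => (R : ℂ) * Complex.exp (s * Complex.I))
        ((R : ℂ) * Complex.exp ((θ:ℂ) * Complex.I) * Complex.I) θ := by
      have := (((hasDerivAt_id (θ:ℂ)).mul_const Complex.I).cexp).const_mul (R:ℂ)
      simpa [mul_comm, mul_assoc, mul_left_comm] using this
    have hne : (R : ℂ) * Complex.exp ((θ:ℂ) * Complex.I) ≠ 0 := by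
      apply mul_ne_zero
      · exact_mod_cast hR0.ne'
      · exact Complex.exp_ne_zero _
    have hHc := key _ (hmem θ)
    have := (hHc.comp (θ:ℂ) hγ)
    have h' : HasDerivAt (fun s : ℂ => H ((R:ℂ) * Complex.exp (s * Complex.I)))
        (c * Complex.I) (θ:ℂ) := by
      refine this.congr_deriv ?_
      rw [mul_assoc, inv_mul_cancel_left₀ hne]
    exact h'.comp_ofReal
  have hint : ∫ θ in (0:ℝ)..(2*π), (c * Complex.I) = φ (2*π) - φ 0 :=
    intervalIntegral.integral_eq_sub_of_hasDerivAt (fun θ _ => hφderiv θ)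
      (intervalIntegrable_const)
  have hper : φ (2*π) = φ 0 := by
    simp only [hφ]
    congr 1
    push_cast
    rw [Complex.exp_two_pi_mul_I]
    simp
  rw [hper, sub_self, intervalIntegral.integral_const] at hint
  have : ((2*π - 0 : ℝ) : ℂ) * (c * Complex.I) = 0 := by
    simpa [smul_eq_mul] using hint
  have hπ : ((2*π - 0 : ℝ) : ℂ) ≠ 0 := by
    simp [Real.pi_ne_zero]
  have := mul_eq_zero.mp this
  rcases this with h1 | h1
  · exact hπ h1
  · rcases mul_eq_zero.mp h1 with h2 | h2
    · exact hc h2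
    · exact Complex.I_ne_zero h2
end

section
/- Let p, q ∈ ℂ and 0 < r₁ < r₂. If the complex vector space of holomorphic functions z on the annulus A(r₁,r₂) = {w ∈ ℂ : r₁ < |w| < r₂} satisfying w²·z''(w) = p·w·z'(w) + q·z(w) for all w ∈ A(r₁,r₂) has dimension at least 2, then the polynomial λ² − (p+1)λ − q has two distinct roots, and both roots are integers. -/
open Complex Set

namespace EulerAux

def SAnn (r₁ r₂ : ℝ) : Set ℂ := {w : ℂ | r₁ < ‖w‖ ∧ ‖w‖ < r₂}

lemma isOpen_SAnn (r₁ r₂ : ℝ) : IsOpen (SAnn r₁ r₂) := by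
  have h1 : IsOpen {w : ℂ | r₁ < ‖w‖} :=
    isOpen_lt continuous_const continuous_norm
  have h2 : IsOpen {w : ℂ | ‖w‖ < r₂} :=
    isOpen_lt continuous_norm continuous_const
  exact (h1.inter h2)

lemma mem_circle {r₁ r₂ r : ℝ} (hr0 : 0 < r) (h1 : r₁ < r) (h2 : r < r₂) (t : ℝ) :
    (↑r * Complex.exp (↑t * I)) ∈ SAnn r₁ r₂ := by
  have : ‖(↑r * Complex.exp (↑t * I))‖ = r := by
    simp [Complex.norm_exp, abs_of_pos hr0]
  constructor <;> simp [this, abs_of_pos hr0, h1, h2]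

lemma hasDerivAt_circle (r : ℝ) (t : ℝ) :
    HasDerivAt (fun t : ℝ => (r : ℂ) * Complex.exp (↑t * I))
      ((r : ℂ) * Complex.exp (↑t * I) * I) t := by
  have h1 : HasDerivAt (fun t : ℝ => (t : ℂ) * I) I t := by
    simpa using ((hasDerivAt_id ((t : ℂ))).mul_const I).comp_ofReal
  have h2 := (Complex.hasDerivAt_exp ((t : ℂ) * I)).comp t h1
  simpa [Function.comp, mul_assoc] using h2.const_mul (r : ℂ)

variable {r₁ r₂ : ℝ} {f : ℂ → ℂ} {l : ℂ}

lemma angular (hf : DifferentiableOn ℂ f (SAnn r₁ r₂))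
    (heig : ∀ w ∈ SAnn r₁ r₂, w * deriv f w = l * f w)
    {r : ℝ} (hr0 : 0 < r) (h1 : r₁ < r) (h2 : r < r₂) (t : ℝ) :
    f (↑r * Complex.exp (↑t * I)) = f r * Complex.exp (l * t * I) := by
  set G : ℝ → ℂ := fun s => f (↑r * Complex.exp (↑s * I)) * Complex.exp (-(l * s * I)) with hG
  have key : ∀ s : ℝ, HasDerivAt G 0 s := by
    intro s
    set w : ℂ := ↑r * Complex.exp (↑s * I) with hw
    have hmem : w ∈ SAnn r₁ r₂ := mem_circle hr0 h1 h2 s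
    have hfd : HasDerivAt f (deriv f w) w :=
      (hf.differentiableAt ((isOpen_SAnn r₁ r₂).mem_nhds hmem)).hasDerivAt
    have h3 : HasDerivAt (fun s : ℝ => f (↑r * Complex.exp (↑s * I)))
        (deriv f w * (w * I)) s := by
      have := hfd.comp s (hasDerivAt_circle r s)
      simpa [Function.comp_def, hw] using this
    have h5 : HasDerivAt (fun s : ℝ => -(l * (s : ℂ) * I)) (-(l * I)) s := by
      simpa [mul_assoc] using (((hasDerivAt_id ((s : ℂ))).const_mul l).mul_const I).neg.comp_ofReal
    have h4 : HasDerivAt (fun s : ℝ => Complex.exp (-(l * s * I)))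
        (Complex.exp (-(l * s * I)) * (-(l * I))) s :=
      (Complex.hasDerivAt_exp _).comp s h5
    have h6 := h3.mul h4
    have he := heig w hmem
    refine h6.congr_deriv (Eq.symm ?_)
    linear_combination (-(Complex.exp (-(l * ↑s * I)) * I)) * he
  have hconst := is_const_of_deriv_eq_zero (fun s => (key s).differentiableAt)
    (fun s => (key s).deriv) t 0
  have h0 : G 0 = f r := by simp [hG]
  have ht : G t = f (↑r * Complex.exp (↑t * I)) * Complex.exp (-(l * t * I)) := rfl
  rw [ht, h0] at hconst
  have hne : Complex.exp (-(l * t * I)) ≠ 0 := Complex.exp_ne_zero _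
  field_simp [Complex.exp_neg] at hconst
  rw [← hconst, mul_assoc, ← Complex.exp_add,
    show -(↑t * I * l) + l * ↑t * I = 0 by ring, Complex.exp_zero, mul_one]

lemma mem_real {r₁ r₂ r : ℝ} (hr0 : 0 < r) (h1 : r₁ < r) (h2 : r < r₂) :
    ((r : ℂ)) ∈ SAnn r₁ r₂ := by
  constructor <;> simp [Complex.norm_real, abs_of_pos hr0, h1, h2]

lemma radial (hr₁ : 0 < r₁) (hf : DifferentiableOn ℂ f (SAnn r₁ r₂))
    (heig : ∀ w ∈ SAnn r₁ r₂, w * deriv f w = l * f w)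
    {x y : ℝ} (hx : x ∈ Ioo r₁ r₂) (hy : y ∈ Ioo r₁ r₂) :
    f x * Complex.exp (-(l * Real.log x)) = f y * Complex.exp (-(l * Real.log y)) := by
  set K : ℝ → ℂ := fun s => f s * Complex.exp (-(l * Real.log s)) with hK
  have key : ∀ s ∈ Ioo r₁ r₂, HasDerivAt K 0 s := by
    intro s hs
    have hs0 : 0 < s := lt_trans hr₁ hs.1
    have hmem : ((s : ℂ)) ∈ SAnn r₁ r₂ := mem_real hs0 hs.1 hs.2
    have hfd : HasDerivAt (fun s : ℝ => f s) (deriv f s) s :=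
      ((hf.differentiableAt ((isOpen_SAnn r₁ r₂).mem_nhds hmem)).hasDerivAt).comp_ofReal
    have hlog : HasDerivAt (fun s : ℝ => ((Real.log s : ℝ) : ℂ)) (↑(s⁻¹)) s :=
      (Real.hasDerivAt_log (ne_of_gt hs0)).ofReal_comp
    have h5 : HasDerivAt (fun s : ℝ => -(l * ((Real.log s : ℝ) : ℂ))) (-(l * ↑(s⁻¹))) s :=
      (hlog.const_mul l).neg
    have h4 : HasDerivAt (fun s : ℝ => Complex.exp (-(l * Real.log s)))
        (Complex.exp (-(l * Real.log s)) * (-(l * ↑(s⁻¹)))) s :=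
      (Complex.hasDerivAt_exp _).comp s h5
    have h6 := hfd.mul h4
    have he := heig _ hmem
    have hd : deriv f s = l * f s / s := by
      rw [eq_div_iff (by exact_mod_cast ne_of_gt hs0 : ((s:ℂ)) ≠ 0)]
      linear_combination he
    refine h6.congr_deriv (Eq.symm ?_)
    rw [hd]
    push_cast
    field_simp
    ring
  have main : ∀ a b : ℝ, a ∈ Ioo r₁ r₂ → b ∈ Ioo r₁ r₂ → a ≤ b → K a = K b := by
    intro a b ha hb hab
    have hsub : Icc a b ⊆ Ioo r₁ r₂ := fun s hs => ⟨lt_of_lt_of_le ha.1 hs.1, lt_of_le_of_lt hs.2 hb.2⟩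
    have := constant_of_has_deriv_right_zero
      (f := K) (a := a) (b := b)
      (fun s hs => ((key s (hsub hs)).continuousAt).continuousWithinAt)
      (fun s hs => ((key s (hsub (Ico_subset_Icc_self hs))).hasDerivWithinAt))
      b ⟨hab, le_refl b⟩
    exact this.symm
  rcases le_total x y with h | h
  · exact (main x y hx hy h)
  · exact (main y x hy hx h).symm

noncomputable def Eexp (l : ℂ) (w : ℂ) : ℂ :=
  Complex.exp (l * (Real.log ‖w‖ + w.arg * I))

lemma Eexp_ne_zero (l : ℂ) (w : ℂ) : Eexp l w ≠ 0 := Complex.exp_ne_zero _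

lemma eigen_formula (hr₁ : 0 < r₁) (hr : r₁ < r₂)
    (hf : DifferentiableOn ℂ f (SAnn r₁ r₂))
    (heig : ∀ w ∈ SAnn r₁ r₂, w * deriv f w = l * f w) :
    ∃ C : ℂ, ∀ w ∈ SAnn r₁ r₂, f w = C * Eexp l w := by
  set r₀ : ℝ := (r₁ + r₂) / 2 with hr₀
  have hr₀mem : r₀ ∈ Ioo r₁ r₂ := ⟨by simp [hr₀]; linarith, by simp [hr₀]; linarith⟩
  refine ⟨f r₀ * Complex.exp (-(l * Real.log r₀)), fun w hw => ?_⟩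
  have hw0 : 0 < ‖w‖ := lt_trans hr₁ hw.1
  have h1 : f w = f (‖w‖ : ℂ) * Complex.exp (l * w.arg * I) := by
    have := angular hf heig hw0 hw.1 hw.2 w.arg
    rwa [Complex.norm_mul_exp_arg_mul_I] at this
  have h2 := radial hr₁ hf heig ⟨hw.1, hw.2⟩ hr₀mem
  have h3 : f (‖w‖ : ℂ)
      = f r₀ * Complex.exp (-(l * Real.log r₀)) * Complex.exp (l * Real.log ‖w‖) := by
    rw [← h2, mul_assoc, ← Complex.exp_add]
    simp
  rw [h1, h3, Eexp, mul_assoc, ← Complex.exp_add]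
  congr 2
  push_cast
  ring

lemma eigen_int (hr₁ : 0 < r₁) (hr : r₁ < r₂)
    (hf : DifferentiableOn ℂ f (SAnn r₁ r₂))
    (heig : ∀ w ∈ SAnn r₁ r₂, w * deriv f w = l * f w)
    {C : ℂ} (hform : ∀ w ∈ SAnn r₁ r₂, f w = C * Eexp l w) (hC : C ≠ 0) :
    ∃ k : ℤ, l = k := by
  set r₀ : ℝ := (r₁ + r₂) / 2 with hr₀
  have h01 : r₁ < r₀ := by simp [hr₀]; linarith
  have h02 : r₀ < r₂ := by simp [hr₀]; linarith
  have hr₀0 : 0 < r₀ := lt_trans hr₁ h01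
  have h := angular hf heig hr₀0 h01 h02 (2 * Real.pi)
  have hl : ((2 * Real.pi : ℝ) : ℂ) * I = 2 * Real.pi * I := by push_cast; ring
  rw [show (((2 * Real.pi : ℝ) : ℂ) * I) = 2 * ↑Real.pi * I by push_cast; ring,
    Complex.exp_two_pi_mul_I, mul_one] at h
  have hfr : f r₀ ≠ 0 := by
    rw [hform _ (mem_real hr₀0 h01 h02)]
    exact mul_ne_zero hC (Eexp_ne_zero _ _)
  have h'' : f ↑r₀ * 1 = f ↑r₀ * Complex.exp (l * ((2 * Real.pi : ℝ) : ℂ) * I) := by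
    rw [mul_one]
    simpa using h
  have hexp : Complex.exp (l * (2 * Real.pi) * I) = 1 := by
    have := (mul_left_cancel₀ hfr h'').symm
    rw [show l * ((2 * Real.pi : ℝ) : ℂ) * I = l * (2 * Real.pi) * I by push_cast; ring] at this
    exact this
  rw [Complex.exp_eq_one_iff] at hexp
  obtain ⟨n, hn⟩ := hexp
  refine ⟨n, ?_⟩
  have h2πI : (2 * (Real.pi : ℂ) * I) ≠ 0 := by
    simp [Real.pi_ne_zero, Complex.I_ne_zero, Complex.ofReal_ne_zero]
  have : l * (2 * (Real.pi : ℂ) * I) = n * (2 * (Real.pi : ℂ) * I) := by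
    rw [← hn]; ring
  exact mul_right_cancel₀ h2πI this

lemma no_primitive (hr₁ : 0 < r₁) (hr : r₁ < r₂)
    (hf : DifferentiableOn ℂ f (SAnn r₁ r₂)) {a : ℂ}
    (ha : ∀ w ∈ SAnn r₁ r₂, w * deriv f w = a) (h0 : a ≠ 0) : False := by
  set r₀ : ℝ := (r₁ + r₂) / 2 with hr₀
  have h01 : r₁ < r₀ := by simp [hr₀]; linarith
  have h02 : r₀ < r₂ := by simp [hr₀]; linarith
  have hr₀0 : 0 < r₀ := lt_trans hr₁ h01
  set H : ℝ → ℂ := fun s => f (↑r₀ * Complex.exp (↑s * I)) - a * s * I with hH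
  have key : ∀ s : ℝ, HasDerivAt H 0 s := by
    intro s
    set w : ℂ := ↑r₀ * Complex.exp (↑s * I) with hw
    have hmem : w ∈ SAnn r₁ r₂ := mem_circle hr₀0 h01 h02 s
    have hfd : HasDerivAt f (deriv f w) w :=
      (hf.differentiableAt ((isOpen_SAnn r₁ r₂).mem_nhds hmem)).hasDerivAt
    have h3 : HasDerivAt (fun s : ℝ => f (↑r₀ * Complex.exp (↑s * I)))
        (deriv f w * (w * I)) s := by
      have h1 : HasDerivAt (fun t : ℝ => (t : ℂ) * I) I s := by
        simpa using ((hasDerivAt_id ((s : ℂ))).mul_const I).comp_ofReal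
      have h2 := (Complex.hasDerivAt_exp ((s : ℂ) * I)).comp s h1
      have hc : HasDerivAt (fun t : ℝ => (r₀ : ℂ) * Complex.exp (↑t * I)) (w * I) s := by
        simpa [Function.comp, hw, mul_assoc] using h2.const_mul (r₀ : ℂ)
      simpa [Function.comp_def, hw] using hfd.comp s hc
    have h4 : HasDerivAt (fun s : ℝ => a * (s : ℂ) * I) (a * I) s := by
      simpa [mul_assoc] using (((hasDerivAt_id ((s : ℂ))).const_mul a).mul_const I).comp_ofReal
    have h6 := h3.sub h4
    have he := ha w hmem
    refine h6.congr_deriv (Eq.symm ?_)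
    linear_combination (-I) * he
  have hconst := is_const_of_deriv_eq_zero (fun s => (key s).differentiableAt)
    (fun s => (key s).deriv) (2 * Real.pi) 0
  have h0' : H 0 = f r₀ := by simp [hH]
  have ht : H (2 * Real.pi) = f r₀ - a * (2 * Real.pi) * I := by
    rw [hH]
    simp only
    rw [show (((2 * Real.pi : ℝ) : ℂ) * I) = 2 * ↑Real.pi * I by push_cast; ring,
      Complex.exp_two_pi_mul_I, mul_one]
    push_cast; ring
  rw [ht, h0'] at hconst
  have : a * (2 * Real.pi) * I = 0 := by linear_combination -hconst
  have h2πI : ((2 * Real.pi : ℂ)) * I ≠ 0 := by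
    simp [Real.pi_ne_zero, Complex.I_ne_zero]
  apply h0
  have := mul_right_cancel₀ Complex.I_ne_zero (by linear_combination this : a * (2*(Real.pi:ℂ)) * I = 0 * I)
  exact (mul_eq_zero.mp this).resolve_right (by simp [Real.pi_ne_zero])

/-- The shifted function `u = w z' - μ' z` attached to a solution `z` is an eigenfunction
of `w d/dw` with eigenvalue `μ`. -/
lemma solution_shift (hr₁ : 0 < r₁) {z : ℂ → ℂ}
    (hz : DifferentiableOn ℂ z (SAnn r₁ r₂))
    (heq : ∀ w ∈ SAnn r₁ r₂, w ^ 2 * deriv (deriv z) w = p * w * deriv z w + q * z w)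
    {μ μ' : ℂ} (hsum : μ + μ' = p + 1) (hprod : μ * μ' = -q) :
    DifferentiableOn ℂ (fun w => w * deriv z w - μ' * z w) (SAnn r₁ r₂) ∧
    ∀ w ∈ SAnn r₁ r₂,
      w * deriv (fun w => w * deriv z w - μ' * z w) w
        = μ * (w * deriv z w - μ' * z w) := by
  have hopen := isOpen_SAnn r₁ r₂
  have hz' : DifferentiableOn ℂ (deriv z) (SAnn r₁ r₂) :=
    ((hz.analyticOnNhd hopen).deriv).differentiableOn
  have hdiff : DifferentiableOn ℂ (fun w => w * deriv z w - μ' * z w) (SAnn r₁ r₂) :=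
    ((differentiableOn_id).mul hz').sub (hz.const_mul μ')
  refine ⟨hdiff, fun w hw => ?_⟩
  have h1 : HasDerivAt (fun w => w * deriv z w - μ' * z w)
      (1 * deriv z w + w * deriv (deriv z) w - μ' * deriv z w) w := by
    exact ((hasDerivAt_id w).mul
        ((hz'.differentiableAt (hopen.mem_nhds hw)).hasDerivAt)).sub
      (((hz.differentiableAt (hopen.mem_nhds hw)).hasDerivAt).const_mul μ')
  rw [h1.deriv]
  have he := heq w hw
  linear_combination he - w * deriv z w * hsum + z w * hprod

/-- If both solutions are genuine eigenfunctions of `w d/dw` with the same eigenvalue,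
they are proportional, contradicting independence. -/
lemma both_eigen_contra (hr₁ : 0 < r₁) (hr : r₁ < r₂) {z₁ z₂ : ℂ → ℂ} {l : ℂ}
    (hz₁ : DifferentiableOn ℂ z₁ (SAnn r₁ r₂))
    (hz₂ : DifferentiableOn ℂ z₂ (SAnn r₁ r₂))
    (h₁ : ∀ w ∈ SAnn r₁ r₂, w * deriv z₁ w = l * z₁ w)
    (h₂ : ∀ w ∈ SAnn r₁ r₂, w * deriv z₂ w = l * z₂ w)
    (hindep : ∀ c₁ c₂ : ℂ, (∀ w ∈ SAnn r₁ r₂, c₁ * z₁ w + c₂ * z₂ w = 0) → c₁ = 0 ∧ c₂ = 0) :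
    False := by
  obtain ⟨K₁, hK₁⟩ := eigen_formula hr₁ hr hz₁ h₁
  obtain ⟨K₂, hK₂⟩ := eigen_formula hr₁ hr hz₂ h₂
  obtain ⟨e2, e1⟩ := hindep K₂ (-K₁) (fun w hw => by rw [hK₁ w hw, hK₂ w hw]; ring)
  have hz1zero : ∀ w ∈ SAnn r₁ r₂, z₁ w = 0 := fun w hw => by
    rw [hK₁ w hw, (neg_eq_zero.mp e1), zero_mul]
  have := (hindep 1 0 (fun w hw => by rw [hz1zero w hw]; ring)).1
  exact one_ne_zero this

/-- Double root case: one genuinely non-eigen solution leads to a contradiction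
(`log`-type second solution is not single-valued). -/
lemma double_root_contra (hr₁ : 0 < r₁) (hr : r₁ < r₂) {a b : ℂ → ℂ} {l Ca Cb : ℂ}
    (ha : DifferentiableOn ℂ a (SAnn r₁ r₂))
    (hb : DifferentiableOn ℂ b (SAnn r₁ r₂))
    (hua : ∀ w ∈ SAnn r₁ r₂, w * deriv a w - l * a w = Ca * Eexp l w)
    (hub : ∀ w ∈ SAnn r₁ r₂, w * deriv b w - l * b w = Cb * Eexp l w)
    (hCa : Ca ≠ 0)
    (hindep : ∀ c₁ c₂ : ℂ, (∀ w ∈ SAnn r₁ r₂, c₁ * a w + c₂ * b w = 0) → c₁ = 0 ∧ c₂ = 0) :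
    False := by
  have hopen := isOpen_SAnn r₁ r₂
  set y : ℂ → ℂ := fun w => Ca * b w - Cb * a w with hy
  have hydiff : DifferentiableOn ℂ y (SAnn r₁ r₂) := (hb.const_mul Ca).sub (ha.const_mul Cb)
  have hyderiv : ∀ w ∈ SAnn r₁ r₂, deriv y w = Ca * deriv b w - Cb * deriv a w := by
    intro w hw
    have : HasDerivAt y (Ca * deriv b w - Cb * deriv a w) w :=
      (((hb.differentiableAt (hopen.mem_nhds hw)).hasDerivAt).const_mul Ca).sub
        (((ha.differentiableAt (hopen.mem_nhds hw)).hasDerivAt).const_mul Cb)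
    exact this.deriv
  have hyeig : ∀ w ∈ SAnn r₁ r₂, w * deriv y w = l * y w := by
    intro w hw
    rw [hyderiv w hw]
    have hA := hua w hw
    have hB := hub w hw
    simp only [hy]
    linear_combination Ca * hB - Cb * hA
  obtain ⟨K, hK⟩ := eigen_formula hr₁ hr hydiff hyeig
  by_cases hK0 : K = 0
  · -- y ≡ 0, so Ca b = Cb a, contradicting independence since Ca ≠ 0
    have := hindep (-Cb) Ca (fun w hw => by
      have := hK w hw
      rw [hK0, zero_mul] at this
      simp only [hy] at this
      linear_combination this)
    exact hCa this.2
  · -- y nonvanishing; φ = a / y has w φ' = Ca / K ≠ 0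
    have hyne : ∀ w ∈ SAnn r₁ r₂, y w ≠ 0 := fun w hw => by
      rw [hK w hw]; exact mul_ne_zero hK0 (Eexp_ne_zero _ _)
    set φ : ℂ → ℂ := fun w => a w / y w with hφ
    have hφdiff : DifferentiableOn ℂ φ (SAnn r₁ r₂) := ha.div hydiff hyne
    have hφeig : ∀ w ∈ SAnn r₁ r₂, w * deriv φ w = Ca / K := by
      intro w hw
      have hdφ : HasDerivAt φ
          ((deriv a w * y w - a w * deriv y w) / (y w) ^ 2) w :=
        ((ha.differentiableAt (hopen.mem_nhds hw)).hasDerivAt).div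
          ((hydiff.differentiableAt (hopen.mem_nhds hw)).hasDerivAt) (hyne w hw)
      rw [hdφ.deriv]
      have hA := hua w hw
      have hY := hyeig w hw
      have hKw := hK w hw
      have hEne := Eexp_ne_zero l w
      have hyne' := hyne w hw
      rw [← mul_div_assoc, div_eq_div_iff (pow_ne_zero 2 hyne') hK0]
      rw [hKw]
      rw [hKw] at hY
      -- use w a' = l a + Ca E  and  w y' = l K E
      linear_combination (K ^ 2 * Eexp l w) * hA + (-(K * a w)) * hY
    exact no_primitive hr₁ hr hφdiff hφeig (div_ne_zero hCa hK0)

end EulerAux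

open EulerAux

/-- **Two independent single-valued solutions of an Euler equation force distinct integer
characteristic roots.** If the homogeneous Euler equation `w²z'' = pwz' + qz` admits two
solutions, holomorphic on the annulus `{r₁ < |w| < r₂}`, that are linearly independent over `ℂ`
(so that the solution space on the annulus has dimension at least `2`), then the characteristic
polynomial `λ² − (p+1)λ − q` has two distinct roots, both of which are integers. -/
theorem euler_two_solutions_distinct_integer_roots
    (p q : ℂ) (r₁ r₂ : ℝ) (hr₁ : 0 < r₁) (hr₁₂ : r₁ < r₂)
    (z₁ z₂ : ℂ → ℂ)
    (hz₁ : DifferentiableOn ℂ z₁ {w : ℂ | r₁ < ‖w‖ ∧ ‖w‖ < r₂})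
    (hz₂ : DifferentiableOn ℂ z₂ {w : ℂ | r₁ < ‖w‖ ∧ ‖w‖ < r₂})
    (heq₁ : ∀ w : ℂ, r₁ < ‖w‖ → ‖w‖ < r₂ →
      w ^ 2 * deriv (deriv z₁) w = p * w * deriv z₁ w + q * z₁ w)
    (heq₂ : ∀ w : ℂ, r₁ < ‖w‖ → ‖w‖ < r₂ →
      w ^ 2 * deriv (deriv z₂) w = p * w * deriv z₂ w + q * z₂ w)
    (hindep : ∀ c₁ c₂ : ℂ,
      (∀ w : ℂ, r₁ < ‖w‖ → ‖w‖ < r₂ → c₁ * z₁ w + c₂ * z₂ w = 0) →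
      c₁ = 0 ∧ c₂ = 0) :
    ∃ k₁ k₂ : ℤ, k₁ ≠ k₂ ∧
      (k₁ : ℂ) + (k₂ : ℂ) = p + 1 ∧ (k₁ : ℂ) * (k₂ : ℂ) = -q := by
  have hz₁' : DifferentiableOn ℂ z₁ (SAnn r₁ r₂) := hz₁
  have hz₂' : DifferentiableOn ℂ z₂ (SAnn r₁ r₂) := hz₂
  have heq₁' : ∀ w ∈ SAnn r₁ r₂,
      w ^ 2 * deriv (deriv z₁) w = p * w * deriv z₁ w + q * z₁ w :=
    fun w hw => heq₁ w hw.1 hw.2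
  have heq₂' : ∀ w ∈ SAnn r₁ r₂,
      w ^ 2 * deriv (deriv z₂) w = p * w * deriv z₂ w + q * z₂ w :=
    fun w hw => heq₂ w hw.1 hw.2
  have hind : ∀ c₁ c₂ : ℂ,
      (∀ w ∈ SAnn r₁ r₂, c₁ * z₁ w + c₂ * z₂ w = 0) → c₁ = 0 ∧ c₂ = 0 :=
    fun c₁ c₂ h => hindep c₁ c₂ (fun w h1 h2 => h w ⟨h1, h2⟩)
  have hindswap : ∀ c₁ c₂ : ℂ,
      (∀ w ∈ SAnn r₁ r₂, c₁ * z₂ w + c₂ * z₁ w = 0) → c₁ = 0 ∧ c₂ = 0 :=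
    fun c₁ c₂ h => (hind c₂ c₁ (fun w hw => by linear_combination h w hw)).symm
  obtain ⟨l₁, l₂, hsum, hprod⟩ : ∃ l₁ l₂ : ℂ, l₁ + l₂ = p + 1 ∧ l₁ * l₂ = -q := by
    obtain ⟨s, hs⟩ := IsAlgClosed.exists_pow_nat_eq ((p + 1) ^ 2 + 4 * q) (two_pos)
    exact ⟨(p + 1 + s) / 2, (p + 1 - s) / 2, by ring,
      by linear_combination (-(1 : ℂ) / 4) * hs⟩
  have hsum' : l₂ + l₁ = p + 1 := by linear_combination hsum
  have hprod' : l₂ * l₁ = -q := by linear_combination hprod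
  obtain ⟨hu₁d, hu₁e⟩ := solution_shift hr₁ hz₁' heq₁' hsum hprod
  obtain ⟨hu₂d, hu₂e⟩ := solution_shift hr₁ hz₂' heq₂' hsum hprod
  obtain ⟨hv₁d, hv₁e⟩ := solution_shift hr₁ hz₁' heq₁' hsum' hprod'
  obtain ⟨hv₂d, hv₂e⟩ := solution_shift hr₁ hz₂' heq₂' hsum' hprod'
  obtain ⟨C₁, hC₁⟩ := eigen_formula hr₁ hr₁₂ hu₁d hu₁e
  obtain ⟨C₂, hC₂⟩ := eigen_formula hr₁ hr₁₂ hu₂d hu₂e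
  obtain ⟨D₁, hD₁⟩ := eigen_formula hr₁ hr₁₂ hv₁d hv₁e
  obtain ⟨D₂, hD₂⟩ := eigen_formula hr₁ hr₁₂ hv₂d hv₂e
  have hCnz : ¬(C₁ = 0 ∧ C₂ = 0) := by
    rintro ⟨h1, h2⟩
    refine both_eigen_contra hr₁ hr₁₂ hz₁' hz₂' (l := l₂) ?_ ?_ hind
    · intro w hw
      have := hC₁ w hw; rw [h1, zero_mul] at this
      linear_combination this
    · intro w hw
      have := hC₂ w hw; rw [h2, zero_mul] at this
      linear_combination this
  have hDnz : ¬(D₁ = 0 ∧ D₂ = 0) := by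
    rintro ⟨h1, h2⟩
    refine both_eigen_contra hr₁ hr₁₂ hz₁' hz₂' (l := l₁) ?_ ?_ hind
    · intro w hw
      have := hD₁ w hw; rw [h1, zero_mul] at this
      linear_combination this
    · intro w hw
      have := hD₂ w hw; rw [h2, zero_mul] at this
      linear_combination this
  obtain ⟨k₁, hk₁⟩ : ∃ k : ℤ, l₁ = k := by
    by_cases h1 : C₁ = 0
    · have h2 : C₂ ≠ 0 := fun h2 => hCnz ⟨h1, h2⟩
      exact eigen_int hr₁ hr₁₂ hu₂d hu₂e hC₂ h2
    · exact eigen_int hr₁ hr₁₂ hu₁d hu₁e hC₁ h1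
  obtain ⟨k₂, hk₂⟩ : ∃ k : ℤ, l₂ = k := by
    by_cases h1 : D₁ = 0
    · have h2 : D₂ ≠ 0 := fun h2 => hDnz ⟨h1, h2⟩
      exact eigen_int hr₁ hr₁₂ hv₂d hv₂e hD₂ h2
    · exact eigen_int hr₁ hr₁₂ hv₁d hv₁e hD₁ h1
  have hne : l₁ ≠ l₂ := by
    intro hll
    by_cases h1 : C₁ = 0
    · have h2 : C₂ ≠ 0 := fun h2 => hCnz ⟨h1, h2⟩
      refine double_root_contra hr₁ hr₁₂ hz₂' hz₁' (l := l₂) (Ca := C₂) (Cb := C₁)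
        ?_ ?_ h2 hindswap
      · intro w hw
        have := hC₂ w hw; rw [hll] at this
        linear_combination this
      · intro w hw
        have := hC₁ w hw; rw [hll] at this
        linear_combination this
    · refine double_root_contra hr₁ hr₁₂ hz₁' hz₂' (l := l₂) (Ca := C₁) (Cb := C₂)
        ?_ ?_ h1 hind
      · intro w hw
        have := hC₁ w hw; rw [hll] at this
        linear_combination this
      · intro w hw
        have := hC₂ w hw; rw [hll] at this
        linear_combination this
  refine ⟨k₁, k₂, ?_, ?_, ?_⟩
  · intro h; exact hne (by rw [hk₁, hk₂, h])
  · rw [← hk₁, ← hk₂]; exact hsum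
  · rw [← hk₁, ← hk₂]; exact hprod
end

section
/- Let ε > 0, let g be holomorphic on the disc {w ∈ ℂ : |w| < ε}, and let u be holomorphic and not identically zero on the punctured disc {w ∈ ℂ : 0 < |w| < ε}, satisfying w·u'(w) = g(w)·u(w) for all 0 < |w| < ε. Then n := g(0) is an integer, and there exists a holomorphic function v on {|w| < ε} with v(0) ≠ 0 such that u(w) = wⁿ·v(w) for all 0 < |w| < ε; in particular u extends meromorphically across w = 0. -/
open Complex Set Metric Filter Topology

private lemma aux_preconn_of_starConvex {c : ℂ} {S : Set ℂ}
    (h : StarConvex ℝ c S) : IsPreconnected S := by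
  rcases S.eq_empty_or_nonempty with hS | hS
  · rw [hS]; exact isPreconnected_empty
  have hU : S = ⋃₀ ((fun z => segment ℝ c z) '' S) := by
    apply Subset.antisymm
    · intro z hz
      exact ⟨segment ℝ c z, ⟨z, hz, rfl⟩, right_mem_segment ℝ c z⟩
    · rintro z ⟨t, ⟨y, hy, rfl⟩, hzt⟩
      exact h.segment_subset hy hzt
  rw [hU]
  exact isPreconnected_sUnion c _ (by rintro t ⟨y, hy, rfl⟩; exact left_mem_segment ℝ c y)
    (by rintro t ⟨y, hy, rfl⟩; exact (convex_segment c y).isPreconnected)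

private lemma aux_star_slit {t : ℝ} (ht : 0 < t) :
    StarConvex ℝ (t : ℂ) Complex.slitPlane := by
  intro y hy a b ha hb hab
  rw [Complex.mem_slitPlane_iff] at hy ⊢
  have hre : (a • (t : ℂ) + b • y).re = a * t + b * y.re := by
    simp [Complex.add_re, Complex.smul_re]
  have him : (a • (t : ℂ) + b • y).im = b * y.im := by
    simp [Complex.add_im, Complex.smul_im]
  rw [hre, him]
  rcases eq_or_lt_of_le hb with hb0 | hb0
  · left
    have ha1 : a = 1 := by linarith
    rw [ha1, ← hb0]
    simpa using ht
  · rcases hy with hy | hy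
    · left
      have : 0 < b * y.re := mul_pos hb0 hy
      nlinarith [mul_nonneg ha ht.le]
    · right
      exact mul_ne_zero (ne_of_gt hb0) hy

private lemma aux_star_neg {c : ℂ} {S : Set ℂ} (h : StarConvex ℝ c S) :
    StarConvex ℝ (-c) ((fun z => -z) ⁻¹' S) := by
  intro y hy a b ha hb hab
  have : -(a • (-c) + b • y) = a • c + b • (-y) := by
    rw [neg_add, ← smul_neg, ← smul_neg, neg_neg]
  exact Set.mem_preimage.2 (by rw [this]; exact h hy ha hb hab)

private lemma aux_half_mem_ball {r : ℝ} (hr : 0 < r) :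
    ((r / 2 : ℝ) : ℂ) ∈ ball (0 : ℂ) r := by
  rw [mem_ball_zero_iff, Complex.norm_real, Real.norm_eq_abs, abs_of_pos (by linarith)]
  linarith

private lemma aux_preconn_slit1 {r : ℝ} (hr : 0 < r) :
    IsPreconnected (ball (0 : ℂ) r ∩ Complex.slitPlane) := by
  refine aux_preconn_of_starConvex (c := ((r / 2 : ℝ) : ℂ))
    (((convex_ball _ _).starConvex (aux_half_mem_ball hr)).inter (aux_star_slit (by linarith)))

private lemma aux_preconn_slit2 {r : ℝ} (hr : 0 < r) :
    IsPreconnected (ball (0 : ℂ) r ∩ ((fun z => -z) ⁻¹' Complex.slitPlane)) := by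
  refine aux_preconn_of_starConvex (c := -((r / 2 : ℝ) : ℂ))
    (((convex_ball _ _).starConvex ?_).inter (aux_star_neg (aux_star_slit (by linarith))))
  simpa using aux_half_mem_ball hr

private lemma aux_cover {w : ℂ} (hw : w ≠ 0) :
    w ∈ Complex.slitPlane ∨ -w ∈ Complex.slitPlane := by
  rw [Complex.mem_slitPlane_iff, Complex.mem_slitPlane_iff]
  simp only [Complex.neg_re, Complex.neg_im, neg_ne_zero]
  by_cases him : w.im = 0
  · have hre : w.re ≠ 0 := by
      intro h
      exact hw (Complex.ext h him)
    rcases hre.lt_or_gt with h | h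
    · right; left; linarith
    · left; left; exact h
  · left; right; exact him

private lemma aux_I_mem_slit1 {r : ℝ} (hr : 0 < r) :
    ((r / 2 : ℝ) : ℂ) * Complex.I ∈ ball (0 : ℂ) r ∩ Complex.slitPlane := by
  constructor
  · rw [mem_ball_zero_iff]
    simp only [norm_mul, Complex.norm_real, Complex.norm_I, mul_one, Real.norm_eq_abs,
      abs_of_pos (by linarith : (0:ℝ) < r / 2)]
    linarith
  · rw [Complex.mem_slitPlane_iff]
    right
    simp [Complex.mul_im]
    linarith

private lemma aux_I_mem_slit2 {r : ℝ} (hr : 0 < r) :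
    ((r / 2 : ℝ) : ℂ) * Complex.I ∈ ball (0 : ℂ) r ∩ ((fun z => -z) ⁻¹' Complex.slitPlane) := by
  refine ⟨(aux_I_mem_slit1 hr).1, ?_⟩
  rw [Set.mem_preimage, Complex.mem_slitPlane_iff]
  right
  simp [Complex.mul_im]
  linarith

private lemma aux_negI_mem_slit1 {r : ℝ} (hr : 0 < r) :
    -(((r / 2 : ℝ) : ℂ) * Complex.I) ∈ ball (0 : ℂ) r ∩ Complex.slitPlane := by
  constructor
  · rw [mem_ball_zero_iff, norm_neg]
    exact mem_ball_zero_iff.1 (aux_I_mem_slit1 hr).1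
  · rw [Complex.mem_slitPlane_iff]
    right
    simp [Complex.mul_im]
    linarith

private lemma aux_negI_mem_slit2 {r : ℝ} (hr : 0 < r) :
    -(((r / 2 : ℝ) : ℂ) * Complex.I) ∈ ball (0 : ℂ) r ∩ ((fun z => -z) ⁻¹' Complex.slitPlane) := by
  refine ⟨(aux_negI_mem_slit1 hr).1, ?_⟩
  rw [Set.mem_preimage, Complex.mem_slitPlane_iff]
  right
  simp [Complex.mul_im]
  linarith

private lemma aux_punctured_eq {r : ℝ} :
    {w : ℂ | 0 < ‖w‖ ∧ ‖w‖ < r} =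
      (ball (0 : ℂ) r ∩ Complex.slitPlane) ∪
        (ball (0 : ℂ) r ∩ ((fun z => -z) ⁻¹' Complex.slitPlane)) := by
  ext w
  simp only [Set.mem_setOf_eq, Set.mem_union, Set.mem_inter_iff, Set.mem_preimage,
    mem_ball_zero_iff]
  constructor
  · rintro ⟨h0, hr⟩
    have hw : w ≠ 0 := by
      intro h
      rw [h] at h0
      simp at h0
    rcases aux_cover hw with h | h
    · exact Or.inl ⟨hr, h⟩
    · exact Or.inr ⟨hr, h⟩
  · rintro (⟨hr, h⟩ | ⟨hr, h⟩)
    · exact ⟨norm_pos_iff.mpr (Complex.slitPlane_ne_zero h), hr⟩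
    · refine ⟨norm_pos_iff.mpr ?_, hr⟩
      intro hw
      rw [hw] at h
      exact Complex.slitPlane_ne_zero h (by simp)

private lemma aux_preconn_punct {r : ℝ} (hr : 0 < r) :
    IsPreconnected {w : ℂ | 0 < ‖w‖ ∧ ‖w‖ < r} := by
  rw [aux_punctured_eq]
  exact IsPreconnected.union (((r / 2 : ℝ) : ℂ) * Complex.I) (aux_I_mem_slit1 hr)
    (aux_I_mem_slit2 hr) (aux_preconn_slit1 hr) (aux_preconn_slit2 hr)

private lemma aux_const {S : Set ℂ} (hS : IsOpen S) (hSc : IsPreconnected S)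
    {f : ℂ → ℂ} (hf : ∀ w ∈ S, HasDerivAt f 0 w) {a b : ℂ} (ha : a ∈ S) (hb : b ∈ S) :
    f a = f b := by
  have hloc : ∀ w ∈ S, ∀ᶠ z in 𝓝 w, f z = f w := by
    intro w hw
    rcases Metric.isOpen_iff.1 hS w hw with ⟨δ, hδ, hball⟩
    filter_upwards [Metric.ball_mem_nhds w hδ] with z hz
    refine (convex_ball w δ).is_const_of_fderivWithin_eq_zero
      (fun y hy => ((hf y (hball hy)).differentiableAt).differentiableWithinAt)
      (fun y hy => ?_) hz (mem_ball_self hδ)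
    rw [fderivWithin_of_isOpen isOpen_ball hy]
    have h2 : HasFDerivAt f (0 : ℂ →L[ℂ] ℂ) y := by
      have := hasDerivAt_iff_hasFDerivAt.1 (hf y (hball hy))
      refine this.congr_fderiv ?_
      ext
      simp
    exact h2.fderiv
  by_contra hne
  have hu : IsOpen {z | z ∈ S ∧ f z = f a} := by
    rw [isOpen_iff_mem_nhds]
    rintro z ⟨hzS, hzf⟩
    filter_upwards [hloc z hzS, hS.mem_nhds hzS] with y hy1 hy2
    exact ⟨hy2, hy1.trans hzf⟩
  have hv : IsOpen {z | z ∈ S ∧ f z ≠ f a} := by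
    rw [isOpen_iff_mem_nhds]
    rintro z ⟨hzS, hzf⟩
    filter_upwards [hloc z hzS, hS.mem_nhds hzS] with y hy1 hy2
    exact ⟨hy2, hy1 ▸ hzf⟩
  obtain ⟨z, _, ⟨_, h1⟩, ⟨_, h2⟩⟩ := hSc _ _ hu hv
    (fun z hz => by by_cases h : f z = f a; exacts [Or.inl ⟨hz, h⟩, Or.inr ⟨hz, h⟩])
    ⟨a, ha, ha, rfl⟩ ⟨b, hb, hb, fun h => hne h.symm⟩
  exact h2 h1

private lemma aux_log_pos_im {w : ℂ} (hw : 0 < w.im) :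
    Complex.log w = Complex.log (-w) + Real.pi * Complex.I := by
  apply Complex.ext
  · simp [Complex.add_re, Complex.log_re, Complex.mul_re, Complex.I_re, Complex.I_im,
      Complex.ofReal_re, Complex.ofReal_im]
  · simp only [Complex.add_im, Complex.log_im, Complex.arg_neg_eq_arg_sub_pi_of_im_pos hw,
      Complex.mul_im, Complex.I_re, Complex.I_im, Complex.ofReal_re, Complex.ofReal_im]
    ring

private lemma aux_log_neg_im {w : ℂ} (hw : w.im < 0) :
    Complex.log w = Complex.log (-w) - Real.pi * Complex.I := by
  apply Complex.ext
  · simp [Complex.sub_re, Complex.log_re, Complex.mul_re, Complex.I_re, Complex.I_im,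
      Complex.ofReal_re, Complex.ofReal_im]
  · simp only [Complex.sub_im, Complex.log_im, Complex.arg_neg_eq_arg_add_pi_of_im_neg hw,
      Complex.mul_im, Complex.I_re, Complex.I_im, Complex.ofReal_re, Complex.ofReal_im]
    ring

private lemma aux_primitive {h : ℂ → ℂ} (hh : AnalyticAt ℂ h 0) :
    ∃ δ : ℝ, 0 < δ ∧ ∃ F : ℂ → ℂ, ∀ w ∈ ball (0 : ℂ) δ, HasDerivAt F (h w) w := by
  obtain ⟨p, r, hp⟩ := hh
  obtain ⟨ρ, hρ0, hρr⟩ := ENNReal.lt_iff_exists_nnreal_btwn.1 hp.r_pos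
  have hρ0' : (0 : ℝ) < (ρ : ℝ) := by exact_mod_cast hρ0
  have hsum : Summable fun n => ‖p n‖ * (ρ : ℝ) ^ n :=
    p.summable_norm_mul_pow (hρr.trans_le hp.r_le)
  refine ⟨ρ, hρ0', fun z => ∑' n, p.coeff n / ((n : ℂ) + 1) * z ^ (n + 1), fun w hw => ?_⟩
  have hderiv : ∀ (n : ℕ) (y : ℂ),
      HasDerivAt (fun z => p.coeff n / ((n : ℂ) + 1) * z ^ (n + 1)) (p.coeff n * y ^ n) y := by
    intro n y
    have hne : ((n : ℂ) + 1) ≠ 0 := Nat.cast_add_one_ne_zero n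
    have := (hasDerivAt_pow (n + 1) y).const_mul (p.coeff n / ((n : ℂ) + 1))
    refine this.congr_deriv ?_
    push_cast
    field_simp
  have hbound : ∀ (n : ℕ) (y : ℂ), y ∈ ball (0 : ℂ) ρ →
      ‖p.coeff n * y ^ n‖ ≤ ‖p n‖ * (ρ : ℝ) ^ n := by
    intro n y hy
    rw [norm_mul, norm_pow, p.norm_apply_eq_norm_coef]
    exact mul_le_mul_of_nonneg_left
      (pow_le_pow_left₀ (norm_nonneg y) (le_of_lt (mem_ball_zero_iff.1 hy)) n)
      (norm_nonneg _)
  have hsum0 : Summable fun n => p.coeff n / ((n : ℂ) + 1) * (0 : ℂ) ^ (n + 1) := by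
    refine summable_zero.congr fun n => ?_
    simp [zero_pow (Nat.succ_ne_zero n)]
  have hkey := hasDerivAt_tsum_of_isPreconnected hsum isOpen_ball
    (convex_ball (0 : ℂ) (ρ : ℝ)).isPreconnected (fun n y _ => hderiv n y) hbound
    (mem_ball_self hρ0') hsum0 hw
  refine hkey.congr_deriv ?_
  have hwnn : (‖w‖₊ : ENNReal) < (ρ : ENNReal) := by
    rw [ENNReal.coe_lt_coe]
    exact_mod_cast mem_ball_zero_iff.1 hw
  have hwr : w ∈ Metric.eball (0 : ℂ) r := by
    rw [Metric.mem_eball, edist_zero_right]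
    exact hwnn.trans hρr
  have hs := hp.hasSum hwr
  rw [zero_add] at hs
  have heq : (fun n => p n fun _ => w) = fun n => p.coeff n * w ^ n := by
    funext n
    rw [p.apply_eq_pow_smul_coeff, smul_eq_mul]
    ring
  rw [heq] at hs
  exact hs.tsum_eq

/-- **A single-valued solution of `wu' = gu` extends meromorphically and forces an integer
residue.** If `g` is holomorphic on the disc `{|w| < ε}` and `u` is holomorphic and not
identically zero on the punctured disc `{0 < |w| < ε}` with `wu'(w) = g(w)u(w)` there, then
`n := g(0)` is an integer and `u(w) = wⁿv(w)` for some holomorphic `v` on `{|w| < ε}` with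
`v(0) ≠ 0`; in particular `u` extends meromorphically across `w = 0`. -/
theorem first_order_singular_ode_integer_residue
    (ε : ℝ) (hε : 0 < ε) (g u : ℂ → ℂ)
    (hg : DifferentiableOn ℂ g {w : ℂ | ‖w‖ < ε})
    (hu : DifferentiableOn ℂ u {w : ℂ | 0 < ‖w‖ ∧ ‖w‖ < ε})
    (hune : ∃ w : ℂ, 0 < ‖w‖ ∧ ‖w‖ < ε ∧ u w ≠ 0)
    (hode : ∀ w : ℂ, 0 < ‖w‖ → ‖w‖ < ε →
      w * deriv u w = g w * u w) :
    ∃ n : ℤ, g 0 = (n : ℂ) ∧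
      ∃ v : ℂ → ℂ, DifferentiableOn ℂ v {w : ℂ | ‖w‖ < ε} ∧ v 0 ≠ 0 ∧
        ∀ w : ℂ, 0 < ‖w‖ → ‖w‖ < ε → u w = w ^ n * v w := by
  obtain ⟨w₁, hw₁0, hw₁ε, hw₁u⟩ := hune
  have hDopen : IsOpen {w : ℂ | ‖w‖ < ε} :=
    isOpen_lt continuous_norm continuous_const
  have hPopen : IsOpen {w : ℂ | 0 < ‖w‖ ∧ ‖w‖ < ε} := by
    have : {w : ℂ | 0 < ‖w‖ ∧ ‖w‖ < ε} =
        {w : ℂ | 0 < ‖w‖} ∩ {w : ℂ | ‖w‖ < ε} := rfl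
    rw [this]
    exact (isOpen_lt continuous_const continuous_norm).inter hDopen
  have h0D : (0 : ℂ) ∈ {w : ℂ | ‖w‖ < ε} := by simpa using hε
  have hmem : {w : ℂ | ‖w‖ < ε} ∈ 𝓝 (0 : ℂ) := hDopen.mem_nhds h0D
  have hdsl : DifferentiableOn ℂ (dslope g 0) {w : ℂ | ‖w‖ < ε} :=
    (Complex.differentiableOn_dslope hmem).mpr hg
  have hanal : AnalyticAt ℂ (dslope g 0) 0 := hdsl.analyticAt hmem
  obtain ⟨δ₀, hδ₀, F, hF⟩ := aux_primitive hanal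
  set δ : ℝ := min δ₀ ε with hδdef
  have hδ : 0 < δ := lt_min hδ₀ hε
  have hδε : δ ≤ ε := min_le_right _ _
  have hδδ₀ : δ ≤ δ₀ := min_le_left _ _
  set ψ : ℂ → ℂ := fun w => u w * Complex.exp (-F w) with hψdef
  -- the key differential relation for ψ
  have hkey : ∀ w : ℂ, w ∈ ball (0 : ℂ) δ → w ≠ 0 →
      ∃ d : ℂ, HasDerivAt ψ d w ∧ w * d = g 0 * ψ w := by
    intro w hwB hw0
    have hwδ : ‖w‖ < δ := by
      rwa [mem_ball_zero_iff] at hwB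
    have hwε : ‖w‖ < ε := lt_of_lt_of_le hwδ hδε
    have habs : 0 < ‖w‖ := norm_pos_iff.mpr hw0
    have hwP : w ∈ {w : ℂ | 0 < ‖w‖ ∧ ‖w‖ < ε} := ⟨habs, hwε⟩
    have hu' : HasDerivAt u (deriv u w) w :=
      (hu.differentiableAt (hPopen.mem_nhds hwP)).hasDerivAt
    have hFw : HasDerivAt F (dslope g 0 w) w := by
      refine hF w ?_
      rw [mem_ball_zero_iff]
      exact lt_of_lt_of_le hwδ hδδ₀
    have hE : HasDerivAt (fun z => Complex.exp (-F z))
        (Complex.exp (-F w) * -dslope g 0 w) w := hFw.neg.cexp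
    refine ⟨deriv u w * Complex.exp (-F w) +
      u w * (Complex.exp (-F w) * -dslope g 0 w), hu'.mul hE, ?_⟩
    have hds : w * dslope g 0 w = g w - g 0 := by
      rw [dslope_of_ne g hw0, slope_def_field, sub_zero]
      field_simp
    have hodew := hode w habs hwε
    simp only [hψdef]
    linear_combination Complex.exp (-F w) * hodew - u w * Complex.exp (-F w) * hds
  -- slit domains
  set S₁ : Set ℂ := ball (0 : ℂ) δ ∩ Complex.slitPlane with hS₁def
  set S₂ : Set ℂ := ball (0 : ℂ) δ ∩ ((fun z : ℂ => -z) ⁻¹' Complex.slitPlane) with hS₂def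
  have hS₁open : IsOpen S₁ := isOpen_ball.inter Complex.isOpen_slitPlane
  have hS₂open : IsOpen S₂ :=
    isOpen_ball.inter (Complex.isOpen_slitPlane.preimage continuous_neg)
  have hρ₁' : ∀ w ∈ S₁,
      HasDerivAt (fun z => ψ z * Complex.exp (-(g 0 * Complex.log z))) 0 w := by
    intro w hw
    have hw0 : w ≠ 0 := Complex.slitPlane_ne_zero hw.2
    obtain ⟨d, hd, hwd⟩ := hkey w hw.1 hw0
    have hexp : HasDerivAt (fun z => Complex.exp (-(g 0 * Complex.log z)))
        (Complex.exp (-(g 0 * Complex.log w)) * -(g 0 * w⁻¹)) w :=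
      (((Complex.hasDerivAt_log hw.2).const_mul (g 0)).neg).cexp
    have h := hd.mul hexp
    have hd' : d = g 0 * ψ w * w⁻¹ := by
      field_simp
      linear_combination hwd
    refine h.congr_deriv ?_
    rw [hd']
    ring
  have hρ₂' : ∀ w ∈ S₂,
      HasDerivAt (fun z => ψ z * Complex.exp (-(g 0 * Complex.log (-z)))) 0 w := by
    intro w hw
    have hnw : -w ∈ Complex.slitPlane := hw.2
    have hw0 : w ≠ 0 := by
      intro h
      rw [h] at hnw
      exact Complex.slitPlane_ne_zero hnw (by simp)
    obtain ⟨d, hd, hwd⟩ := hkey w hw.1 hw0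
    have hlog : HasDerivAt (fun z : ℂ => Complex.log (-z)) ((-1) / (-w)) w :=
      (hasDerivAt_neg w).clog hnw
    have h1 : ((-1 : ℂ)) / (-w) = w⁻¹ := by
      field_simp
    rw [h1] at hlog
    have hexp : HasDerivAt (fun z => Complex.exp (-(g 0 * Complex.log (-z))))
        (Complex.exp (-(g 0 * Complex.log (-w))) * -(g 0 * w⁻¹)) w :=
      ((hlog.const_mul (g 0)).neg).cexp
    have h := hd.mul hexp
    have hd' : d = g 0 * ψ w * w⁻¹ := by
      field_simp
      linear_combination hwd
    refine h.congr_deriv ?_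
    rw [hd']
    ring
  -- base points
  set b₁ : ℂ := ((δ / 2 : ℝ) : ℂ) * Complex.I with hb₁def
  have hb₁S₁ : b₁ ∈ S₁ := aux_I_mem_slit1 hδ
  have hb₁S₂ : b₁ ∈ S₂ := aux_I_mem_slit2 hδ
  have hb₂S₁ : -b₁ ∈ S₁ := aux_negI_mem_slit1 hδ
  have hb₂S₂ : -b₁ ∈ S₂ := aux_negI_mem_slit2 hδ
  have hb₁im : 0 < b₁.im := by
    rw [hb₁def]
    simp [Complex.mul_im]
    linarith
  have hconn₁ : IsPreconnected S₁ := aux_preconn_slit1 hδ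
  have hconn₂ : IsPreconnected S₂ := aux_preconn_slit2 hδ
  have hc₁ : ∀ w ∈ S₁, ψ w * Complex.exp (-(g 0 * Complex.log w)) =
      ψ b₁ * Complex.exp (-(g 0 * Complex.log b₁)) :=
    fun w hw => aux_const hS₁open hconn₁ hρ₁' hw hb₁S₁
  have hc₂ : ∀ w ∈ S₂, ψ w * Complex.exp (-(g 0 * Complex.log (-w))) =
      ψ b₁ * Complex.exp (-(g 0 * Complex.log (-b₁))) :=
    fun w hw => aux_const hS₂open hconn₂ hρ₂' hw hb₁S₂
  set A : ℂ := ψ b₁ * Complex.exp (-(g 0 * Complex.log b₁)) with hAdef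
  set A₂ : ℂ := ψ b₁ * Complex.exp (-(g 0 * Complex.log (-b₁))) with hA₂def
  have hl' : Complex.log (-b₁) = Complex.log b₁ - ↑Real.pi * Complex.I := by
    linear_combination -(aux_log_pos_im hb₁im)
  have hsplit : -(g 0 * (Complex.log b₁ - ↑Real.pi * Complex.I)) =
      -(g 0 * Complex.log b₁) + g 0 * (↑Real.pi * Complex.I) := by ring
  have hA₂eq : A₂ = A * Complex.exp (g 0 * (↑Real.pi * Complex.I)) := by
    rw [hA₂def, hAdef, hl', hsplit, Complex.exp_add]
    ring
  have hAA : A = A₂ * Complex.exp (g 0 * (↑Real.pi * Complex.I)) := by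
    have hi := hc₁ (-b₁) hb₂S₁
    have hii := hc₂ (-b₁) hb₂S₂
    rw [neg_neg] at hii
    rw [hl', hsplit, Complex.exp_add, ← mul_assoc] at hi
    rw [hii] at hi
    exact hi.symm
  rcases eq_or_ne A 0 with hA | hA
  · -- contradiction: u would vanish identically
    exfalso
    have huz : ∀ w : ℂ, w ∈ ball (0 : ℂ) δ → w ≠ 0 → u w = 0 := by
      intro w hwB hw0
      have hψ0 : ψ w = 0 := by
        rcases aux_cover hw0 with hsl | hsl
        · have h1 := hc₁ w ⟨hwB, hsl⟩
          rw [hA] at h1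
          exact (mul_eq_zero.1 h1).resolve_right (Complex.exp_ne_zero _)
        · have h1 := hc₂ w ⟨hwB, hsl⟩
          rw [hA₂eq, hA, zero_mul] at h1
          exact (mul_eq_zero.1 h1).resolve_right (Complex.exp_ne_zero _)
      simp only [hψdef] at hψ0
      exact (mul_eq_zero.1 hψ0).resolve_right (Complex.exp_ne_zero _)
    have hb₁ne : b₁ ≠ 0 := by
      intro h
      rw [h] at hb₁im
      simp at hb₁im
    have hb₁P : b₁ ∈ {w : ℂ | 0 < ‖w‖ ∧ ‖w‖ < ε} := by
      refine ⟨norm_pos_iff.mpr hb₁ne, ?_⟩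
      have h2 := mem_ball_zero_iff.1 hb₁S₁.1
      linarith
    have hev0 : u =ᶠ[𝓝 b₁] 0 := by
      filter_upwards [hS₁open.mem_nhds hb₁S₁] with z hzS
      exact huz z hzS.1 (Complex.slitPlane_ne_zero hzS.2)
    have hanu : AnalyticOnNhd ℂ u {w : ℂ | 0 < ‖w‖ ∧ ‖w‖ < ε} :=
      hu.analyticOnNhd hPopen
    have heq0 := hanu.eqOn_zero_of_preconnected_of_eventuallyEq_zero
      (aux_preconn_punct hε) hb₁P hev0
    exact hw₁u (heq0 ⟨hw₁0, hw₁ε⟩)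
  · -- main case
    have hEE : Complex.exp (g 0 * (↑Real.pi * Complex.I)) *
        Complex.exp (g 0 * (↑Real.pi * Complex.I)) = 1 := by
      have h := hAA
      rw [hA₂eq] at h
      have h' : A * (Complex.exp (g 0 * (↑Real.pi * Complex.I)) *
          Complex.exp (g 0 * (↑Real.pi * Complex.I))) = A * 1 := by
        linear_combination -h
      exact mul_left_cancel₀ hA h'
    rw [← Complex.exp_add, Complex.exp_eq_one_iff] at hEE
    obtain ⟨k, hk⟩ := hEE
    have hnk : g 0 = (k : ℂ) := by
      have h2 : (g 0 - (k : ℂ)) * (2 * (Real.pi : ℂ) * Complex.I) = 0 := by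
        linear_combination hk
      rcases mul_eq_zero.1 h2 with h | h
      · exact sub_eq_zero.1 h
      · exfalso
        have h3 : (2 * (Real.pi : ℂ) * Complex.I) ≠ 0 := by
          simp [Real.pi_ne_zero, Complex.I_ne_zero, Complex.ofReal_ne_zero]
        exact h3 h
    have hEπ : Complex.exp (g 0 * (↑Real.pi * Complex.I)) = (-1 : ℂ) ^ k := by
      rw [hnk, Complex.exp_int_mul, Complex.exp_pi_mul_I]
    -- representation of u on the punctured small ball
    have hrep : ∀ w : ℂ, w ∈ ball (0 : ℂ) δ → w ≠ 0 →
        u w = w ^ k * (A * Complex.exp (F w)) := by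
      intro w hwB hw0
      have hψw : ψ w = A * w ^ k := by
        rcases aux_cover hw0 with hsl | hsl
        · have h1 := hc₁ w ⟨hwB, hsl⟩
          have hws : Complex.exp (g 0 * Complex.log w) = w ^ k := by
            rw [hnk, Complex.exp_int_mul, Complex.exp_log hw0]
          calc ψ w = ψ w * Complex.exp (-(g 0 * Complex.log w)) *
                Complex.exp (g 0 * Complex.log w) := by
                rw [mul_assoc, ← Complex.exp_add]
                simp
            _ = A * w ^ k := by rw [h1, hws]
        · have h1 := hc₂ w ⟨hwB, hsl⟩
          have hws : Complex.exp (g 0 * Complex.log (-w)) = (-w) ^ k := by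
            rw [hnk, Complex.exp_int_mul, Complex.exp_log (neg_ne_zero.2 hw0)]
          have hneg : ((-w : ℂ)) ^ k = (-1 : ℂ) ^ k * w ^ k := by
            rw [← neg_one_mul, mul_zpow]
          have h11 : ((-1 : ℂ)) ^ k * (-1 : ℂ) ^ k = 1 := by
            rw [← mul_zpow]
            norm_num
          calc ψ w = ψ w * Complex.exp (-(g 0 * Complex.log (-w))) *
                Complex.exp (g 0 * Complex.log (-w)) := by
                rw [mul_assoc, ← Complex.exp_add]
                simp
            _ = A₂ * ((-1 : ℂ) ^ k * w ^ k) := by rw [h1, hws, hneg]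
            _ = A * (-1 : ℂ) ^ k * ((-1 : ℂ) ^ k * w ^ k) := by rw [hA₂eq, hEπ]
            _ = A * (((-1 : ℂ) ^ k * (-1 : ℂ) ^ k) * w ^ k) := by ring
            _ = A * w ^ k := by rw [h11, one_mul]
      have hupsi : u w = ψ w * Complex.exp (F w) := by
        simp only [hψdef]
        rw [mul_assoc, ← Complex.exp_add]
        simp
      rw [hupsi, hψw]
      ring
    refine ⟨k, hnk, fun z => if z = 0 then A * Complex.exp (F 0) else u z / z ^ k, ?_, ?_, ?_⟩
    · intro z hz
      rcases eq_or_ne z 0 with rfl | hz0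
      · have hev : (fun z : ℂ => if z = 0 then A * Complex.exp (F 0) else u z / z ^ k)
            =ᶠ[𝓝 (0 : ℂ)] fun z => A * Complex.exp (F z) := by
          filter_upwards [ball_mem_nhds (0 : ℂ) hδ] with y hyB
          rcases eq_or_ne y 0 with rfl | hy0
          · simp
          · rw [if_neg hy0, hrep y hyB hy0, mul_comm, mul_div_assoc]
            rw [div_self (zpow_ne_zero k hy0), mul_one]
        have hdF : DifferentiableAt ℂ F 0 := (hF 0 (mem_ball_self hδ₀)).differentiableAt
        have hdA : DifferentiableAt ℂ (fun z => A * Complex.exp (F z)) 0 :=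
          hdF.cexp.const_mul A
        exact (hev.differentiableAt_iff.2 hdA).differentiableWithinAt
      · have hzP : z ∈ {w : ℂ | 0 < ‖w‖ ∧ ‖w‖ < ε} :=
          ⟨norm_pos_iff.mpr hz0, hz⟩
        have hev : (fun z : ℂ => if z = 0 then A * Complex.exp (F 0) else u z / z ^ k)
            =ᶠ[𝓝 z] fun y => u y / y ^ k := by
          filter_upwards [isOpen_compl_singleton.mem_nhds hz0] with y hy
          exact if_neg (by simpa using hy)
        have hdu : DifferentiableAt ℂ u z := hu.differentiableAt (hPopen.mem_nhds hzP)
        have hdz : DifferentiableAt ℂ (fun y : ℂ => y ^ k) z :=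
          differentiableAt_zpow.2 (Or.inl hz0)
        have hdd : DifferentiableAt ℂ (fun y => u y / y ^ k) z :=
          hdu.div hdz (zpow_ne_zero k hz0)
        exact (hev.differentiableAt_iff.2 hdd).differentiableWithinAt
    · show (if (0 : ℂ) = 0 then A * Complex.exp (F 0) else u 0 / (0 : ℂ) ^ k) ≠ 0
      rw [if_pos rfl]
      exact mul_ne_zero hA (Complex.exp_ne_zero _)
    · intro w hw0 hwε
      have hwne : w ≠ 0 := by
        intro h
        rw [h] at hw0
        simp at hw0
      show u w = w ^ k * (if w = 0 then A * Complex.exp (F 0) else u w / w ^ k)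
      rw [if_neg hwne, mul_comm, div_mul_cancel₀ _ (zpow_ne_zero k hwne)]
end

section
/- Let D₁, D₂ ⊆ ℂ be open discs and f, g holomorphic functions on D₁ × D₂. Denote by f_z, f_zz the first and second partial derivatives in the first variable (and likewise for g). Assume f_z(z,w) ≠ 0 for all (z,w) ∈ D₁ × D₂ and f_z·g_zz − g_z·f_zz ≡ 0 on D₁ × D₂. Then there exist holomorphic functions λ, μ on D₂ such that g(z,w) = λ(w)·f(z,w) + μ(w) for all (z,w) ∈ D₁ × D₂. -/
/-- Partial derivative in the first variable: `F_z`. -/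
noncomputable def pdz (F : ℂ → ℂ → ℂ) (z w : ℂ) : ℂ := deriv (fun z' => F z' w) z

/-- Second partial derivative in the first variable: `F_zz`. -/
noncomputable def pdzz (F : ℂ → ℂ → ℂ) (z w : ℂ) : ℂ := deriv (fun z' => pdz F z' w) z

/-- **Vanishing of `I₀` forces affine dependence of `g` on `f`.**
Let `f, g` be holomorphic on a product of discs `D₁ × D₂` with `f_z ≠ 0` everywhere and
`f_z·g_zz − g_z·f_zz ≡ 0`. Then `g(z,w) = λ(w)f(z,w) + μ(w)` for some holomorphic
`λ, μ` on `D₂`. -/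
theorem affine_dependence_of_wronskian_vanishing
    (c₁ c₂ : ℂ) (r₁ r₂ : ℝ) (hr₁ : 0 < r₁) (hr₂ : 0 < r₂)
    (f g : ℂ → ℂ → ℂ)
    (hf : DifferentiableOn ℂ (fun p : ℂ × ℂ => f p.1 p.2)
      (Metric.ball c₁ r₁ ×ˢ Metric.ball c₂ r₂))
    (hg : DifferentiableOn ℂ (fun p : ℂ × ℂ => g p.1 p.2)
      (Metric.ball c₁ r₁ ×ˢ Metric.ball c₂ r₂))
    (hfz : ∀ z ∈ Metric.ball c₁ r₁, ∀ w ∈ Metric.ball c₂ r₂, pdz f z w ≠ 0)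
    (hI0 : ∀ z ∈ Metric.ball c₁ r₁, ∀ w ∈ Metric.ball c₂ r₂,
      pdz f z w * pdzz g z w - pdz g z w * pdzz f z w = 0) :
    ∃ lam mu : ℂ → ℂ,
      DifferentiableOn ℂ lam (Metric.ball c₂ r₂) ∧
      DifferentiableOn ℂ mu (Metric.ball c₂ r₂) ∧
      ∀ z ∈ Metric.ball c₁ r₁, ∀ w ∈ Metric.ball c₂ r₂,
        g z w = lam w * f z w + mu w := by
  set D₁ := Metric.ball c₁ r₁ with hD₁
  set D₂ := Metric.ball c₂ r₂ with hD₂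
  have hc₁ : c₁ ∈ D₁ := Metric.mem_ball_self hr₁
  have hopen : IsOpen (D₁ ×ˢ D₂) := Metric.isOpen_ball.prod Metric.isOpen_ball
  -- joint differentiability at points
  have hfAt : ∀ z ∈ D₁, ∀ w ∈ D₂, DifferentiableAt ℂ (fun p : ℂ × ℂ => f p.1 p.2) (z, w) :=
    fun z hz w hw => hf.differentiableAt (hopen.mem_nhds ⟨hz, hw⟩)
  have hgAt : ∀ z ∈ D₁, ∀ w ∈ D₂, DifferentiableAt ℂ (fun p : ℂ × ℂ => g p.1 p.2) (z, w) :=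
    fun z hz w hw => hg.differentiableAt (hopen.mem_nhds ⟨hz, hw⟩)
  -- z-slices
  have hslicef : ∀ w ∈ D₂, DifferentiableOn ℂ (fun z => f z w) D₁ := by
    intro w hw z hz
    exact ((hfAt z hz w hw).comp z
      (DifferentiableAt.prodMk (differentiableAt_id : DifferentiableAt ℂ id z) (differentiableAt_const w))).differentiableWithinAt
  have hsliceg : ∀ w ∈ D₂, DifferentiableOn ℂ (fun z => g z w) D₁ := by
    intro w hw z hz
    exact ((hgAt z hz w hw).comp z
      (DifferentiableAt.prodMk (differentiableAt_id : DifferentiableAt ℂ id z) (differentiableAt_const w))).differentiableWithinAt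
  -- w-slices
  have hwf : ∀ z ∈ D₁, ∀ w ∈ D₂, DifferentiableAt ℂ (fun w' => f z w') w := by
    intro z hz w hw
    exact (hfAt z hz w hw).comp w (DifferentiableAt.prodMk (differentiableAt_const z) differentiableAt_id)
  have hwg : ∀ z ∈ D₁, ∀ w ∈ D₂, DifferentiableAt ℂ (fun w' => g z w') w := by
    intro z hz w hw
    exact (hgAt z hz w hw).comp w (DifferentiableAt.prodMk (differentiableAt_const z) differentiableAt_id)
  set lam : ℂ → ℂ := fun w => pdz g c₁ w / pdz f c₁ w with hlam_def
  set mu : ℂ → ℂ := fun w => g c₁ w - lam w * f c₁ w with hmu_def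
  -- the main pointwise identity
  have main : ∀ w ∈ D₂, ∀ z ∈ D₁, g z w = lam w * f z w + mu w := by
    intro w hw
    have hfw : DifferentiableOn ℂ (fun z => f z w) D₁ := hslicef w hw
    have hgw : DifferentiableOn ℂ (fun z => g z w) D₁ := hsliceg w hw
    have hfa : AnalyticOnNhd ℂ (fun z => f z w) D₁ := hfw.analyticOnNhd Metric.isOpen_ball
    have hga : AnalyticOnNhd ℂ (fun z => g z w) D₁ := hgw.analyticOnNhd Metric.isOpen_ball
    have hfd : AnalyticOnNhd ℂ (deriv fun z => f z w) D₁ := hfa.deriv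
    have hgd : AnalyticOnNhd ℂ (deriv fun z => g z w) D₁ := hga.deriv
    have hfz' : ∀ z ∈ D₁, deriv (fun z' => f z' w) z ≠ 0 := fun z hz => hfz z hz w hw
    -- q := g_z / f_z has zero derivative
    have hq0 : ∀ z ∈ D₁,
        HasDerivAt (fun z' => deriv (fun y => g y w) z' / deriv (fun y => f y w) z') 0 z := by
      intro z hz
      have h1 : HasDerivAt (deriv fun y => g y w) (deriv (deriv fun y => g y w) z) z :=
        (hgd z hz).differentiableAt.hasDerivAt
      have h2 : HasDerivAt (deriv fun y => f y w) (deriv (deriv fun y => f y w) z) z :=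
        (hfd z hz).differentiableAt.hasDerivAt
      have h3 := h1.div h2 (hfz' z hz)
      have hI : deriv (fun y => f y w) z * deriv (deriv fun y => g y w) z -
          deriv (fun y => g y w) z * deriv (deriv fun y => f y w) z = 0 := hI0 z hz w hw
      have hnum : deriv (deriv fun y => g y w) z * deriv (fun y => f y w) z -
          deriv (fun y => g y w) z * deriv (deriv fun y => f y w) z = 0 := by
        linear_combination hI
      rw [hnum, zero_div] at h3
      exact h3
    have hqdiff : DifferentiableOn ℂ
        (fun z' => deriv (fun y => g y w) z' / deriv (fun y => f y w) z') D₁ :=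
      fun z hz => ((hq0 z hz).differentiableAt).differentiableWithinAt
    have hqconst : ∀ z ∈ D₁,
        deriv (fun y => g y w) z / deriv (fun y => f y w) z
          = deriv (fun y => g y w) c₁ / deriv (fun y => f y w) c₁ := by
      intro z hz
      refine (convex_ball c₁ r₁).is_const_of_fderivWithin_eq_zero hqdiff ?_ hz hc₁
      intro x hx
      rw [fderivWithin_of_isOpen Metric.isOpen_ball hx]
      refine ContinuousLinearMap.ext fun y => ?_
      rw [ContinuousLinearMap.zero_apply, fderiv_eq_smul_deriv, (hq0 x hx).deriv, smul_zero]
    have hderiv_eq : ∀ z ∈ D₁,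
        deriv (fun y => g y w) z = lam w * deriv (fun y => f y w) z := by
      intro z hz
      have hthis := hqconst z hz
      have hlamw : lam w = deriv (fun y => g y w) c₁ / deriv (fun y => f y w) c₁ := rfl
      rw [← hlamw] at hthis
      have := (div_eq_iff (hfz' z hz)).mp hthis
      rw [this, mul_comm]
    -- p := g - lam w * f is constant in z
    intro z hz
    have hp0 : ∀ x ∈ D₁,
        HasDerivAt (fun z' => g z' w - lam w * f z' w) 0 x := by
      intro x hx
      have h1 : HasDerivAt (fun y => g y w) (deriv (fun y => g y w) x) x :=
        (hga x hx).differentiableAt.hasDerivAt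
      have h2 : HasDerivAt (fun y => f y w) (deriv (fun y => f y w) x) x :=
        (hfa x hx).differentiableAt.hasDerivAt
      have h3 := h1.sub ((h2.const_mul (lam w)))
      have : deriv (fun y => g y w) x - lam w * deriv (fun y => f y w) x = 0 := by
        rw [hderiv_eq x hx]; ring
      rwa [this] at h3
    have hpdiff : DifferentiableOn ℂ (fun z' => g z' w - lam w * f z' w) D₁ :=
      fun x hx => ((hp0 x hx).differentiableAt).differentiableWithinAt
    have hpconst : g z w - lam w * f z w = g c₁ w - lam w * f c₁ w := by
      refine (convex_ball c₁ r₁).is_const_of_fderivWithin_eq_zero hpdiff ?_ hz hc₁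
      intro x hx
      rw [fderivWithin_of_isOpen Metric.isOpen_ball hx]
      refine ContinuousLinearMap.ext fun y => ?_
      rw [ContinuousLinearMap.zero_apply, fderiv_eq_smul_deriv, (hp0 x hx).deriv, smul_zero]
    have : mu w = g c₁ w - lam w * f c₁ w := rfl
    rw [this, ← hpconst]; ring
  -- holomorphy of lam
  have hlamAt : ∀ w₀ ∈ D₂, DifferentiableAt ℂ lam w₀ := by
    intro w₀ hw₀
    -- choose z₀ with f z₀ w₀ ≠ f c₁ w₀
    have hex : ∃ z₀ ∈ D₁, f z₀ w₀ ≠ f c₁ w₀ := by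
      by_contra hcon
      push_neg at hcon
      have heq : (fun z => f z w₀) =ᶠ[nhds c₁] (fun _ => f c₁ w₀) :=
        Filter.eventually_of_mem (Metric.isOpen_ball.mem_nhds hc₁) hcon
      have : pdz f c₁ w₀ = 0 := by
        have := heq.deriv_eq
        rw [deriv_const] at this
        exact this
      exact hfz c₁ hc₁ w₀ hw₀ this
    obtain ⟨z₀, hz₀, hne0⟩ := hex
    have hne : f z₀ w₀ - f c₁ w₀ ≠ 0 := sub_ne_zero.mpr hne0
    have hcont : ContinuousAt (fun w => f z₀ w - f c₁ w) w₀ :=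
      ((hwf z₀ hz₀ w₀ hw₀).sub (hwf c₁ hc₁ w₀ hw₀)).continuousAt
    have hev : ∀ᶠ w in nhds w₀, f z₀ w - f c₁ w ≠ 0 := hcont.eventually_ne hne
    have heq : lam =ᶠ[nhds w₀] fun w => (g z₀ w - g c₁ w) / (f z₀ w - f c₁ w) := by
      filter_upwards [hev, Metric.isOpen_ball.mem_nhds hw₀] with w h1 h2
      have e1 := main w h2 z₀ hz₀
      have e2 := main w h2 c₁ hc₁
      rw [eq_div_iff h1]
      linear_combination e2 - e1
    have hdivAt : DifferentiableAt ℂ (fun w => (g z₀ w - g c₁ w) / (f z₀ w - f c₁ w)) w₀ :=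
      ((hwg z₀ hz₀ w₀ hw₀).sub (hwg c₁ hc₁ w₀ hw₀)).div
        ((hwf z₀ hz₀ w₀ hw₀).sub (hwf c₁ hc₁ w₀ hw₀)) hne
    exact heq.differentiableAt_iff.mpr hdivAt
  have hlamOn : DifferentiableOn ℂ lam D₂ :=
    fun w hw => (hlamAt w hw).differentiableWithinAt
  have hmuOn : DifferentiableOn ℂ mu D₂ := by
    intro w hw
    have h1 : DifferentiableAt ℂ (fun w' => g c₁ w') w := hwg c₁ hc₁ w hw
    have h2 : DifferentiableAt ℂ (fun w' => f c₁ w') w := hwf c₁ hc₁ w hw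
    exact ((h1.sub ((hlamAt w hw).mul h2))).differentiableWithinAt
  exact ⟨lam, mu, hlamOn, hmuOn, fun z hz w hw => main w hw z hz⟩
end

section
/- Let D₁, D₂ ⊆ ℂ be open discs and f, g holomorphic functions on D₁ × D₂ satisfying, at every point of D₁ × D₂: f_z ≠ 0, the Jacobian f_w·g_z − g_w·f_z ≠ 0, and the two identities f_z·g_zz − g_z·f_zz = 0 and f_w·g_zz − g_w·f_zz + 2f_z·g_zw − 2g_z·f_zw = 0. Then every point (z₀,w₀) ∈ D₁ × D₂ has a neighborhood D₁' × D₂' ⊆ D₁ × D₂ on which there exist holomorphic functions α₀, α₁, α₂, β₀, β₁, β₂ : D₂' → ℂ such that α₀(w)z + β₀(w) ≠ 0 for all (z,w) ∈ D₁' × D₂', and f(z,w) = (α₁(w)z + β₁(w))/(α₀(w)z + β₀(w)) and g(z,w) = (α₂(w)z + β₂(w))/(α₀(w)z + β₀(w)) on D₁' × D₂'; that is, the map (f,g) is linear-fractional in the variable z. -/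
/-- Partial derivative in the second variable: `F_w`. -/
noncomputable def pdw (F : ℂ → ℂ → ℂ) (z w : ℂ) : ℂ := deriv (fun w' => F z w') w

/-- Mixed second partial derivative: `F_zw` (the derivative of `F_z` in `w`). -/
noncomputable def pdzw (F : ℂ → ℂ → ℂ) (z w : ℂ) : ℂ := deriv (fun w' => pdz F z w') w

open Metric Complex intervalIntegral Set
open scoped Real Topology

lemma deriv_eq_circleIntegral {φ : ℂ → ℂ} {z : ℂ} {ρ : ℝ} (hρ : 0 < ρ)
    (hφ : DifferentiableOn ℂ φ (Metric.closedBall z ρ)) :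
    deriv φ z = (2 * ↑π * I : ℂ)⁻¹ • ∮ ζ in C(z, ρ), ((ζ - z) ^ 2)⁻¹ • φ ζ := by
  lift ρ to NNReal using hρ.le with ρ' hρ'
  have hρ0 : (0:NNReal) < ρ' := by exact_mod_cast hρ
  have hps := hφ.hasFPowerSeriesOnBall hρ0
  rw [hps.hasFPowerSeriesAt.deriv, cauchyPowerSeries_apply]
  congr 1
  simp only [circleIntegral]
  apply intervalIntegral.integral_congr
  intro θ _
  simp only [smul_smul]
  congr 1
  have hne : (circleMap z (ρ':ℝ) θ - z) ≠ 0 :=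
    sub_ne_zero.2 (circleMap_ne_center (by exact_mod_cast hρ.ne'))
  field_simp

lemma norm_deriv_le_sphere {φ : ℂ → ℂ} {z : ℂ} {ρ M : ℝ} (hρ : 0 < ρ)
    (hφ : DifferentiableOn ℂ φ (Metric.closedBall z ρ))
    (hM : ∀ ζ ∈ Metric.sphere z ρ, ‖φ ζ‖ ≤ M) : ‖deriv φ z‖ ≤ M / ρ := by
  lift ρ to NNReal using hρ.le with ρ' hρ'
  have hρ0 : (0:NNReal) < ρ' := by exact_mod_cast hρ
  have hps := hφ.hasFPowerSeriesOnBall hρ0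
  rw [hps.hasFPowerSeriesAt.deriv]
  have h1 : ‖(cauchyPowerSeries φ z ρ' 1) fun _ => (1:ℂ)‖ ≤ ‖cauchyPowerSeries φ z ρ' 1‖ := by
    refine le_trans ((cauchyPowerSeries φ z ρ' 1).le_opNorm _) ?_
    simp
  refine h1.trans ?_
  have h2 := norm_cauchyPowerSeries_le φ z ρ' 1
  refine h2.trans ?_
  have hcont : ContinuousOn (fun θ : ℝ => ‖φ (circleMap z ρ' θ)‖) (Set.uIcc 0 (2*π)) := by
    apply Continuous.comp_continuousOn' continuous_norm
    exact Continuous.continuousOn <| (hφ.continuousOn.mono sphere_subset_closedBall).comp_continuous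
      (continuous_circleMap z ρ') (fun θ => circleMap_mem_sphere z (by exact_mod_cast hρ.le) θ)
  have hint : IntervalIntegrable (fun θ : ℝ => ‖φ (circleMap z ρ' θ)‖) MeasureTheory.volume 0 (2*π) :=
    hcont.intervalIntegrable
  have h3 : (∫ θ : ℝ in (0)..2 * π, ‖φ (circleMap z ρ' θ)‖) ≤ (∫ _ : ℝ in (0)..2 * π, M) := by
    apply intervalIntegral.integral_mono_on Real.two_pi_pos.le hint intervalIntegrable_const
    intro θ _
    exact hM _ (circleMap_mem_sphere z (by exact_mod_cast hρ.le) θ)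
  have h4 : (2*π)⁻¹ * (∫ θ : ℝ in (0)..2 * π, ‖φ (circleMap z ρ' θ)‖) ≤ M := by
    rw [inv_mul_le_iff₀ Real.two_pi_pos]
    simpa [mul_comm] using h3
  have h5 : |(ρ':ℝ)|⁻¹ ^ 1 = (ρ':ℝ)⁻¹ := by
    simp [abs_of_pos hρ]
  rw [h5, div_eq_mul_inv]
  have hMnonneg : (0:ℝ) ≤ (ρ':ℝ)⁻¹ := by positivity
  exact mul_le_mul_of_nonneg_right h4 hMnonneg

lemma hasDerivAt_pdz_param {φ : ℂ → ℂ → ℂ} {z w₁ : ℂ} {ρ ε Cb : ℝ} (hρ : 0 < ρ) (hε : 0 < ε)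
    (hz : ∀ w' ∈ ball w₁ ε, DifferentiableOn ℂ (fun ζ => φ ζ w') (closedBall z ρ))
    (hw : ∀ ζ ∈ sphere z ρ, ∀ w' ∈ ball w₁ ε, HasDerivAt (fun v => φ ζ v) (pdw φ ζ w') w')
    (hbound : ∀ ζ ∈ sphere z ρ, ∀ w' ∈ ball w₁ ε, ‖pdw φ ζ w'‖ ≤ Cb) :
    HasDerivAt (fun w => pdz φ z w)
      ((2 * ↑π * I : ℂ)⁻¹ • ∮ ζ in C(z, ρ), ((ζ - z) ^ 2)⁻¹ • pdw φ ζ w₁) w₁ := by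
  set κ : ℝ → ℂ := fun θ => (2 * ↑π * I : ℂ)⁻¹ * (deriv (circleMap z ρ) θ) *
    ((circleMap z ρ θ - z) ^ 2)⁻¹ with hκ
  have hsph : ∀ θ : ℝ, circleMap z ρ θ ∈ sphere z ρ := fun θ => circleMap_mem_sphere z hρ.le θ
  have hκcont : Continuous κ := by
    apply Continuous.mul
    · apply Continuous.mul continuous_const
      have : (fun θ => deriv (circleMap z ρ) θ) = fun θ => circleMap 0 ρ θ * I := by
        funext θ; exact deriv_circleMap z ρ θ
      show Continuous fun θ => deriv (circleMap z ρ) θ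
      rw [this]
      exact (continuous_circleMap 0 ρ).mul continuous_const
    · apply Continuous.inv₀ (by continuity)
      intro θ
      exact pow_ne_zero _ (sub_ne_zero.2 (circleMap_ne_center hρ.ne'))
  have hκnorm : ∀ θ : ℝ, ‖κ θ‖ = ((2 * π)⁻¹ * ρ * (ρ ^ 2)⁻¹) := by
    intro θ
    rw [hκ]
    simp only [norm_mul, norm_inv, deriv_circleMap, norm_pow, circleMap_sub_center]
    simp [norm_circleMap_zero, abs_of_pos hρ, abs_of_pos Real.pi_pos]
  set F : ℂ → ℝ → ℂ := fun w θ => κ θ * φ (circleMap z ρ θ) w with hF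
  set F' : ℂ → ℝ → ℂ := fun w θ => κ θ * pdw φ (circleMap z ρ θ) w with hF'
  have hrep : ∀ w' ∈ ball w₁ ε, pdz φ z w' = ∫ θ in (0)..(2*π), F w' θ := by
    intro w' hw'
    show deriv (fun z' => φ z' w') z = _
    rw [deriv_eq_circleIntegral hρ (hz w' hw'), circleIntegral, ← intervalIntegral.integral_smul]
    apply intervalIntegral.integral_congr
    intro θ _
    simp only [hF, hκ, smul_eq_mul]
    ring
  have hval : (∫ θ in (0)..(2*π), F' w₁ θ) =
      (2 * ↑π * I : ℂ)⁻¹ • ∮ ζ in C(z, ρ), ((ζ - z) ^ 2)⁻¹ • pdw φ ζ w₁ := by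
    rw [circleIntegral, ← intervalIntegral.integral_smul]
    apply intervalIntegral.integral_congr
    intro θ _
    simp only [hF', hκ, smul_eq_mul]
    ring
  have hcontφ : ∀ w' ∈ ball w₁ ε, Continuous (fun θ => φ (circleMap z ρ θ) w') := by
    intro w' hw'
    exact ((hz w' hw').continuousOn.mono sphere_subset_closedBall).comp_continuous
      (continuous_circleMap z ρ) hsph
  -- measurability of the derivative integrand via difference quotients
  have hmeas' : MeasureTheory.AEStronglyMeasurable (F' w₁)
      (MeasureTheory.volume.restrict (Set.uIoc 0 (2*π))) := by
    set c : ℕ → ℝ := fun n => ε/(2*(n+1)) with hc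
    have hcpos : ∀ n : ℕ, 0 < c n := by
      intro n; apply div_pos hε; positivity
    have hclt : ∀ n : ℕ, c n < ε := by
      intro n
      rw [hc]
      rw [div_lt_iff₀ (by positivity)]
      nlinarith [hε, (Nat.cast_nonneg (α := ℝ) n)]
    have hc0 : Filter.Tendsto c Filter.atTop (𝓝 0) := by
      have : c = fun n : ℕ => (ε/2) * (1/(n+1)) := by
        funext n; rw [hc]; field_simp
      rw [this]
      simpa using (tendsto_const_nhds : Filter.Tendsto (fun _ : ℕ => ε/2) Filter.atTop (𝓝 (ε/2))).mul tendsto_one_div_add_atTop_nhds_zero_nat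
    have hball : ∀ n : ℕ, w₁ + ((c n : ℝ) : ℂ) ∈ ball w₁ ε := by
      intro n
      simp only [mem_ball, dist_eq_norm, add_sub_cancel_left]
      rw [Complex.norm_real, Real.norm_eq_abs, abs_of_pos (hcpos n)]
      exact hclt n
    have hseq : ∀ θ : ℝ, Filter.Tendsto
        (fun n : ℕ => slope (fun v => φ (circleMap z ρ θ) v) w₁ (w₁ + ((c n : ℝ) : ℂ)))
        Filter.atTop (𝓝 (pdw φ (circleMap z ρ θ) w₁)) := by
      intro θ
      have hd := hw _ (hsph θ) w₁ (mem_ball_self hε)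
      rw [hasDerivAt_iff_tendsto_slope] at hd
      have hseq2 : Filter.Tendsto (fun n : ℕ => w₁ + ((c n : ℝ) : ℂ)) Filter.atTop
          (𝓝[≠] w₁) := by
        rw [tendsto_nhdsWithin_iff]
        constructor
        · have : Filter.Tendsto (fun n : ℕ => ((c n : ℝ) : ℂ)) Filter.atTop (𝓝 0) := by
            rw [show ((0:ℂ)) = ((0:ℝ):ℂ) by simp]
            exact (Complex.continuous_ofReal.tendsto 0).comp hc0
          simpa using tendsto_const_nhds.add this
        · apply Filter.Eventually.of_forall
          intro n
          simp only [mem_compl_iff, mem_singleton_iff]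
          intro hcon
          have : ((c n : ℝ) : ℂ) = 0 := by
            have := sub_eq_zero.2 hcon
            simpa using this
          exact (hcpos n).ne' (by exact_mod_cast this)
      exact hd.comp hseq2
    apply aestronglyMeasurable_of_tendsto_ae Filter.atTop
      (f := fun (n : ℕ) θ => κ θ *
        slope (fun v => φ (circleMap z ρ θ) v) w₁ (w₁ + ((c n : ℝ) : ℂ)))
    · intro n
      apply Continuous.aestronglyMeasurable
      have : (fun θ => κ θ * slope (fun v => φ (circleMap z ρ θ) v) w₁ (w₁ + ((c n : ℝ) : ℂ)))
          = fun θ => κ θ * ((φ (circleMap z ρ θ) (w₁ + ((c n : ℝ) : ℂ)) -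
            φ (circleMap z ρ θ) w₁) / ((c n : ℝ) : ℂ)) := by
        funext θ
        rw [slope_def_field]
        congr 2
        ring
      rw [this]
      exact hκcont.mul (((hcontφ _ (hball n)).sub (hcontφ _ (mem_ball_self hε))).div_const _)
    · apply MeasureTheory.ae_of_all
      intro θ
      exact (Filter.Tendsto.const_mul (κ θ) (hseq θ))
  have key := intervalIntegral.hasDerivAt_integral_of_dominated_loc_of_deriv_le
    (F := F) (F' := F') (x₀ := w₁) (a := 0) (b := 2*π)
    (bound := fun _ => ((2 * π)⁻¹ * ρ * (ρ ^ 2)⁻¹) * max Cb 0) (ball_mem_nhds w₁ hε)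
    (by filter_upwards [ball_mem_nhds w₁ hε] with w' hw' using
      (hκcont.mul (hcontφ w' hw')).aestronglyMeasurable)
    ((hκcont.mul (hcontφ w₁ (mem_ball_self hε))).intervalIntegrable 0 (2*π))
    hmeas'
    (by
      apply MeasureTheory.ae_of_all
      intro θ _ w' hw'
      simp only [hF', norm_mul, hκnorm θ]
      apply mul_le_mul_of_nonneg_left ((hbound _ (hsph θ) w' hw').trans (le_max_left _ _))
      positivity)
    intervalIntegrable_const
    (by
      apply MeasureTheory.ae_of_all
      intro θ _ w' hw'
      exact (hw _ (hsph θ) w' hw').const_mul (κ θ))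
  have hDA := key.2
  rw [hval] at hDA
  apply hDA.congr_of_eventuallyEq
  filter_upwards [ball_mem_nhds w₁ hε] with w' hw' using hrep w' hw'

section slices
variable {c₁ c₂ : ℂ} {r₁ r₂ : ℝ} {φ : ℂ → ℂ → ℂ}
  (hφ : DifferentiableOn ℂ (fun p : ℂ × ℂ => φ p.1 p.2) (ball c₁ r₁ ×ˢ ball c₂ r₂))

include hφ

lemma zslice {w : ℂ} (hw : w ∈ ball c₂ r₂) :
    DifferentiableOn ℂ (fun z => φ z w) (ball c₁ r₁) := by
  have : (fun z => φ z w) = (fun p : ℂ × ℂ => φ p.1 p.2) ∘ (fun z => (z, w)) := rfl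
  rw [this]
  apply hφ.comp (differentiable_id.prodMk (differentiable_const w)).differentiableOn
  intro z hz
  exact ⟨hz, hw⟩

lemma wslice {z : ℂ} (hz : z ∈ ball c₁ r₁) :
    DifferentiableOn ℂ (fun w => φ z w) (ball c₂ r₂) := by
  have : (fun w => φ z w) = (fun p : ℂ × ℂ => φ p.1 p.2) ∘ (fun w => (z, w)) := rfl
  rw [this]
  apply hφ.comp ((differentiable_const z).prodMk differentiable_id).differentiableOn
  intro w hw
  exact ⟨hz, hw⟩

lemma hasDerivAt_z {z w : ℂ} (hz : z ∈ ball c₁ r₁) (hw : w ∈ ball c₂ r₂) :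
    HasDerivAt (fun z' => φ z' w) (pdz φ z w) z :=
  ((zslice hφ hw).differentiableAt (isOpen_ball.mem_nhds hz)).hasDerivAt

lemma hasDerivAt_w {z w : ℂ} (hz : z ∈ ball c₁ r₁) (hw : w ∈ ball c₂ r₂) :
    HasDerivAt (fun w' => φ z w') (pdw φ z w) w :=
  ((wslice hφ hz).differentiableAt (isOpen_ball.mem_nhds hw)).hasDerivAt

lemma pdz_zdiff {w : ℂ} (hw : w ∈ ball c₂ r₂) :
    DifferentiableOn ℂ (fun z => pdz φ z w) (ball c₁ r₁) :=
  (((zslice hφ hw).analyticOnNhd isOpen_ball).deriv).differentiableOn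

lemma hasDerivAt_zz {z w : ℂ} (hz : z ∈ ball c₁ r₁) (hw : w ∈ ball c₂ r₂) :
    HasDerivAt (fun z' => pdz φ z' w) (pdzz φ z w) z :=
  ((pdz_zdiff hφ hw).differentiableAt (isOpen_ball.mem_nhds hz)).hasDerivAt

lemma bound_on_compacts {K : Set (ℂ × ℂ)} (hK : IsCompact K)
    (hKsub : K ⊆ ball c₁ r₁ ×ˢ ball c₂ r₂) :
    ∃ M : ℝ, ∀ p ∈ K, ‖φ p.1 p.2‖ ≤ M :=
  hK.exists_bound_of_continuousOn (hφ.continuousOn.mono hKsub)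

end slices

section main2var
variable {c₁ c₂ : ℂ} {r₁ r₂ : ℝ} {φ : ℂ → ℂ → ℂ}
  (hφ : DifferentiableOn ℂ (fun p : ℂ × ℂ => φ p.1 p.2) (ball c₁ r₁ ×ˢ ball c₂ r₂))

include hφ

/-- M1: the partial derivative in `z` is differentiable in `w`. -/
lemma hasDerivAt_pdz_w {z w : ℂ} (hz : z ∈ ball c₁ r₁) (hw : w ∈ ball c₂ r₂) :
    HasDerivAt (fun w' => pdz φ z w') (pdzw φ z w) w := by
  set ρ : ℝ := (r₁ - dist z c₁)/2 with hρdef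
  have hρ : 0 < ρ := by simp only [hρdef]; simp only [mem_ball] at hz; linarith
  have hρsub : closedBall z ρ ⊆ ball c₁ r₁ := by
    intro x hx
    simp only [mem_closedBall] at hx
    simp only [mem_ball] at hz ⊢
    calc dist x c₁ ≤ dist x z + dist z c₁ := dist_triangle _ _ _
      _ ≤ ρ + dist z c₁ := by linarith
      _ < r₁ := by simp only [hρdef]; linarith
  set ε : ℝ := (r₂ - dist w c₂)/3 with hεdef
  have hε : 0 < ε := by simp only [hεdef]; simp only [mem_ball] at hw; linarith
  have hεsub : closedBall w (2*ε) ⊆ ball c₂ r₂ := by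
    intro x hx
    simp only [mem_closedBall] at hx
    simp only [mem_ball] at hw ⊢
    calc dist x c₂ ≤ dist x w + dist w c₂ := dist_triangle _ _ _
      _ ≤ 2*ε + dist w c₂ := by linarith
      _ < r₂ := by simp only [hεdef]; linarith
  -- bound for ‖φ‖ on sphere z ρ ×ˢ closedBall w (2ε)
  obtain ⟨M, hM⟩ := ((isCompact_sphere z ρ).prod (isCompact_closedBall w (2*ε))).exists_bound_of_continuousOn
    (hφ.continuousOn.mono (by
      intro p hp
      exact ⟨hρsub (sphere_subset_closedBall hp.1), hεsub hp.2⟩))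
  have key := hasDerivAt_pdz_param (φ := φ) (z := z) (w₁ := w) (Cb := M / ε) hρ hε
    (fun w' hw' => (zslice hφ (hεsub (by
      simp only [mem_closedBall]
      have := mem_ball.1 hw'
      linarith [this.le]))).mono hρsub)
    (fun ζ hζ w' hw' => hasDerivAt_w hφ (hρsub (sphere_subset_closedBall hζ))
      (hεsub (by
        simp only [mem_closedBall]
        have := mem_ball.1 hw'
        linarith [this.le])))
    (fun ζ hζ w' hw' => by
      -- Cauchy estimate in the w-direction
      apply norm_deriv_le_sphere hε
      · apply (wslice hφ (hρsub (sphere_subset_closedBall hζ))).mono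
        intro x hx
        apply hεsub
        simp only [mem_closedBall] at hx ⊢
        have := (mem_ball.1 hw').le
        calc dist x w ≤ dist x w' + dist w' w := dist_triangle _ _ _
          _ ≤ 2*ε := by linarith
      · intro ω hω
        apply hM (ζ, ω)
        refine ⟨hζ, ?_⟩
        simp only [mem_closedBall]
        have h1 : dist ω w' = ε := mem_sphere.1 hω
        have := (mem_ball.1 hw').le
        calc dist ω w ≤ dist ω w' + dist w' w := dist_triangle _ _ _
          _ ≤ 2*ε := by linarith)
  have : pdzw φ z w = (2 * ↑π * I : ℂ)⁻¹ • ∮ ζ in C(z, ρ), ((ζ - z) ^ 2)⁻¹ • pdw φ ζ w :=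
    key.deriv
  rw [this]
  exact key

/-- Swapped function is jointly differentiable. -/
lemma swap_diff : DifferentiableOn ℂ (fun p : ℂ × ℂ => φ p.2 p.1) (ball c₂ r₂ ×ˢ ball c₁ r₁) := by
  have : (fun p : ℂ × ℂ => φ p.2 p.1) = (fun p : ℂ × ℂ => φ p.1 p.2) ∘ Prod.swap := rfl
  rw [this]
  apply hφ.comp (differentiable_snd.prodMk differentiable_fst).differentiableOn
  intro p hp
  exact ⟨hp.2, hp.1⟩

/-- M2 (Clairaut): the partial derivative in `w` is differentiable in `z`,
with derivative `pdzw`. -/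
lemma hasDerivAt_pdw_z {z w : ℂ} (hz : z ∈ ball c₁ r₁) (hw : w ∈ ball c₂ r₂) :
    HasDerivAt (fun z' => pdw φ z' w) (pdzw φ z w) z := by
  set ρ' : ℝ := (r₂ - dist w c₂)/2 with hρ'def
  have hρ' : 0 < ρ' := by simp only [hρ'def]; simp only [mem_ball] at hw; linarith
  have hρ'sub : closedBall w ρ' ⊆ ball c₂ r₂ := by
    intro x hx
    simp only [mem_closedBall] at hx
    simp only [mem_ball] at hw ⊢
    calc dist x c₂ ≤ dist x w + dist w c₂ := dist_triangle _ _ _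
      _ ≤ ρ' + dist w c₂ := by linarith
      _ < r₂ := by simp only [hρ'def]; linarith
  set ε' : ℝ := (r₁ - dist z c₁)/3 with hε'def
  have hε' : 0 < ε' := by simp only [hε'def]; simp only [mem_ball] at hz; linarith
  have hε'sub : closedBall z (2*ε') ⊆ ball c₁ r₁ := by
    intro x hx
    simp only [mem_closedBall] at hx
    simp only [mem_ball] at hz ⊢
    calc dist x c₁ ≤ dist x z + dist z c₁ := dist_triangle _ _ _
      _ ≤ 2*ε' + dist z c₁ := by linarith
      _ < r₁ := by simp only [hε'def]; linarith
  obtain ⟨M, hM⟩ := ((isCompact_sphere w ρ').prod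
    (isCompact_closedBall z (2*ε'))).exists_bound_of_continuousOn
    ((swap_diff hφ).continuousOn.mono (by
      intro p hp
      exact ⟨hρ'sub (sphere_subset_closedBall hp.1), hε'sub hp.2⟩))
  have hswap := swap_diff hφ
  have key := hasDerivAt_pdz_param (φ := fun w' z' => φ z' w') (z := w) (w₁ := z)
    (Cb := M / ε') hρ' hε'
    (fun z' hz' => (wslice hφ (hε'sub (by
      simp only [mem_closedBall]
      have := mem_ball.1 hz'
      linarith [this.le]))).mono hρ'sub)
    (fun ω hω z' hz' => by
      show HasDerivAt (fun v => φ v ω) (deriv (fun v => φ v ω) z') z'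
      exact ((zslice hφ (hρ'sub (sphere_subset_closedBall hω))).differentiableAt
        (isOpen_ball.mem_nhds (hε'sub (by
          simp only [mem_closedBall]
          have := mem_ball.1 hz'
          linarith [this.le])))).hasDerivAt)
    (fun ω hω z' hz' => by
      show ‖deriv (fun v => φ v ω) z'‖ ≤ M / ε'
      apply norm_deriv_le_sphere hε'
      · apply (zslice hφ (hρ'sub (sphere_subset_closedBall hω))).mono
        intro x hx
        apply hε'sub
        simp only [mem_closedBall] at hx ⊢
        have := (mem_ball.1 hz').le
        calc dist x z ≤ dist x z' + dist z' z := dist_triangle _ _ _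
          _ ≤ 2*ε' := by linarith
      · intro ζ hζ
        apply hM (ω, ζ)
        refine ⟨hω, ?_⟩
        simp only [mem_closedBall]
        have h1 : dist ζ z' = ε' := mem_sphere.1 hζ
        have := (mem_ball.1 hz').le
        calc dist ζ z ≤ dist ζ z' + dist z' z := dist_triangle _ _ _
          _ ≤ 2*ε' := by linarith)
  -- key : HasDerivAt (fun z' => pdz (swap φ) w z') (VAL') z and
  -- pdz (swap φ) w z' is defeq to pdw φ z' w
  have keyval : HasDerivAt (fun z' => pdw φ z' w)
      ((2 * ↑π * I : ℂ)⁻¹ • ∮ ω in C(w, ρ'), ((ω - w) ^ 2)⁻¹ • pdz φ z ω) z := key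
  have hval2 : pdzw φ z w =
      (2 * ↑π * I : ℂ)⁻¹ • ∮ ω in C(w, ρ'), ((ω - w) ^ 2)⁻¹ • pdz φ z ω := by
    show deriv (fun w' => pdz φ z w') w = _
    apply deriv_eq_circleIntegral hρ'
    intro x hx
    exact ((hasDerivAt_pdz_w hφ hz (hρ'sub hx)).differentiableAt).differentiableWithinAt
  rw [hval2]
  exact keyval

/-- M3: `pdzz` is differentiable in `w`. -/
lemma hasDerivAt_pdzz_w {z w : ℂ} (hz : z ∈ ball c₁ r₁) (hw : w ∈ ball c₂ r₂) :
    DifferentiableAt ℂ (fun w' => pdzz φ z w') w := by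
  set d : ℝ := r₁ - dist z c₁ with hd
  have hdpos : 0 < d := by simp only [hd]; simp only [mem_ball] at hz; linarith
  set ρ : ℝ := d/3 with hρdef
  have hρ : 0 < ρ := by positivity
  have hρsub : closedBall z (2*ρ) ⊆ ball c₁ r₁ := by
    intro x hx
    simp only [mem_closedBall] at hx
    simp only [mem_ball] at hz ⊢
    calc dist x c₁ ≤ dist x z + dist z c₁ := dist_triangle _ _ _
      _ ≤ 2*ρ + dist z c₁ := by linarith
      _ < r₁ := by simp only [hρdef, hd]; linarith
  have hρsub1 : closedBall z ρ ⊆ ball c₁ r₁ := by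
    apply Subset.trans _ hρsub
    apply closedBall_subset_closedBall
    linarith
  set ε : ℝ := (r₂ - dist w c₂)/3 with hεdef
  have hε : 0 < ε := by simp only [hεdef]; simp only [mem_ball] at hw; linarith
  have hεsub : closedBall w (2*ε) ⊆ ball c₂ r₂ := by
    intro x hx
    simp only [mem_closedBall] at hx
    simp only [mem_ball] at hw ⊢
    calc dist x c₂ ≤ dist x w + dist w c₂ := dist_triangle _ _ _
      _ ≤ 2*ε + dist w c₂ := by linarith
      _ < r₂ := by simp only [hεdef]; linarith
  obtain ⟨M, hM⟩ := ((isCompact_closedBall z (2*ρ)).prod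
    (isCompact_closedBall w (2*ε))).exists_bound_of_continuousOn
    (hφ.continuousOn.mono (by
      intro p hp
      exact ⟨hρsub hp.1, hεsub hp.2⟩))
  have key := hasDerivAt_pdz_param (φ := fun z' w' => pdz φ z' w') (z := z) (w₁ := w)
    (Cb := M / ρ / ε) hρ hε
    (fun w' hw' => (pdz_zdiff hφ (hεsub (by
      simp only [mem_closedBall]
      have := mem_ball.1 hw'
      linarith [this.le]))).mono hρsub1)
    (fun ζ hζ w' hw' => by
      show HasDerivAt (fun v => pdz φ ζ v) (deriv (fun v => pdz φ ζ v) w') w'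
      exact ((hasDerivAt_pdz_w hφ (hρsub1 (sphere_subset_closedBall hζ)) (hεsub (by
        simp only [mem_closedBall]
        have := mem_ball.1 hw'
        linarith [this.le]))).differentiableAt).hasDerivAt)
    (fun ζ hζ w' hw' => by
      show ‖deriv (fun v => pdz φ ζ v) w'‖ ≤ M / ρ / ε
      have hw'mem : ∀ x ∈ closedBall w' ε, x ∈ ball c₂ r₂ := by
        intro x hx
        apply hεsub
        simp only [mem_closedBall] at hx ⊢
        have := (mem_ball.1 hw').le
        calc dist x w ≤ dist x w' + dist w' w := dist_triangle _ _ _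
          _ ≤ 2*ε := by linarith
      apply norm_deriv_le_sphere hε
      · intro x hx
        exact ((hasDerivAt_pdz_w hφ (hρsub1 (sphere_subset_closedBall hζ))
          (hw'mem x hx)).differentiableAt).differentiableWithinAt
      · intro ω hω
        -- ‖pdz φ ζ ω‖ ≤ M / ρ by a Cauchy estimate in z
        show ‖pdz φ ζ ω‖ ≤ M / ρ
        have hωmem : ω ∈ ball c₂ r₂ := hw'mem ω (sphere_subset_closedBall hω)
        apply norm_deriv_le_sphere hρ
        · apply (zslice hφ hωmem).mono
          intro x hx
          apply hρsub
          simp only [mem_closedBall] at hx ⊢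
          have hζd : dist ζ z = ρ := mem_sphere.1 hζ
          calc dist x z ≤ dist x ζ + dist ζ z := dist_triangle _ _ _
            _ ≤ 2*ρ := by linarith
        · intro ξ hξ
          apply hM (ξ, ω)
          constructor
          · simp only [mem_closedBall]
            have h1 : dist ξ ζ = ρ := mem_sphere.1 hξ
            have hζd : dist ζ z = ρ := mem_sphere.1 hζ
            calc dist ξ z ≤ dist ξ ζ + dist ζ z := dist_triangle _ _ _
              _ ≤ 2*ρ := by linarith
          · simp only [mem_closedBall]
            have h2 : dist ω w' = ε := mem_sphere.1 hω
            have := (mem_ball.1 hw').le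
            calc dist ω w ≤ dist ω w' + dist w' w := dist_triangle _ _ _
              _ ≤ 2*ε := by linarith)
  exact key.differentiableAt

end main2var

/-- Solutions of the linear ODE `s' = c·s` vanishing at one point of a convex open set vanish
identically. -/
lemma eq_zero_of_linear_ode {U : Set ℂ} (hU : Convex ℝ U) (hUo : IsOpen U) {z₀ : ℂ}
    (hz₀ : z₀ ∈ U) {s cf : ℂ → ℂ} (hs0 : s z₀ = 0)
    (hder : ∀ z ∈ U, HasDerivAt s (cf z * s z) z)
    (hc : ContinuousOn cf U) : ∀ z ∈ U, s z = 0 := by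
  intro z hzU
  set e : ℂ := z - z₀ with he
  set γ : ℝ → ℂ := fun t => z₀ + t • e with hγ
  have hγcont : Continuous γ := by
    apply continuous_const.add (continuous_id.smul continuous_const)
  have hγmem : ∀ t ∈ Icc (0:ℝ) 1, γ t ∈ U := by
    intro t ht
    have := hU hz₀ hzU (by linarith [ht.1, ht.2] : (0:ℝ) ≤ 1 - t) ht.1 (by ring)
    convert this using 1
    simp only [hγ, he, smul_sub]
    module
  set clamp : ℝ → ℝ := fun t => max 0 (min 1 t) with hclamp
  have hclampcont : Continuous clamp := continuous_const.max (continuous_const.min continuous_id)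
  have hclampmem : ∀ t, clamp t ∈ Icc (0:ℝ) 1 := by
    intro t
    constructor
    · exact le_max_left _ _
    · simp only [hclamp]
      exact max_le (by norm_num) (min_le_left _ _)
  have hclampeq : ∀ t ∈ Ico (0:ℝ) 1, clamp t = t := by
    intro t ht
    simp only [hclamp]
    rw [min_eq_right ht.2.le, max_eq_right ht.1]
  set cc : ℝ → ℂ := fun t => e * cf (γ (clamp t)) with hcc
  have hcccont : Continuous cc := by
    apply continuous_const.mul
    rw [continuous_iff_continuousAt]
    intro t
    show ContinuousAt (cf ∘ (γ ∘ clamp)) t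
    exact ContinuousAt.comp (g := cf) (f := γ ∘ clamp) (x := t)
      (hc.continuousAt (hUo.mem_nhds (hγmem _ (hclampmem t))))
      ((hγcont.comp hclampcont).continuousAt)
  obtain ⟨Kb, hKb⟩ := (isCompact_Icc (a := (0:ℝ)) (b := 1)).exists_bound_of_continuousOn
    hcccont.continuousOn
  set K : NNReal := ⟨max Kb 0, le_max_right _ _⟩ with hK
  have hccbound : ∀ t : ℝ, ‖cc t‖ ≤ K := by
    intro t
    have h1 : cc t = cc (clamp t) := by
      simp only [hcc]
      congr 2
      have h2 := hclampmem t
      simp only [hclamp]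
      rw [min_eq_right h2.2, max_eq_right h2.1]
    rw [h1]
    exact le_trans (hKb _ (hclampmem t)) (le_max_left _ _)
  set v : ℝ → ℂ → ℂ := fun t x => cc t * x with hv
  have hlip : ∀ t : ℝ, LipschitzOnWith K (v t) univ := by
    intro t
    apply LipschitzWith.lipschitzOnWith
    apply LipschitzWith.of_dist_le_mul
    intro x y
    simp only [hv, dist_eq_norm, ← mul_sub, norm_mul]
    exact mul_le_mul_of_nonneg_right (hccbound t) (norm_nonneg _)
  set y : ℝ → ℂ := fun t => s (γ t) with hy
  have hγderiv : ∀ t : ℝ, HasDerivAt γ e t := by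
    intro t
    have := ((hasDerivAt_id t).smul_const e).const_add z₀
    simp only [one_smul] at this
    exact this
  have hyd : ∀ t ∈ Ico (0:ℝ) 1, HasDerivAt y (v t (y t)) t := by
    intro t ht
    have h1 := (hder (γ t) (hγmem t (Ico_subset_Icc_self ht))).scomp t (hγderiv t)
    have h2 : v t (y t) = e • (cf (γ t) * s (γ t)) := by
      simp only [hv, hy, hcc, hclampeq t ht, smul_eq_mul]
      ring
    rw [h2]
    exact h1
  have key := ODE_solution_unique_of_mem_Icc_right (v := v) (s := fun _ => (univ : Set ℂ))
    (K := K) (f := y) (g := fun _ => 0) (a := 0) (b := 1) (fun t _ => hlip t)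
    (by
      intro t ht
      exact ((hder (γ t) (hγmem t ht)).continuousAt.comp
        hγcont.continuousAt).continuousWithinAt)
    (fun t ht => (hyd t ht).hasDerivWithinAt)
    (fun t _ => mem_univ _)
    continuousOn_const
    (by
      intro t ht
      have h0 : v t ((fun _ => (0:ℂ)) t) = 0 := by simp [hv]
      rw [h0]
      exact (hasDerivAt_const t (0:ℂ)).hasDerivWithinAt)
    (fun t _ => mem_univ _)
    (by simp [hy, hγ, hs0])
  have h1 := key (right_mem_Icc.2 zero_le_one)
  simpa [hy, hγ, he] using h1

lemma const_of_hasDerivAt_zero {U : Set ℂ} (hU : Convex ℝ U) (hUo : IsOpen U) {z₀ : ℂ}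
    (hz₀ : z₀ ∈ U) {F : ℂ → ℂ} (hF : ∀ z ∈ U, HasDerivAt F 0 z) :
    ∀ z ∈ U, F z = F z₀ := by
  intro z hz
  have key := eq_zero_of_linear_ode hU hUo hz₀ (s := fun z => F z - F z₀) (cf := fun _ => 0)
    (by ring) (fun x hx => by simpa using (hF x hx).sub_const (F z₀)) continuousOn_const z hz
  have h2 : F z - F z₀ = 0 := key
  exact sub_eq_zero.1 h2

theorem main_per_w
    (c₁ c₂ : ℂ) (r₁ r₂ : ℝ) (hr₁ : 0 < r₁) (hr₂ : 0 < r₂)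
    (f g : ℂ → ℂ → ℂ)
    (hf : DifferentiableOn ℂ (fun p : ℂ × ℂ => f p.1 p.2)
      (Metric.ball c₁ r₁ ×ˢ Metric.ball c₂ r₂))
    (hg : DifferentiableOn ℂ (fun p : ℂ × ℂ => g p.1 p.2)
      (Metric.ball c₁ r₁ ×ˢ Metric.ball c₂ r₂))
    (hfz : ∀ z ∈ Metric.ball c₁ r₁, ∀ w ∈ Metric.ball c₂ r₂, pdz f z w ≠ 0)
    (hJac : ∀ z ∈ Metric.ball c₁ r₁, ∀ w ∈ Metric.ball c₂ r₂,
      pdw f z w * pdz g z w - pdw g z w * pdz f z w ≠ 0)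
    (hI0 : ∀ z ∈ Metric.ball c₁ r₁, ∀ w ∈ Metric.ball c₂ r₂,
      pdz f z w * pdzz g z w - pdz g z w * pdzz f z w = 0)
    (hI1 : ∀ z ∈ Metric.ball c₁ r₁, ∀ w ∈ Metric.ball c₂ r₂,
      pdw f z w * pdzz g z w - pdw g z w * pdzz f z w
        + 2 * pdz f z w * pdzw g z w - 2 * pdz g z w * pdzw f z w = 0)
    (z₀ : ℂ) (hz₀ : z₀ ∈ Metric.ball c₁ r₁) (w : ℂ) (hw : w ∈ Metric.ball c₂ r₂) :
    ∀ z ∈ Metric.ball c₁ r₁,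
      (1 - (pdzz f z₀ w / (2 * pdz f z₀ w)) * (z - z₀)) ≠ 0 ∧
      f z w = f z₀ w + pdz f z₀ w * (z - z₀) / (1 - (pdzz f z₀ w / (2 * pdz f z₀ w)) * (z - z₀)) ∧
      g z w = (pdz g z₀ w / pdz f z₀ w) * f z w
        + (g z₀ w - (pdz g z₀ w / pdz f z₀ w) * f z₀ w) := by
  set E₁ := Metric.ball c₁ r₁ with hE₁
  set E₂ := Metric.ball c₂ r₂ with hE₂
  set h : ℂ → ℂ := fun w' => pdz g z₀ w' / pdz f z₀ w' with hh
  -- W1 : pdz g = h · pdz f  (for every w' ∈ E₂)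
  have W1 : ∀ w' ∈ E₂, ∀ z ∈ E₁, pdz g z w' = h w' * pdz f z w' := by
    intro w' hw'
    set q : ℂ → ℂ := fun z => pdz g z w' / pdz f z w' with hq
    have hqd : ∀ z ∈ E₁, HasDerivAt q 0 z := by
      intro z hz
      have hd := (hasDerivAt_zz hg hz hw').div (hasDerivAt_zz hf hz hw') (hfz z hz w' hw')
      have : (pdzz g z w' * pdz f z w' - pdz g z w' * pdzz f z w') / (pdz f z w') ^ 2 = 0 := by
        rw [div_eq_zero_iff]
        left
        linear_combination hI0 z hz w' hw'
      rwa [this] at hd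
    intro z hz
    have hqc := const_of_hasDerivAt_zero (convex_ball c₁ r₁) isOpen_ball hz₀ hqd z hz
    have : q z * pdz f z w' = q z₀ * pdz f z w' := by rw [hqc]
    rwa [hq, div_mul_cancel₀ _ (hfz z hz w' hw')] at this
  -- W2 : pdzz g = h · pdzz f
  have W2 : ∀ w' ∈ E₂, ∀ z ∈ E₁, pdzz g z w' = h w' * pdzz f z w' := by
    intro w' hw' z hz
    have h2 : HasDerivAt (fun z' => h w' * pdz f z' w') (h w' * pdzz f z w') z :=
      (hasDerivAt_zz hf hz hw').const_mul _
    have h1 : HasDerivAt (fun z' => pdz g z' w') (h w' * pdzz f z w') z := by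
      apply h2.congr_of_eventuallyEq
      filter_upwards [isOpen_ball.mem_nhds hz] with x hx using W1 w' hw' x hx
    exact h1.deriv
  -- h is differentiable at w
  have hhd : HasDerivAt h (deriv h w) w := by
    apply DifferentiableAt.hasDerivAt
    exact ((hasDerivAt_pdz_w hg hz₀ hw).differentiableAt).div
      ((hasDerivAt_pdz_w hf hz₀ hw).differentiableAt) (hfz z₀ hz₀ w hw)
  -- W4 : pdzw g = h' · pdz f + h · pdzw f
  have W4 : ∀ z ∈ E₁, pdzw g z w = deriv h w * pdz f z w + h w * pdzw f z w := by
    intro z hz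
    have h2 : HasDerivAt (fun w' => h w' * pdz f z w')
        (deriv h w * pdz f z w + h w * pdzw f z w) w :=
      hhd.mul (hasDerivAt_pdz_w hf hz hw)
    have h3 : HasDerivAt (fun w' => pdz g z w')
        (deriv h w * pdz f z w + h w * pdzw f z w) w := by
      apply h2.congr_of_eventuallyEq
      filter_upwards [isOpen_ball.mem_nhds hw] with x hx using W1 x hx z hz
    exact h3.deriv
  -- P and its properties
  set P : ℂ → ℂ := fun z => h w * pdw f z w - pdw g z w with hP
  have W5 : ∀ z ∈ E₁, P z ≠ 0 := by
    intro z hz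
    have hJ := hJac z hz w hw
    have hfac : pdw f z w * pdz g z w - pdw g z w * pdz f z w = pdz f z w * P z := by
      rw [hP, W1 w hw z hz]
      ring
    rw [hfac] at hJ
    exact fun hcon => hJ (by rw [hcon, mul_zero])
  have W6 : ∀ z ∈ E₁, HasDerivAt P (-(deriv h w) * pdz f z w) z := by
    intro z hz
    have h1 : HasDerivAt (fun z' => h w * pdw f z' w - pdw g z' w)
        (h w * pdzw f z w - pdzw g z w) z :=
      ((hasDerivAt_pdw_z hf hz hw).const_mul (h w)).sub (hasDerivAt_pdw_z hg hz hw)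
    have h2 : h w * pdzw f z w - pdzw g z w = -(deriv h w) * pdz f z w := by
      rw [W4 z hz]
      ring
    rw [h2] at h1
    exact h1
  have W7 : ∀ z ∈ E₁, pdzz f z w * P z = -2 * deriv h w * (pdz f z w)^2 := by
    intro z hz
    have h0 := hI1 z hz w hw
    rw [W2 w hw z hz, W4 z hz, W1 w hw z hz] at h0
    rw [hP]
    linear_combination h0
  -- the Riccati equation for u = f_zz / f_z
  set u : ℂ → ℂ := fun z => pdzz f z w / pdz f z w with hu
  have W8a : ∀ z ∈ E₁, u z = -2 * deriv h w * pdz f z w / P z := by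
    intro z hz
    rw [hu]
    rw [div_eq_div_iff (hfz z hz w hw) (W5 z hz)]
    linear_combination W7 z hz
  have W8 : ∀ z ∈ E₁, HasDerivAt u (u z ^ 2 / 2) z := by
    intro z hz
    have hnum : HasDerivAt (fun z' => -2 * deriv h w * pdz f z' w)
        (-2 * deriv h w * pdzz f z w) z := (hasDerivAt_zz hf hz hw).const_mul _
    have hR : HasDerivAt (fun z' => -2 * deriv h w * pdz f z' w / P z')
        ((-2 * deriv h w * pdzz f z w * P z -
          -2 * deriv h w * pdz f z w * (-(deriv h w) * pdz f z w)) / P z ^ 2) z :=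
      hnum.div (W6 z hz) (W5 z hz)
    have heq : HasDerivAt u
        ((-2 * deriv h w * pdzz f z w * P z -
          -2 * deriv h w * pdz f z w * (-(deriv h w) * pdz f z w)) / P z ^ 2) z := by
      apply hR.congr_of_eventuallyEq
      filter_upwards [isOpen_ball.mem_nhds hz] with x hx using W8a x hx
    convert heq using 1
    have hPne := W5 z hz
    have hP2 : P z ^ 2 ≠ 0 := pow_ne_zero _ hPne
    rw [W8a z hz, div_pow, div_div, div_eq_div_iff (mul_ne_zero hP2 two_ne_zero) hP2]
    linear_combination (4 * deriv h w * P z ^ 2) * W7 z hz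
  -- continuity of u/2 on E₁
  have hucont : ContinuousOn (fun z => u z / 2) E₁ := by
    intro z hz
    exact ((W8 z hz).continuousAt.continuousWithinAt).div_const 2
  -- the function s vanishes identically
  set k0 : ℂ := pdzz f z₀ w / (2 * pdz f z₀ w) with hk0
  set den : ℂ → ℂ := fun z => 1 - k0 * (z - z₀) with hden
  set sfn : ℂ → ℂ := fun z => u z * den z - 2 * k0 with hsfn
  have hBne := hfz z₀ hz₀ w hw
  have hs0 : sfn z₀ = 0 := by
    rw [hsfn]
    simp only [hden, hu, hk0]
    field_simp
    ring
  have hdend : ∀ z : ℂ, HasDerivAt den (-k0) z := by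
    intro z
    have h1 : HasDerivAt (fun z' : ℂ => k0 * (z' - z₀)) k0 z := by
      simpa using ((hasDerivAt_id z).sub_const z₀).const_mul k0
    simpa using h1.const_sub 1
  have hsder : ∀ z ∈ E₁, HasDerivAt sfn (u z / 2 * sfn z) z := by
    intro z hz
    have h1 := ((W8 z hz).mul (hdend z)).sub_const (2 * k0)
    have h2 : u z ^ 2 / 2 * den z + u z * -k0 = u z / 2 * sfn z := by
      simp only [hsfn]
      ring
    rw [h2] at h1
    exact h1
  have hszero : ∀ z ∈ E₁, sfn z = 0 :=
    eq_zero_of_linear_ode (convex_ball c₁ r₁) isOpen_ball hz₀ hs0 hsder hucont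
  -- the denominator does not vanish on E₁
  have hdenne : ∀ z ∈ E₁, den z ≠ 0 := by
    intro z hz hcon
    have h1 : u z * den z - 2 * k0 = 0 := hszero z hz
    rw [hcon, mul_zero, zero_sub, neg_eq_zero] at h1
    have hk00 : k0 = 0 := by
      rcases mul_eq_zero.1 h1 with h' | h'
      · norm_num at h'
      · exact h'
    have hcon2 : (1 : ℂ) - k0 * (z - z₀) = 0 := hcon
    rw [hk00, zero_mul, sub_zero] at hcon2
    exact one_ne_zero hcon2
  -- pdzz f * den = 2 k0 * pdz f
  have hkey : ∀ z ∈ E₁, pdzz f z w * den z = 2 * k0 * pdz f z w := by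
    intro z hz
    have h1 : pdzz f z w / pdz f z w * den z - 2 * k0 = 0 := hszero z hz
    rw [sub_eq_zero] at h1
    have h2 : pdzz f z w / pdz f z w * den z * pdz f z w = 2 * k0 * pdz f z w := by
      rw [h1]
    rw [div_mul_eq_mul_div, div_mul_eq_mul_div, mul_div_assoc,
      div_self (hfz z hz w hw), mul_one] at h2
    linear_combination h2
  -- τ = pdz f · den² is constant equal to B
  set τ : ℂ → ℂ := fun z => pdz f z w * den z ^ 2 with hτ
  have hτd : ∀ z ∈ E₁, HasDerivAt τ 0 z := by
    intro z hz
    have hd2 : HasDerivAt (fun z' => den z' ^ 2) (2 * den z * -k0) z := by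
      have := (hdend z).pow 2
      exact this.congr_deriv (by norm_num)
    have h1 := (hasDerivAt_zz hf hz hw).mul hd2
    refine h1.congr_deriv ?_
    linear_combination (den z) * hkey z hz
  have hτconst : ∀ z ∈ E₁, τ z = pdz f z₀ w := by
    intro z hz
    have h1 := const_of_hasDerivAt_zero (convex_ball c₁ r₁) isOpen_ball hz₀ hτd z hz
    rw [h1, hτ]
    simp [hden]
  -- ψ ≡ 0 : the formula for f
  have hfform : ∀ z ∈ E₁, f z w = f z₀ w + pdz f z₀ w * (z - z₀) / den z := by
    have hψd : ∀ z ∈ E₁, HasDerivAt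
        (fun z' => f z' w - f z₀ w - pdz f z₀ w * (z' - z₀) / den z') 0 z := by
      intro z hz
      have hnum : HasDerivAt (fun z' => pdz f z₀ w * (z' - z₀)) (pdz f z₀ w) z := by
        simpa using ((hasDerivAt_id z).sub_const z₀).const_mul (pdz f z₀ w)
      have hq2 : HasDerivAt (fun z' => pdz f z₀ w * (z' - z₀) / den z')
          ((pdz f z₀ w * den z - pdz f z₀ w * (z - z₀) * -k0) / den z ^ 2) z :=
        hnum.div (hdend z) (hdenne z hz)
      have h1 := ((hasDerivAt_z hf hz hw).sub_const (f z₀ w)).sub hq2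
      have hd2 : den z ^ 2 ≠ 0 := pow_ne_zero _ (hdenne z hz)
      have hexpr : (pdz f z₀ w * den z - pdz f z₀ w * (z - z₀) * -k0) / den z ^ 2
          = pdz f z w := by
        rw [div_eq_iff hd2]
        have hdz : den z = 1 - k0 * (z - z₀) := rfl
        have hτz : pdz f z w * den z ^ 2 = pdz f z₀ w := hτconst z hz
        linear_combination (pdz f z₀ w) * hdz - hτz
      rw [hexpr] at h1
      rw [sub_self] at h1
      exact h1
    intro z hz
    have h1 : f z w - f z₀ w - pdz f z₀ w * (z - z₀) / den z
        = f z₀ w - f z₀ w - pdz f z₀ w * (z₀ - z₀) / den z₀ :=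
      const_of_hasDerivAt_zero (convex_ball c₁ r₁) isOpen_ball hz₀ hψd z hz
    have h2 : f z₀ w - f z₀ w - pdz f z₀ w * (z₀ - z₀) / den z₀ = 0 := by simp
    linear_combination h1.trans h2
  -- g = h f + c
  have hgform : ∀ z ∈ E₁, g z w = h w * f z w + (g z₀ w - h w * f z₀ w) := by
    have hχd : ∀ z ∈ E₁, HasDerivAt (fun z' => g z' w - h w * f z' w) 0 z := by
      intro z hz
      have h1 := (hasDerivAt_z hg hz hw).sub ((hasDerivAt_z hf hz hw).const_mul (h w))
      refine h1.congr_deriv ?_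
      rw [W1 w hw z hz]
      ring
    intro z hz
    have h1 := const_of_hasDerivAt_zero (convex_ball c₁ r₁) isOpen_ball hz₀ hχd z hz
    have h2 : g z w - h w * f z w = g z₀ w - h w * f z₀ w := h1
    linear_combination h2
  -- conclusion
  intro z hz
  refine ⟨hdenne z hz, hfform z hz, ?_⟩
  rw [hgform z hz, hh]

/-- **Vanishing of `I₀` and `I₁` forces the map `(f,g)` to be linear-fractional in `z`.**
Let `f, g` be holomorphic on a product of discs `D₁ × D₂` with `f_z ≠ 0`, nonvanishing
Jacobian `f_w·g_z − g_w·f_z ≠ 0`, and suppose `f_z·g_zz − g_z·f_zz = 0` and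
`f_w·g_zz − g_w·f_zz + 2f_z·g_zw − 2g_z·f_zw = 0` everywhere. Then near every point of
`D₁ × D₂` both `f` and `g` are linear-fractional in `z` with holomorphic-in-`w`
coefficients and a common denominator. -/
theorem linear_fractional_in_z_of_I0_I1_vanishing
    (c₁ c₂ : ℂ) (r₁ r₂ : ℝ) (hr₁ : 0 < r₁) (hr₂ : 0 < r₂)
    (f g : ℂ → ℂ → ℂ)
    (hf : DifferentiableOn ℂ (fun p : ℂ × ℂ => f p.1 p.2)
      (Metric.ball c₁ r₁ ×ˢ Metric.ball c₂ r₂))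
    (hg : DifferentiableOn ℂ (fun p : ℂ × ℂ => g p.1 p.2)
      (Metric.ball c₁ r₁ ×ˢ Metric.ball c₂ r₂))
    (hfz : ∀ z ∈ Metric.ball c₁ r₁, ∀ w ∈ Metric.ball c₂ r₂, pdz f z w ≠ 0)
    (hJac : ∀ z ∈ Metric.ball c₁ r₁, ∀ w ∈ Metric.ball c₂ r₂,
      pdw f z w * pdz g z w - pdw g z w * pdz f z w ≠ 0)
    (hI0 : ∀ z ∈ Metric.ball c₁ r₁, ∀ w ∈ Metric.ball c₂ r₂,
      pdz f z w * pdzz g z w - pdz g z w * pdzz f z w = 0)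
    (hI1 : ∀ z ∈ Metric.ball c₁ r₁, ∀ w ∈ Metric.ball c₂ r₂,
      pdw f z w * pdzz g z w - pdw g z w * pdzz f z w
        + 2 * pdz f z w * pdzw g z w - 2 * pdz g z w * pdzw f z w = 0) :
    ∀ z₀ ∈ Metric.ball c₁ r₁, ∀ w₀ ∈ Metric.ball c₂ r₂,
      ∃ ρ₁ ρ₂ : ℝ, 0 < ρ₁ ∧ 0 < ρ₂ ∧
        Metric.ball z₀ ρ₁ ⊆ Metric.ball c₁ r₁ ∧
        Metric.ball w₀ ρ₂ ⊆ Metric.ball c₂ r₂ ∧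
        ∃ α₀ α₁ α₂ β₀ β₁ β₂ : ℂ → ℂ,
          DifferentiableOn ℂ α₀ (Metric.ball w₀ ρ₂) ∧
          DifferentiableOn ℂ α₁ (Metric.ball w₀ ρ₂) ∧
          DifferentiableOn ℂ α₂ (Metric.ball w₀ ρ₂) ∧
          DifferentiableOn ℂ β₀ (Metric.ball w₀ ρ₂) ∧
          DifferentiableOn ℂ β₁ (Metric.ball w₀ ρ₂) ∧
          DifferentiableOn ℂ β₂ (Metric.ball w₀ ρ₂) ∧
          ∀ z ∈ Metric.ball z₀ ρ₁, ∀ w ∈ Metric.ball w₀ ρ₂,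
            α₀ w * z + β₀ w ≠ 0 ∧
            f z w = (α₁ w * z + β₁ w) / (α₀ w * z + β₀ w) ∧
            g z w = (α₂ w * z + β₂ w) / (α₀ w * z + β₀ w) := by
  intro z₀ hz₀ w₀ hw₀
  have hd₁ : dist z₀ c₁ < r₁ := mem_ball.1 hz₀
  have hd₂ : dist w₀ c₂ < r₂ := mem_ball.1 hw₀
  have hsub₁ : Metric.ball z₀ (r₁ - dist z₀ c₁) ⊆ Metric.ball c₁ r₁ :=
    ball_subset_ball' (by linarith)
  have hsub₂ : Metric.ball w₀ (r₂ - dist w₀ c₂) ⊆ Metric.ball c₂ r₂ :=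
    ball_subset_ball' (by linarith)
  refine ⟨r₁ - dist z₀ c₁, r₂ - dist w₀ c₂, by linarith, by linarith, hsub₁, hsub₂, ?_⟩
  -- coefficient building blocks
  set k : ℂ → ℂ := fun w => pdzz f z₀ w / (2 * pdz f z₀ w) with hk
  set h : ℂ → ℂ := fun w => pdz g z₀ w / pdz f z₀ w with hh
  set cc : ℂ → ℂ := fun w => g z₀ w - h w * f z₀ w with hcc
  have hA : DifferentiableOn ℂ (fun w => f z₀ w) (Metric.ball c₂ r₂) := wslice hf hz₀
  have hB : DifferentiableOn ℂ (fun w => pdz f z₀ w) (Metric.ball c₂ r₂) := fun w hw =>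
    ((hasDerivAt_pdz_w hf hz₀ hw).differentiableAt).differentiableWithinAt
  have hC : DifferentiableOn ℂ (fun w => pdzz f z₀ w) (Metric.ball c₂ r₂) := fun w hw =>
    (hasDerivAt_pdzz_w hf hz₀ hw).differentiableWithinAt
  have hG0 : DifferentiableOn ℂ (fun w => g z₀ w) (Metric.ball c₂ r₂) := wslice hg hz₀
  have hGz : DifferentiableOn ℂ (fun w => pdz g z₀ w) (Metric.ball c₂ r₂) := fun w hw =>
    ((hasDerivAt_pdz_w hg hz₀ hw).differentiableAt).differentiableWithinAt
  have hBnea : ∀ w ∈ Metric.ball c₂ r₂, pdz f z₀ w ≠ 0 := fun w hw => hfz z₀ hz₀ w hw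
  have hkd : DifferentiableOn ℂ k (Metric.ball c₂ r₂) := by
    rw [hk]
    exact hC.div ((differentiableOn_const 2).mul hB)
      (fun w hw => mul_ne_zero two_ne_zero (hBnea w hw))
  have hhd : DifferentiableOn ℂ h (Metric.ball c₂ r₂) := by
    rw [hh]
    exact hGz.div hB hBnea
  have hccd : DifferentiableOn ℂ cc (Metric.ball c₂ r₂) := by
    rw [hcc]
    exact hG0.sub (hhd.mul hA)
  have hden0 : DifferentiableOn ℂ (fun w => 1 + k w * z₀) (Metric.ball c₂ r₂) :=
    (differentiableOn_const 1).add (hkd.mul_const z₀)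
  have hnum1 : DifferentiableOn ℂ (fun w => pdz f z₀ w - f z₀ w * k w)
      (Metric.ball c₂ r₂) := hB.sub (hA.mul hkd)
  have hnum1' : DifferentiableOn ℂ (fun w => f z₀ w * (1 + k w * z₀) - pdz f z₀ w * z₀)
      (Metric.ball c₂ r₂) := (hA.mul hden0).sub (hB.mul_const z₀)
  refine ⟨fun w => -(k w), fun w => pdz f z₀ w - f z₀ w * k w,
    fun w => h w * (pdz f z₀ w - f z₀ w * k w) + cc w * (-(k w)),
    fun w => 1 + k w * z₀,
    fun w => f z₀ w * (1 + k w * z₀) - pdz f z₀ w * z₀,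
    fun w => h w * (f z₀ w * (1 + k w * z₀) - pdz f z₀ w * z₀) + cc w * (1 + k w * z₀),
    ?_, ?_, ?_, ?_, ?_, ?_, ?_⟩
  case _ => exact (hkd.mono hsub₂).neg
  case _ => exact hnum1.mono hsub₂
  case _ => exact ((hhd.mul hnum1).add (hccd.mul hkd.neg)).mono hsub₂
  case _ => exact hden0.mono hsub₂
  case _ => exact hnum1'.mono hsub₂
  case _ => exact ((hhd.mul hnum1').add (hccd.mul hden0)).mono hsub₂
  case _ =>
    intro z hz w hw
    have hzE : z ∈ Metric.ball c₁ r₁ := hsub₁ hz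
    have hwE : w ∈ Metric.ball c₂ r₂ := hsub₂ hw
    obtain ⟨hden, hfe, hge⟩ := main_per_w c₁ c₂ r₁ r₂ hr₁ hr₂ f g hf hg hfz hJac hI0 hI1
      z₀ hz₀ w hwE z hzE
    have hBne : pdz f z₀ w ≠ 0 := hfz z₀ hz₀ w hwE
    have hdeq : -(k w) * z + (1 + k w * z₀) = 1 - k w * (z - z₀) := by ring
    have hdenk : 1 - k w * (z - z₀) ≠ 0 := hden
    have hfek : f z w = f z₀ w + pdz f z₀ w * (z - z₀) / (1 - k w * (z - z₀)) := hfe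
    have hgek : g z w = h w * f z w + cc w := hge
    refine ⟨?_, ?_, ?_⟩
    · rw [hdeq]
      exact hdenk
    · rw [hdeq, hfek]
      have hinv : (1 - k w * (z - z₀)) * (1 - k w * (z - z₀))⁻¹ = 1 := mul_inv_cancel₀ hdenk
      rw [eq_div_iff hdenk]
      linear_combination (pdz f z₀ w * (z - z₀)) * hinv
    · rw [hdeq, hgek, hfek]
      have hinv : (1 - k w * (z - z₀)) * (1 - k w * (z - z₀))⁻¹ = 1 := mul_inv_cancel₀ hdenk
      rw [eq_div_iff hdenk]
      linear_combination (h w * pdz f z₀ w * (z - z₀)) * hinv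
end

section
/- Let ε > 0 and let α, a, δ be holomorphic functions on the punctured disc {w ∈ ℂ : 0 < |w| < ε} such that W := α'·a − a'·α is not identically zero. Suppose there exist r, ε' > 0 and holomorphic functions P̃, Q̃ on the full polydisc {(z,w) : |z| < r, |w| < ε'} such that P̃(z,w) = a(w)·(z + δ(w))/W(w) and Q̃(z,w) = α(w)·(z + δ(w))/W(w) whenever |z| < r and 0 < |w| < ε'. Then α, a, and δ each extend meromorphically across w = 0. -/
/-- `f`, holomorphic on a punctured disc around `0`, extends meromorphically across `0`:
`f(w) = wⁿ·v(w)` for some integer `n` and some holomorphic `v` on a full disc around `0`. -/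
def ExtendsMeromorphically (f : ℂ → ℂ) : Prop :=
  ∃ ρ : ℝ, 0 < ρ ∧ ∃ n : ℤ, ∃ v : ℂ → ℂ,
    DifferentiableOn ℂ v {w : ℂ | ‖w‖ < ρ} ∧
    ∀ w : ℂ, 0 < ‖w‖ → ‖w‖ < ρ → f w = w ^ n * v w

/-- **Holomorphic extendability of the pulled-back vector fields forces meromorphy of the
coefficients.** Let `α, a, δ` be holomorphic on the punctured disc `{0 < |w| < ε}` with
`W = α'a − a'α` not identically zero. If the functions `a(w)(z + δ(w))/W(w)` and
`α(w)(z + δ(w))/W(w)` agree, for `|z| < r` and `0 < |w| < ε'`, with functions `P̃, Q̃`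
holomorphic on the full polydisc `{|z| < r} × {|w| < ε'}`, then `α`, `a`, and `δ` all extend
meromorphically across `w = 0`. -/
theorem coefficients_extend_meromorphically
    (ε : ℝ) (hε : 0 < ε) (α a δ : ℂ → ℂ)
    (hα : DifferentiableOn ℂ α {w : ℂ | 0 < ‖w‖ ∧ ‖w‖ < ε})
    (ha : DifferentiableOn ℂ a {w : ℂ | 0 < ‖w‖ ∧ ‖w‖ < ε})
    (hδ : DifferentiableOn ℂ δ {w : ℂ | 0 < ‖w‖ ∧ ‖w‖ < ε})
    (hW : ∃ w : ℂ, 0 < ‖w‖ ∧ ‖w‖ < ε ∧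
      deriv α w * a w - deriv a w * α w ≠ 0)
    (hext : ∃ r ε' : ℝ, 0 < r ∧ 0 < ε' ∧ ∃ Pt Qt : ℂ × ℂ → ℂ,
      DifferentiableOn ℂ Pt {p : ℂ × ℂ | ‖p.1‖ < r ∧ ‖p.2‖ < ε'} ∧
      DifferentiableOn ℂ Qt {p : ℂ × ℂ | ‖p.1‖ < r ∧ ‖p.2‖ < ε'} ∧
      ∀ z w : ℂ, ‖z‖ < r → 0 < ‖w‖ → ‖w‖ < ε' →
        Pt (z, w) = a w * (z + δ w) / (deriv α w * a w - deriv a w * α w) ∧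
        Qt (z, w) = α w * (z + δ w) / (deriv α w * a w - deriv a w * α w)) :
    ExtendsMeromorphically α ∧ ExtendsMeromorphically a ∧ ExtendsMeromorphically δ := by
  classical
  obtain ⟨w₂, hw₂0, hw₂ε, hWw₂⟩ := hW
  obtain ⟨r, ε', hr, hε', Pt, Qt, hPt, hQt, heq⟩ := hext
  set W : ℂ → ℂ := fun w => deriv α w * a w - deriv a w * α w with hWdef
  have hWw : ∀ w, W w = deriv α w * a w - deriv a w * α w := fun _ => rfl
  set P : Set ℂ := {w : ℂ | 0 < ‖w‖ ∧ ‖w‖ < ε} with hPdef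
  set S : Set ℂ := {w : ℂ | ‖w‖ < ε'} with hSdef
  set ρ₀ : ℝ := min ε ε' with hρ₀def
  have hρ₀ : 0 < ρ₀ := lt_min hε hε'
  set P'' : Set ℂ := {w : ℂ | 0 < ‖w‖ ∧ ‖w‖ < ρ₀} with hP''def
  have hPopen : IsOpen P := by
    have : P = (fun w : ℂ => ‖w‖) ⁻¹' Set.Ioo 0 ε := rfl
    rw [this]; exact isOpen_Ioo.preimage continuous_norm
  have hSopen : IsOpen S := by
    have : S = (fun w : ℂ => ‖w‖) ⁻¹' Set.Iio ε' := rfl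
    rw [this]; exact isOpen_Iio.preimage continuous_norm
  have hP''open : IsOpen P'' := by
    have : P'' = (fun w : ℂ => ‖w‖) ⁻¹' Set.Ioo 0 ρ₀ := rfl
    rw [this]; exact isOpen_Ioo.preimage continuous_norm
  have hP''P : P'' ⊆ P := fun w hw => ⟨hw.1, lt_of_lt_of_le hw.2 (min_le_left _ _)⟩
  have hP''S : P'' ⊆ S := fun w hw => lt_of_lt_of_le hw.2 (min_le_right _ _)
  -- preconnectedness of the punctured disc
  have hPconn : IsPreconnected P := by
    have himg : P = Complex.exp '' {z : ℂ | z.re < Real.log ε} := by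
      ext w
      constructor
      · rintro ⟨hw0, hwε⟩
        have hwne : w ≠ 0 := by
          intro h; rw [h] at hw0; simp at hw0
        refine ⟨Complex.log w, ?_, Complex.exp_log hwne⟩
        simp only [Set.mem_setOf_eq, Complex.log_re]
        exact Real.log_lt_log hw0 hwε
      · rintro ⟨z, hz, rfl⟩
        refine ⟨norm_pos_iff.mpr (Complex.exp_ne_zero z), ?_⟩
        rw [Complex.norm_exp]
        calc Real.exp z.re < Real.exp (Real.log ε) := Real.exp_lt_exp.mpr hz
          _ = ε := Real.exp_log hε
    rw [himg]
    exact ((convex_halfSpace_re_lt _).isPreconnected).image _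
      Complex.continuous_exp.continuousOn
  -- analyticity
  have hαA : AnalyticOnNhd ℂ α P := hα.analyticOnNhd hPopen
  have haA : AnalyticOnNhd ℂ a P := ha.analyticOnNhd hPopen
  have hWA : AnalyticOnNhd ℂ W P := (hαA.deriv.mul haA).sub (haA.deriv.mul hαA)
  -- the auxiliary holomorphic functions on the full disc
  set z₀ : ℂ := ((r : ℝ) : ℂ) / 2 with hz₀def
  have hz₀abs : ‖z₀‖ = r / 2 := by
    rw [hz₀def]; rw [norm_div, Complex.norm_real, Complex.norm_two, Real.norm_eq_abs, abs_of_pos hr]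
  have hz₀r : ‖z₀‖ < r := by rw [hz₀abs]; linarith
  have hz₀ne : z₀ ≠ 0 := by
    intro h; rw [h] at hz₀abs; simp at hz₀abs; linarith
  have h0r : ‖(0 : ℂ)‖ < r := by simpa using hr
  set A : ℂ → ℂ := fun w => (Pt (z₀, w) - Pt (0, w)) / z₀ with hAdef
  set B : ℂ → ℂ := fun w => (Qt (z₀, w) - Qt (0, w)) / z₀ with hBdef
  set C : ℂ → ℂ := fun w => Pt (0, w) with hCdef
  have hpair : ∀ z : ℂ, ‖z‖ < r →
      DifferentiableOn ℂ (fun w => (z, w)) S ∧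
      Set.MapsTo (fun w => (z, w)) S {p : ℂ × ℂ | ‖p.1‖ < r ∧ ‖p.2‖ < ε'} :=
    fun z hz => ⟨(differentiableOn_const z).prodMk differentiableOn_id,
      fun w hw => ⟨hz, hw⟩⟩
  have hAd : DifferentiableOn ℂ A S := by
    exact ((hPt.comp (hpair z₀ hz₀r).1 (hpair z₀ hz₀r).2).sub
      (hPt.comp (hpair 0 h0r).1 (hpair 0 h0r).2)).div_const z₀
  have hBd : DifferentiableOn ℂ B S := by
    exact ((hQt.comp (hpair z₀ hz₀r).1 (hpair z₀ hz₀r).2).sub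
      (hQt.comp (hpair 0 h0r).1 (hpair 0 h0r).2)).div_const z₀
  have hCd : DifferentiableOn ℂ C S := hPt.comp (hpair 0 h0r).1 (hpair 0 h0r).2
  -- the identities on the punctured disc
  have hAeq : ∀ w ∈ P'', A w = a w / W w := by
    rintro w ⟨hw0, hwρ⟩
    have hwε' : ‖w‖ < ε' := lt_of_lt_of_le hwρ (min_le_right _ _)
    have h1 := (heq z₀ w hz₀r hw0 hwε').1
    have h2 := (heq 0 w h0r hw0 hwε').1
    show (Pt (z₀, w) - Pt (0, w)) / z₀ = a w / W w
    rw [hWw w, h1, h2, div_sub_div_same]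
    have h3 : a w * (z₀ + δ w) - a w * (0 + δ w) = a w * z₀ := by ring
    rw [h3, div_right_comm, mul_div_cancel_right₀ _ hz₀ne]
  have hBeq : ∀ w ∈ P'', B w = α w / W w := by
    rintro w ⟨hw0, hwρ⟩
    have hwε' : ‖w‖ < ε' := lt_of_lt_of_le hwρ (min_le_right _ _)
    have h1 := (heq z₀ w hz₀r hw0 hwε').2
    have h2 := (heq 0 w h0r hw0 hwε').2
    show (Qt (z₀, w) - Qt (0, w)) / z₀ = α w / W w
    rw [hWw w, h1, h2, div_sub_div_same]
    have h3 : α w * (z₀ + δ w) - α w * (0 + δ w) = α w * z₀ := by ring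
    rw [h3, div_right_comm, mul_div_cancel_right₀ _ hz₀ne]
  have hCeq : ∀ w ∈ P'', C w = A w * δ w := by
    rintro w hw
    obtain ⟨hw0, hwρ⟩ := hw
    have hwε' : ‖w‖ < ε' := lt_of_lt_of_le hwρ (min_le_right _ _)
    have h2 := (heq 0 w h0r hw0 hwε').1
    show Pt (0, w) = A w * δ w
    rw [h2, hAeq w ⟨hw0, hwρ⟩, hWw w]
    ring
  -- the holomorphic function E with E · W = 1
  set E : ℂ → ℂ := fun w => deriv B w * A w - deriv A w * B w with hEdef
  have hAA : AnalyticOnNhd ℂ A S := hAd.analyticOnNhd hSopen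
  have hBA : AnalyticOnNhd ℂ B S := hBd.analyticOnNhd hSopen
  have hEA : AnalyticOnNhd ℂ E S := (hBA.deriv.mul hAA).sub (hAA.deriv.mul hBA)
  have hEd : DifferentiableOn ℂ E S := hEA.differentiableOn
  have hEW : ∀ w ∈ P'', W w ≠ 0 → E w * W w = 1 := by
    intro w hw hWne
    have hwP : w ∈ P := hP''P hw
    have hda : DifferentiableAt ℂ a w := ha.differentiableAt (hPopen.mem_nhds hwP)
    have hdα : DifferentiableAt ℂ α w := hα.differentiableAt (hPopen.mem_nhds hwP)
    have hdW : DifferentiableAt ℂ W w := (hWA w hwP).differentiableAt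
    have hAev : A =ᶠ[nhds w] fun x => a x / W x := by
      filter_upwards [hP''open.mem_nhds hw] with x hx using hAeq x hx
    have hBev : B =ᶠ[nhds w] fun x => α x / W x := by
      filter_upwards [hP''open.mem_nhds hw] with x hx using hBeq x hx
    have hdA' : deriv A w = (deriv a w * W w - a w * deriv W w) / W w ^ 2 := by
      rw [hAev.deriv_eq, deriv_fun_div hda hdW hWne]
    have hdB' : deriv B w = (deriv α w * W w - α w * deriv W w) / W w ^ 2 := by
      rw [hBev.deriv_eq, deriv_fun_div hdα hdW hWne]
    have hAw : A w = a w / W w := hAeq w hw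
    have hBw : B w = α w / W w := hBeq w hw
    show (deriv B w * A w - deriv A w * B w) * W w = 1
    rw [hdA', hdB', hAw, hBw]
    field_simp [hWne]
    rw [hWw w]
    ring
  -- W is nowhere zero on the small punctured disc
  have hWne : ∀ w ∈ P'', W w ≠ 0 := by
    intro w hw
    by_contra h0
    rcases (hWA w (hP''P hw)).eventually_eq_zero_or_eventually_ne_zero with hz | hnz
    · have hzero := hWA.eqOn_zero_of_preconnected_of_eventuallyEq_zero hPconn (hP''P hw) hz
      exact hWw₂ (hzero ⟨hw₂0, hw₂ε⟩)
    · have hev : ∀ᶠ x in nhdsWithin w {w}ᶜ, E x * W x = 1 := by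
        filter_upwards [hnz, mem_nhdsWithin_of_mem_nhds (hP''open.mem_nhds hw)]
          with x hx1 hx2 using hEW x hx2 hx1
      have hcont : ContinuousAt (fun x => E x * W x) w :=
        ((hEd.differentiableAt (hSopen.mem_nhds (hP''S hw))).continuousAt).mul
          ((hWA w (hP''P hw)).differentiableAt.continuousAt)
      have ht1 : Filter.Tendsto (fun x => E x * W x) (nhdsWithin w {w}ᶜ)
          (nhds (E w * W w)) := hcont.tendsto.mono_left nhdsWithin_le_nhds
      have := tendsto_nhds_unique (ht1.congr' hev) tendsto_const_nhds
      rw [h0, mul_zero] at this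
      exact one_ne_zero this.symm
  have hEWall : ∀ w ∈ P'', E w * W w = 1 := fun w hw => hEW w hw (hWne w hw)
  have haW : ∀ w ∈ P'', a w = A w * W w := by
    intro w hw
    rw [hAeq w hw, div_mul_cancel₀ _ (hWne w hw)]
  have hαW : ∀ w ∈ P'', α w = B w * W w := by
    intro w hw
    rw [hBeq w hw, div_mul_cancel₀ _ (hWne w hw)]
  have h0S : (0 : ℂ) ∈ S := by
    show ‖0‖ < ε'
    simpa using hε'
  -- E is not identically zero near 0
  have hEne : ¬ ∀ᶠ w in nhds (0 : ℂ), E w = 0 := by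
    intro h
    obtain ⟨ρ₂, hρ₂, hball⟩ := Metric.eventually_nhds_iff_ball.mp h
    set τ : ℝ := min ρ₂ ρ₀ with hτdef
    have hτ : 0 < τ := lt_min hρ₂ hρ₀
    set w₃ : ℂ := ((τ / 2 : ℝ) : ℂ) with hw₃def
    have hw₃abs : ‖w₃‖ = τ / 2 := by
      rw [hw₃def, Complex.norm_real, Real.norm_eq_abs, abs_of_pos (by linarith)]
    have hw₃P : w₃ ∈ P'' := by
      constructor
      · rw [hw₃abs]; linarith
      · rw [hw₃abs]
        have : τ ≤ ρ₀ := min_le_right _ _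
        linarith
    have hE3 : E w₃ = 0 := by
      apply hball
      rw [Metric.mem_ball, Complex.dist_eq, sub_zero, hw₃abs]
      have : τ ≤ ρ₂ := min_le_left _ _
      linarith
    have := hEWall w₃ hw₃P
    rw [hE3, zero_mul] at this
    exact one_ne_zero this.symm
  obtain ⟨m, u, huA, hu0, huev⟩ :=
    (hEA 0 h0S).exists_eventuallyEq_pow_smul_nonzero_iff.mpr hEne
  -- A is not identically zero near 0
  have hAne : ¬ ∀ᶠ w in nhds (0 : ℂ), A w = 0 := by
    intro h
    obtain ⟨ρ₃, hρ₃, hball⟩ := Metric.eventually_nhds_iff_ball.mp h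
    set τ : ℝ := min ρ₃ ρ₀ with hτdef
    have hτ : 0 < τ := lt_min hρ₃ hρ₀
    set w₃ : ℂ := ((τ / 2 : ℝ) : ℂ) with hw₃def
    have hw₃abs : ‖w₃‖ = τ / 2 := by
      rw [hw₃def, Complex.norm_real, Real.norm_eq_abs, abs_of_pos (by linarith)]
    have hmem : ∀ x ∈ Metric.ball w₃ (τ / 4), x ∈ P'' ∧ ‖x‖ < ρ₃ := by
      intro x hx
      rw [Metric.mem_ball, Complex.dist_eq] at hx
      have h1 : ‖x‖ ≤ ‖(x - w₃)‖ + ‖w₃‖ := by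
        have := norm_add_le (x - w₃) w₃
        rwa [sub_add_cancel] at this
      have h2 : ‖w₃‖ ≤ ‖x‖ + ‖(x - w₃)‖ := by
        have := norm_add_le x (w₃ - x)
        rw [add_sub_cancel] at this
        rwa [norm_sub_rev w₃ x] at this
      have hxτ : ‖x‖ < τ := by rw [hw₃abs] at h1; linarith
      refine ⟨⟨?_, ?_⟩, ?_⟩
      · rw [hw₃abs] at h2; linarith
      · exact lt_of_lt_of_le hxτ (min_le_right _ _)
      · exact lt_of_lt_of_le hxτ (min_le_left _ _)
    have haev : a =ᶠ[nhds w₃] fun _ => (0 : ℂ) := by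
      filter_upwards [Metric.ball_mem_nhds w₃ (by linarith : (0:ℝ) < τ / 4)] with x hx
      obtain ⟨hxP, hxρ₃⟩ := hmem x hx
      rw [haW x hxP, hball x (by rw [Metric.mem_ball, Complex.dist_eq, sub_zero]; exact hxρ₃),
        zero_mul]
    have hw₃P : w₃ ∈ P'' := (hmem w₃ (Metric.mem_ball_self (by linarith))).1
    have hda3 : deriv a w₃ = 0 := by
      rw [haev.deriv_eq]; exact deriv_const _ _
    have ha3 : a w₃ = 0 := haev.self_of_nhds
    have : W w₃ = 0 := by rw [hWw w₃, hda3, ha3]; ring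
    exact hWne w₃ hw₃P this
  obtain ⟨k, u₂, hu₂A, hu₂0, hu₂ev⟩ :=
    (hAA 0 h0S).exists_eventuallyEq_pow_smul_nonzero_iff.mpr hAne
  -- extract a common radius
  have hcombE : ∀ᶠ z in nhds (0 : ℂ),
      (E z = z ^ m * u z ∧ AnalyticAt ℂ u z ∧ u z ≠ 0) ∧
      (A z = z ^ k * u₂ z ∧ AnalyticAt ℂ u₂ z ∧ u₂ z ≠ 0) := by
    filter_upwards [huev, huA.eventually_analyticAt, huA.continuousAt.eventually_ne hu0,
      hu₂ev, hu₂A.eventually_analyticAt, hu₂A.continuousAt.eventually_ne hu₂0]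
      with z h1 h2 h3 h4 h5 h6
    refine ⟨⟨?_, h2, h3⟩, ⟨?_, h5, h6⟩⟩
    · rw [h1]; simp [smul_eq_mul]
    · rw [h4]; simp [smul_eq_mul]
  obtain ⟨ρ₁, hρ₁, hball₁⟩ := Metric.eventually_nhds_iff_ball.mp hcombE
  set ρf : ℝ := min ρ₀ ρ₁ with hρfdef
  have hρf : 0 < ρf := lt_min hρ₀ hρ₁
  have hfacts : ∀ z : ℂ, ‖z‖ < ρf →
      (E z = z ^ m * u z ∧ AnalyticAt ℂ u z ∧ u z ≠ 0) ∧
      (A z = z ^ k * u₂ z ∧ AnalyticAt ℂ u₂ z ∧ u₂ z ≠ 0) := by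
    intro z hz
    apply hball₁
    rw [Metric.mem_ball, Complex.dist_eq, sub_zero]
    exact lt_of_lt_of_le hz (min_le_right _ _)
  have hmemP'' : ∀ z : ℂ, 0 < ‖z‖ → ‖z‖ < ρf → z ∈ P'' :=
    fun z h0 h1 => ⟨h0, lt_of_lt_of_le h1 (min_le_left _ _)⟩
  have hmemS : ∀ z : ℂ, ‖z‖ < ρf → z ∈ S := by
    intro z h1
    have : ‖z‖ < ρ₀ := lt_of_lt_of_le h1 (min_le_left _ _)
    exact lt_of_lt_of_le this (min_le_right _ _)
  have hWinv : ∀ z : ℂ, 0 < ‖z‖ → ‖z‖ < ρf → W z = (E z)⁻¹ := by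
    intro z h0 h1
    exact eq_inv_of_mul_eq_one_left (by rw [mul_comm]; exact hEWall z (hmemP'' z h0 h1))
  have hzpow : ∀ z : ℂ, (z ^ m)⁻¹ = z ^ (-(m : ℤ)) := by
    intro z
    rw [← zpow_natCast z m, ← zpow_neg]
  have hzpow₂ : ∀ z : ℂ, (z ^ k)⁻¹ = z ^ (-(k : ℤ)) := by
    intro z
    rw [← zpow_natCast z k, ← zpow_neg]
  refine ⟨⟨ρf, hρf, -(m : ℤ), fun w => B w * (u w)⁻¹, ?_, ?_⟩,
    ⟨ρf, hρf, -(m : ℤ), fun w => A w * (u w)⁻¹, ?_, ?_⟩,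
    ⟨ρf, hρf, -(k : ℤ), fun w => C w * (u₂ w)⁻¹, ?_, ?_⟩⟩
  · intro w hw
    exact ((hBd.differentiableAt (hSopen.mem_nhds (hmemS w hw))).mul
      (((hfacts w hw).1.2.1.differentiableAt).inv (hfacts w hw).1.2.2)).differentiableWithinAt
  · intro w h0 h1
    rw [hαW w (hmemP'' w h0 h1), hWinv w h0 h1, (hfacts w h1).1.1, mul_inv, hzpow]
    ring
  · intro w hw
    exact ((hAd.differentiableAt (hSopen.mem_nhds (hmemS w hw))).mul
      (((hfacts w hw).1.2.1.differentiableAt).inv (hfacts w hw).1.2.2)).differentiableWithinAt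
  · intro w h0 h1
    rw [haW w (hmemP'' w h0 h1), hWinv w h0 h1, (hfacts w h1).1.1, mul_inv, hzpow]
    ring
  · intro w hw
    exact ((hCd.differentiableAt (hSopen.mem_nhds (hmemS w hw))).mul
      (((hfacts w hw).2.2.1.differentiableAt).inv (hfacts w hw).2.2.2)).differentiableWithinAt
  · intro w h0 h1
    have hwne : w ≠ 0 := by
      intro h; rw [h] at h0; simp at h0
    have hu2 : u₂ w ≠ 0 := (hfacts w h1).2.2.2
    have hCw : C w = A w * δ w := hCeq w (hmemP'' w h0 h1)
    show δ w = w ^ (-(k : ℤ)) * (C w * (u₂ w)⁻¹)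
    have hAw : A w = w ^ k * u₂ w := (hfacts w h1).2.1
    rw [hCw, hAw]
    rw [← hzpow₂]
    field_simp
end

section
/- Let 𝔩 be a complex Lie subalgebra of sl(3,ℂ) containing so(3,ℂ), the subalgebra of all antisymmetric (Aᵀ = −A) trace-zero 3×3 complex matrices. Then 𝔩 = so(3,ℂ) or 𝔩 = sl(3,ℂ). -/
open Complex Matrix
set_option maxHeartbeats 1000000

private lemma I_cube : I^3 = -I := by
  rw [pow_succ, Complex.I_sq]; ring

/-- `sl(3,ℂ)`, as the set of trace-zero `3×3` complex matrices. -/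
def sl3 : Set (Matrix (Fin 3) (Fin 3) ℂ) := {X | Matrix.trace X = 0}

/-- `so(3,ℂ)`, the set of antisymmetric trace-zero `3×3` complex matrices. -/
def so3 : Set (Matrix (Fin 3) (Fin 3) ℂ) := {A | A ∈ sl3 ∧ A.transpose = -A}

attribute [local instance 100] LieRing.ofAssociativeRing

/- Auxiliary matrices: a basis of `so3` and weight vectors of the symmetric
traceless part under `ad L3`. -/
noncomputable def LL1 : Matrix (Fin 3) (Fin 3) ℂ := !![0,0,0;0,0,-1;0,1,0]
noncomputable def LL2 : Matrix (Fin 3) (Fin 3) ℂ := !![0,0,1;0,0,0;-1,0,0]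
noncomputable def LL3 : Matrix (Fin 3) (Fin 3) ℂ := !![0,-1,0;1,0,0;0,0,0]
noncomputable def Epl : Matrix (Fin 3) (Fin 3) ℂ := !![0,0,I;0,0,-1;-I,1,0]
noncomputable def Emi : Matrix (Fin 3) (Fin 3) ℂ := !![0,0,-I;0,0,-1;I,1,0]
noncomputable def w2 : Matrix (Fin 3) (Fin 3) ℂ := !![1,-I,0;-I,-1,0;0,0,0]
noncomputable def w1 : Matrix (Fin 3) (Fin 3) ℂ := !![0,0,1;0,0,-I;1,-I,0]
noncomputable def w0 : Matrix (Fin 3) (Fin 3) ℂ := !![1,0,0;0,1,0;0,0,-2]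
noncomputable def wm1 : Matrix (Fin 3) (Fin 3) ℂ := !![0,0,1;0,0,I;1,I,0]
noncomputable def wm2 : Matrix (Fin 3) (Fin 3) ℂ := !![1,I,0;I,-1,0;0,0,0]

/- Iterated brackets of `LL3` with a general matrix. -/
noncomputable def DD1 (S : Matrix (Fin 3) (Fin 3) ℂ) : Matrix (Fin 3) (Fin 3) ℂ :=
  !![-(S 0 1)-S 1 0, S 0 0-S 1 1, -(S 1 2);
     S 0 0-S 1 1, S 0 1+S 1 0, S 0 2;
     -(S 2 1), S 2 0, 0]
noncomputable def DD2 (S : Matrix (Fin 3) (Fin 3) ℂ) : Matrix (Fin 3) (Fin 3) ℂ :=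
  !![-(2*S 0 0)+2*S 1 1, -(2*S 0 1)-2*S 1 0, -(S 0 2);
     -(2*S 0 1)-2*S 1 0, 2*S 0 0-2*S 1 1, -(S 1 2);
     -(S 2 0), -(S 2 1), 0]
noncomputable def DD3 (S : Matrix (Fin 3) (Fin 3) ℂ) : Matrix (Fin 3) (Fin 3) ℂ :=
  !![4*S 0 1+4*S 1 0, -(4*S 0 0)+4*S 1 1, S 1 2;
     -(4*S 0 0)+4*S 1 1, -(4*S 0 1)-4*S 1 0, -(S 0 2);
     S 2 1, -(S 2 0), 0]
noncomputable def DD4 (S : Matrix (Fin 3) (Fin 3) ℂ) : Matrix (Fin 3) (Fin 3) ℂ :=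
  !![8*S 0 0-8*S 1 1, 8*S 0 1+8*S 1 0, S 0 2;
     8*S 0 1+8*S 1 0, -(8*S 0 0)+8*S 1 1, S 1 2;
     S 2 0, S 2 1, 0]

lemma brD1 (S : Matrix (Fin 3) (Fin 3) ℂ) : ⁅LL3, S⁆ = DD1 S := by
  ext i j
  fin_cases i <;> fin_cases j
  all_goals try simp only [Matrix.cons_val_succ, Matrix.smul_apply, Matrix.add_apply,
      Matrix.sub_apply, Matrix.neg_apply, Matrix.zero_apply, Ring.lie_def, Matrix.mul_apply,
      Fin.sum_univ_three, Matrix.vecMul, dotProduct,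
      Fin.zero_eta, Fin.mk_one, Fin.reduceFinMk, Matrix.cons_val_two, Matrix.tail_cons, Fin.isValue,
      Matrix.cons_val', Matrix.cons_val_zero, Matrix.cons_val_one,
      Matrix.head_cons, Matrix.empty_val', Matrix.cons_val_fin_one,
      Matrix.head_fin_const, Matrix.of_apply, Matrix.vecHead,
      Matrix.vecTail, Function.comp_apply, smul_eq_mul, LL3, DD1]
  all_goals try ring_nf
  all_goals try simp only [Complex.I_sq, I_cube, Complex.I_pow_four]
  all_goals try ring_nf

lemma brD2 (S : Matrix (Fin 3) (Fin 3) ℂ) : ⁅LL3, DD1 S⁆ = DD2 S := by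
  ext i j
  fin_cases i <;> fin_cases j
  all_goals try simp only [Matrix.cons_val_succ, Matrix.smul_apply, Matrix.add_apply,
      Matrix.sub_apply, Matrix.neg_apply, Matrix.zero_apply, Ring.lie_def, Matrix.mul_apply,
      Fin.sum_univ_three, Matrix.vecMul, dotProduct,
      Fin.zero_eta, Fin.mk_one, Fin.reduceFinMk, Matrix.cons_val_two, Matrix.tail_cons, Fin.isValue,
      Matrix.cons_val', Matrix.cons_val_zero, Matrix.cons_val_one,
      Matrix.head_cons, Matrix.empty_val', Matrix.cons_val_fin_one,
      Matrix.head_fin_const, Matrix.of_apply, Matrix.vecHead,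
      Matrix.vecTail, Function.comp_apply, smul_eq_mul, LL3, DD1, DD2]
  all_goals try ring_nf
  all_goals try simp only [Complex.I_sq, I_cube, Complex.I_pow_four]
  all_goals try ring_nf

lemma brD3 (S : Matrix (Fin 3) (Fin 3) ℂ) : ⁅LL3, DD2 S⁆ = DD3 S := by
  ext i j
  fin_cases i <;> fin_cases j
  all_goals try simp only [Matrix.cons_val_succ, Matrix.smul_apply, Matrix.add_apply,
      Matrix.sub_apply, Matrix.neg_apply, Matrix.zero_apply, Ring.lie_def, Matrix.mul_apply,
      Fin.sum_univ_three, Matrix.vecMul, dotProduct,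
      Fin.zero_eta, Fin.mk_one, Fin.reduceFinMk, Matrix.cons_val_two, Matrix.tail_cons, Fin.isValue,
      Matrix.cons_val', Matrix.cons_val_zero, Matrix.cons_val_one,
      Matrix.head_cons, Matrix.empty_val', Matrix.cons_val_fin_one,
      Matrix.head_fin_const, Matrix.of_apply, Matrix.vecHead,
      Matrix.vecTail, Function.comp_apply, smul_eq_mul, LL3, DD2, DD3]
  all_goals try ring_nf
  all_goals try simp only [Complex.I_sq, I_cube, Complex.I_pow_four]
  all_goals try ring_nf

lemma brD4 (S : Matrix (Fin 3) (Fin 3) ℂ) : ⁅LL3, DD3 S⁆ = DD4 S := by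
  ext i j
  fin_cases i <;> fin_cases j
  all_goals try simp only [Matrix.cons_val_succ, Matrix.smul_apply, Matrix.add_apply,
      Matrix.sub_apply, Matrix.neg_apply, Matrix.zero_apply, Ring.lie_def, Matrix.mul_apply,
      Fin.sum_univ_three, Matrix.vecMul, dotProduct,
      Fin.zero_eta, Fin.mk_one, Fin.reduceFinMk, Matrix.cons_val_two, Matrix.tail_cons, Fin.isValue,
      Matrix.cons_val', Matrix.cons_val_zero, Matrix.cons_val_one,
      Matrix.head_cons, Matrix.empty_val', Matrix.cons_val_fin_one,
      Matrix.head_fin_const, Matrix.of_apply, Matrix.vecHead,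
      Matrix.vecTail, Function.comp_apply, smul_eq_mul, LL3, DD3, DD4]
  all_goals try ring_nf
  all_goals try simp only [Complex.I_sq, I_cube, Complex.I_pow_four]
  all_goals try ring_nf

section Proj
variable (S : Matrix (Fin 3) (Fin 3) ℂ)

/- The five spectral projections of a symmetric traceless `S` under `ad LL3`. -/
lemma proj_w0 (hsym : S.transpose = S) (htr : Matrix.trace S = 0) :
    ((S 0 0 + S 1 1)/2) • w0
    = S + ((5:ℂ)/4) • DD2 S + ((1:ℂ)/4) • DD4 S := by
  have e10 : S 1 0 = S 0 1 := by simpa using congrFun (congrFun hsym 0) 1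
  have e20 : S 2 0 = S 0 2 := by simpa using congrFun (congrFun hsym 0) 2
  have e21 : S 2 1 = S 1 2 := by simpa using congrFun (congrFun hsym 1) 2
  have etr : S 2 2 = -S 0 0 - S 1 1 := by
    simp [Matrix.trace, Matrix.diag, Fin.sum_univ_three] at htr
    linear_combination htr
  ext i j
  fin_cases i <;> fin_cases j
  all_goals try simp only [Matrix.cons_val_succ, Matrix.smul_apply, Matrix.add_apply,
      Matrix.sub_apply, Matrix.neg_apply, Matrix.zero_apply, Ring.lie_def, Matrix.mul_apply,
      Fin.sum_univ_three, Matrix.vecMul, dotProduct,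
      Fin.zero_eta, Fin.mk_one, Fin.reduceFinMk, Matrix.cons_val_two, Matrix.tail_cons, Fin.isValue,
      Matrix.cons_val', Matrix.cons_val_zero, Matrix.cons_val_one,
      Matrix.head_cons, Matrix.empty_val', Matrix.cons_val_fin_one,
      Matrix.head_fin_const, Matrix.of_apply, Matrix.vecHead,
      Matrix.vecTail, Function.comp_apply, smul_eq_mul, w0, DD2, DD4, e10, e20, e21, etr]
  all_goals try ring_nf
  all_goals try simp only [Complex.I_sq, I_cube, Complex.I_pow_four]
  all_goals try ring_nf

lemma proj_w1 (hsym : S.transpose = S) :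
    ((S 0 2 + S 1 2 * I)/2) • w1
    = (-(2*I)/3) • DD1 S + (-(2:ℂ)/3) • DD2 S + (-(I)/6) • DD3 S
      + (-(1:ℂ)/6) • DD4 S := by
  have e20 : S 2 0 = S 0 2 := by simpa using congrFun (congrFun hsym 0) 2
  have e21 : S 2 1 = S 1 2 := by simpa using congrFun (congrFun hsym 1) 2
  ext i j
  fin_cases i <;> fin_cases j
  all_goals try simp only [Matrix.cons_val_succ, Matrix.smul_apply, Matrix.add_apply,
      Matrix.sub_apply, Matrix.neg_apply, Matrix.zero_apply, Ring.lie_def, Matrix.mul_apply,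
      Fin.sum_univ_three, Matrix.vecMul, dotProduct,
      Fin.zero_eta, Fin.mk_one, Fin.reduceFinMk, Matrix.cons_val_two, Matrix.tail_cons, Fin.isValue,
      Matrix.cons_val', Matrix.cons_val_zero, Matrix.cons_val_one,
      Matrix.head_cons, Matrix.empty_val', Matrix.cons_val_fin_one,
      Matrix.head_fin_const, Matrix.of_apply, Matrix.vecHead,
      Matrix.vecTail, Function.comp_apply, smul_eq_mul, w1, DD1, DD2, DD3, DD4, e20, e21]
  all_goals try ring_nf
  all_goals try simp only [Complex.I_sq, I_cube, Complex.I_pow_four]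
  all_goals try ring_nf

lemma proj_wm1 (hsym : S.transpose = S) :
    ((S 0 2 - S 1 2 * I)/2) • wm1
    = ((2*I)/3) • DD1 S + (-(2:ℂ)/3) • DD2 S + (I/6) • DD3 S
      + (-(1:ℂ)/6) • DD4 S := by
  have e20 : S 2 0 = S 0 2 := by simpa using congrFun (congrFun hsym 0) 2
  have e21 : S 2 1 = S 1 2 := by simpa using congrFun (congrFun hsym 1) 2
  ext i j
  fin_cases i <;> fin_cases j
  all_goals try simp only [Matrix.cons_val_succ, Matrix.smul_apply, Matrix.add_apply,
      Matrix.sub_apply, Matrix.neg_apply, Matrix.zero_apply, Ring.lie_def, Matrix.mul_apply,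
      Fin.sum_univ_three, Matrix.vecMul, dotProduct,
      Fin.zero_eta, Fin.mk_one, Fin.reduceFinMk, Matrix.cons_val_two, Matrix.tail_cons, Fin.isValue,
      Matrix.cons_val', Matrix.cons_val_zero, Matrix.cons_val_one,
      Matrix.head_cons, Matrix.empty_val', Matrix.cons_val_fin_one,
      Matrix.head_fin_const, Matrix.of_apply, Matrix.vecHead,
      Matrix.vecTail, Function.comp_apply, smul_eq_mul, wm1, DD1, DD2, DD3, DD4, e20, e21]
  all_goals try ring_nf
  all_goals try simp only [Complex.I_sq, I_cube, Complex.I_pow_four]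
  all_goals try ring_nf

lemma proj_w2 (hsym : S.transpose = S) :
    ((S 0 0 - S 1 1)/4 + (S 0 1/2) * I) • w2
    = (I/12) • DD1 S + ((1:ℂ)/24) • DD2 S + (I/12) • DD3 S
      + ((1:ℂ)/24) • DD4 S := by
  have e10 : S 1 0 = S 0 1 := by simpa using congrFun (congrFun hsym 0) 1
  ext i j
  fin_cases i <;> fin_cases j
  all_goals try simp only [Matrix.cons_val_succ, Matrix.smul_apply, Matrix.add_apply,
      Matrix.sub_apply, Matrix.neg_apply, Matrix.zero_apply, Ring.lie_def, Matrix.mul_apply,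
      Fin.sum_univ_three, Matrix.vecMul, dotProduct,
      Fin.zero_eta, Fin.mk_one, Fin.reduceFinMk, Matrix.cons_val_two, Matrix.tail_cons, Fin.isValue,
      Matrix.cons_val', Matrix.cons_val_zero, Matrix.cons_val_one,
      Matrix.head_cons, Matrix.empty_val', Matrix.cons_val_fin_one,
      Matrix.head_fin_const, Matrix.of_apply, Matrix.vecHead,
      Matrix.vecTail, Function.comp_apply, smul_eq_mul, w2, DD1, DD2, DD3, DD4, e10]
  all_goals try ring_nf
  all_goals try simp only [Complex.I_sq, I_cube, Complex.I_pow_four]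
  all_goals try ring_nf

lemma proj_wm2 (hsym : S.transpose = S) :
    ((S 0 0 - S 1 1)/4 - (S 0 1/2) * I) • wm2
    = (-(I)/12) • DD1 S + ((1:ℂ)/24) • DD2 S + (-(I)/12) • DD3 S
      + ((1:ℂ)/24) • DD4 S := by
  have e10 : S 1 0 = S 0 1 := by simpa using congrFun (congrFun hsym 0) 1
  ext i j
  fin_cases i <;> fin_cases j
  all_goals try simp only [Matrix.cons_val_succ, Matrix.smul_apply, Matrix.add_apply,
      Matrix.sub_apply, Matrix.neg_apply, Matrix.zero_apply, Ring.lie_def, Matrix.mul_apply,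
      Fin.sum_univ_three, Matrix.vecMul, dotProduct,
      Fin.zero_eta, Fin.mk_one, Fin.reduceFinMk, Matrix.cons_val_two, Matrix.tail_cons, Fin.isValue,
      Matrix.cons_val', Matrix.cons_val_zero, Matrix.cons_val_one,
      Matrix.head_cons, Matrix.empty_val', Matrix.cons_val_fin_one,
      Matrix.head_fin_const, Matrix.of_apply, Matrix.vecHead,
      Matrix.vecTail, Function.comp_apply, smul_eq_mul, wm2, DD1, DD2, DD3, DD4, e10]
  all_goals try ring_nf
  all_goals try simp only [Complex.I_sq, I_cube, Complex.I_pow_four]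
  all_goals try ring_nf

end Proj

/- Ladder identities. -/
lemma lad_w1 : w1 = (I/2) • ⁅Epl, w2⁆ := by
  ext i j
  fin_cases i <;> fin_cases j
  all_goals try simp only [Matrix.cons_val_succ, Matrix.smul_apply, Matrix.add_apply,
      Matrix.sub_apply, Matrix.neg_apply, Matrix.zero_apply, Ring.lie_def, Matrix.mul_apply,
      Fin.sum_univ_three, Matrix.vecMul, dotProduct,
      Fin.zero_eta, Fin.mk_one, Fin.reduceFinMk, Matrix.cons_val_two, Matrix.tail_cons, Fin.isValue,
      Matrix.cons_val', Matrix.cons_val_zero, Matrix.cons_val_one,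
      Matrix.head_cons, Matrix.empty_val', Matrix.cons_val_fin_one,
      Matrix.head_fin_const, Matrix.of_apply, Matrix.vecHead,
      Matrix.vecTail, Function.comp_apply, smul_eq_mul, Epl, w1, w2]
  all_goals try ring_nf
  all_goals try simp only [Complex.I_sq, I_cube, Complex.I_pow_four]
  all_goals try ring_nf

lemma lad_w0 : w0 = (-(I)/2) • ⁅Epl, w1⁆ := by
  ext i j
  fin_cases i <;> fin_cases j
  all_goals try simp only [Matrix.cons_val_succ, Matrix.smul_apply, Matrix.add_apply,
      Matrix.sub_apply, Matrix.neg_apply, Matrix.zero_apply, Ring.lie_def, Matrix.mul_apply,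
      Fin.sum_univ_three, Matrix.vecMul, dotProduct,
      Fin.zero_eta, Fin.mk_one, Fin.reduceFinMk, Matrix.cons_val_two, Matrix.tail_cons, Fin.isValue,
      Matrix.cons_val', Matrix.cons_val_zero, Matrix.cons_val_one,
      Matrix.head_cons, Matrix.empty_val', Matrix.cons_val_fin_one,
      Matrix.head_fin_const, Matrix.of_apply, Matrix.vecHead,
      Matrix.vecTail, Function.comp_apply, smul_eq_mul, Epl, w0, w1]
  all_goals try ring_nf
  all_goals try simp only [Complex.I_sq, I_cube, Complex.I_pow_four]
  all_goals try ring_nf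

lemma lad_wm1 : wm1 = (I/3) • ⁅Epl, w0⁆ := by
  ext i j
  fin_cases i <;> fin_cases j
  all_goals try simp only [Matrix.cons_val_succ, Matrix.smul_apply, Matrix.add_apply,
      Matrix.sub_apply, Matrix.neg_apply, Matrix.zero_apply, Ring.lie_def, Matrix.mul_apply,
      Fin.sum_univ_three, Matrix.vecMul, dotProduct,
      Fin.zero_eta, Fin.mk_one, Fin.reduceFinMk, Matrix.cons_val_two, Matrix.tail_cons, Fin.isValue,
      Matrix.cons_val', Matrix.cons_val_zero, Matrix.cons_val_one,
      Matrix.head_cons, Matrix.empty_val', Matrix.cons_val_fin_one,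
      Matrix.head_fin_const, Matrix.of_apply, Matrix.vecHead,
      Matrix.vecTail, Function.comp_apply, smul_eq_mul, Epl, wm1, w0]
  all_goals try ring_nf
  all_goals try simp only [Complex.I_sq, I_cube, Complex.I_pow_four]
  all_goals try ring_nf

lemma lad_wm2 : wm2 = (-(I)/2) • ⁅Epl, wm1⁆ := by
  ext i j
  fin_cases i <;> fin_cases j
  all_goals try simp only [Matrix.cons_val_succ, Matrix.smul_apply, Matrix.add_apply,
      Matrix.sub_apply, Matrix.neg_apply, Matrix.zero_apply, Ring.lie_def, Matrix.mul_apply,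
      Fin.sum_univ_three, Matrix.vecMul, dotProduct,
      Fin.zero_eta, Fin.mk_one, Fin.reduceFinMk, Matrix.cons_val_two, Matrix.tail_cons, Fin.isValue,
      Matrix.cons_val', Matrix.cons_val_zero, Matrix.cons_val_one,
      Matrix.head_cons, Matrix.empty_val', Matrix.cons_val_fin_one,
      Matrix.head_fin_const, Matrix.of_apply, Matrix.vecHead,
      Matrix.vecTail, Function.comp_apply, smul_eq_mul, Epl, wm2, wm1]
  all_goals try ring_nf
  all_goals try simp only [Complex.I_sq, I_cube, Complex.I_pow_four]
  all_goals try ring_nf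

lemma lad_up_w2 : w2 = (I/2) • ⁅Emi, w1⁆ := by
  ext i j
  fin_cases i <;> fin_cases j
  all_goals try simp only [Matrix.cons_val_succ, Matrix.smul_apply, Matrix.add_apply,
      Matrix.sub_apply, Matrix.neg_apply, Matrix.zero_apply, Ring.lie_def, Matrix.mul_apply,
      Fin.sum_univ_three, Matrix.vecMul, dotProduct,
      Fin.zero_eta, Fin.mk_one, Fin.reduceFinMk, Matrix.cons_val_two, Matrix.tail_cons, Fin.isValue,
      Matrix.cons_val', Matrix.cons_val_zero, Matrix.cons_val_one,
      Matrix.head_cons, Matrix.empty_val', Matrix.cons_val_fin_one,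
      Matrix.head_fin_const, Matrix.of_apply, Matrix.vecHead,
      Matrix.vecTail, Function.comp_apply, smul_eq_mul, Emi, w2, w1]
  all_goals try ring_nf
  all_goals try simp only [Complex.I_sq, I_cube, Complex.I_pow_four]
  all_goals try ring_nf

lemma lad_up_w1 : w1 = (-(I)/3) • ⁅Emi, w0⁆ := by
  ext i j
  fin_cases i <;> fin_cases j
  all_goals try simp only [Matrix.cons_val_succ, Matrix.smul_apply, Matrix.add_apply,
      Matrix.sub_apply, Matrix.neg_apply, Matrix.zero_apply, Ring.lie_def, Matrix.mul_apply,
      Fin.sum_univ_three, Matrix.vecMul, dotProduct,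
      Fin.zero_eta, Fin.mk_one, Fin.reduceFinMk, Matrix.cons_val_two, Matrix.tail_cons, Fin.isValue,
      Matrix.cons_val', Matrix.cons_val_zero, Matrix.cons_val_one,
      Matrix.head_cons, Matrix.empty_val', Matrix.cons_val_fin_one,
      Matrix.head_fin_const, Matrix.of_apply, Matrix.vecHead,
      Matrix.vecTail, Function.comp_apply, smul_eq_mul, Emi, w1, w0]
  all_goals try ring_nf
  all_goals try simp only [Complex.I_sq, I_cube, Complex.I_pow_four]
  all_goals try ring_nf

lemma lad_up_w0 : w0 = (I/2) • ⁅Emi, wm1⁆ := by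
  ext i j
  fin_cases i <;> fin_cases j
  all_goals try simp only [Matrix.cons_val_succ, Matrix.smul_apply, Matrix.add_apply,
      Matrix.sub_apply, Matrix.neg_apply, Matrix.zero_apply, Ring.lie_def, Matrix.mul_apply,
      Fin.sum_univ_three, Matrix.vecMul, dotProduct,
      Fin.zero_eta, Fin.mk_one, Fin.reduceFinMk, Matrix.cons_val_two, Matrix.tail_cons, Fin.isValue,
      Matrix.cons_val', Matrix.cons_val_zero, Matrix.cons_val_one,
      Matrix.head_cons, Matrix.empty_val', Matrix.cons_val_fin_one,
      Matrix.head_fin_const, Matrix.of_apply, Matrix.vecHead,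
      Matrix.vecTail, Function.comp_apply, smul_eq_mul, Emi, w0, wm1]
  all_goals try ring_nf
  all_goals try simp only [Complex.I_sq, I_cube, Complex.I_pow_four]
  all_goals try ring_nf

lemma lad_up_wm1 : wm1 = (-(I)/2) • ⁅Emi, wm2⁆ := by
  ext i j
  fin_cases i <;> fin_cases j
  all_goals try simp only [Matrix.cons_val_succ, Matrix.smul_apply, Matrix.add_apply,
      Matrix.sub_apply, Matrix.neg_apply, Matrix.zero_apply, Ring.lie_def, Matrix.mul_apply,
      Fin.sum_univ_three, Matrix.vecMul, dotProduct,
      Fin.zero_eta, Fin.mk_one, Fin.reduceFinMk, Matrix.cons_val_two, Matrix.tail_cons, Fin.isValue,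
      Matrix.cons_val', Matrix.cons_val_zero, Matrix.cons_val_one,
      Matrix.head_cons, Matrix.empty_val', Matrix.cons_val_fin_one,
      Matrix.head_fin_const, Matrix.of_apply, Matrix.vecHead,
      Matrix.vecTail, Function.comp_apply, smul_eq_mul, Emi, wm1, wm2]
  all_goals try ring_nf
  all_goals try simp only [Complex.I_sq, I_cube, Complex.I_pow_four]
  all_goals try ring_nf

/- Membership of the `LLk` in `so3`. -/
lemma LL1_mem_so3 : LL1 ∈ so3 := by
  refine ⟨?_, ?_⟩
  · simp [sl3, Matrix.trace_fin_three, LL1, Matrix.vecHead, Matrix.vecTail]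
  · ext i j
    fin_cases i <;> fin_cases j <;> simp [LL1, Matrix.vecHead, Matrix.vecTail]

lemma LL2_mem_so3 : LL2 ∈ so3 := by
  refine ⟨?_, ?_⟩
  · simp [sl3, Matrix.trace_fin_three, LL2, Matrix.vecHead, Matrix.vecTail]
  · ext i j
    fin_cases i <;> fin_cases j <;> simp [LL2, Matrix.vecHead, Matrix.vecTail]

lemma LL3_mem_so3 : LL3 ∈ so3 := by
  refine ⟨?_, ?_⟩
  · simp [sl3, Matrix.trace_fin_three, LL3, Matrix.vecHead, Matrix.vecTail]
  · ext i j
    fin_cases i <;> fin_cases j <;> simp [LL3, Matrix.vecHead, Matrix.vecTail]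

lemma Epl_eq : Epl = LL1 + I • LL2 := by
  ext i j
  fin_cases i <;> fin_cases j <;> simp [Epl, LL1, LL2, Matrix.vecHead, Matrix.vecTail]

lemma Emi_eq : Emi = LL1 + (-I) • LL2 := by
  ext i j
  fin_cases i <;> fin_cases j <;> simp [Emi, LL1, LL2, Matrix.vecHead, Matrix.vecTail]

/- The final decomposition of a traceless matrix. -/
lemma decomp (Y : Matrix (Fin 3) (Fin 3) ℂ) (htr : Matrix.trace Y = 0) :
    Y = ((Y 2 1 - Y 1 2)/2) • LL1 + ((Y 0 2 - Y 2 0)/2) • LL2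
      + ((Y 1 0 - Y 0 1)/2) • LL3
      + ((Y 0 0 - Y 1 1)/4 + ((Y 0 1 + Y 1 0)/4) * I) • w2
      + ((Y 0 2 + Y 2 0)/4 + ((Y 1 2 + Y 2 1)/4) * I) • w1
      + ((Y 0 0 + Y 1 1)/2) • w0
      + ((Y 0 2 + Y 2 0)/4 - ((Y 1 2 + Y 2 1)/4) * I) • wm1
      + ((Y 0 0 - Y 1 1)/4 - ((Y 0 1 + Y 1 0)/4) * I) • wm2 := by
  have etr : Y 2 2 = -Y 0 0 - Y 1 1 := by
    simp [Matrix.trace, Matrix.diag, Fin.sum_univ_three] at htr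
    linear_combination htr
  ext i j
  fin_cases i <;> fin_cases j
  all_goals try simp only [Matrix.cons_val_succ, Matrix.smul_apply, Matrix.add_apply,
      Matrix.sub_apply, Matrix.neg_apply, Matrix.zero_apply, Ring.lie_def, Matrix.mul_apply,
      Fin.sum_univ_three, Matrix.vecMul, dotProduct,
      Fin.zero_eta, Fin.mk_one, Fin.reduceFinMk, Matrix.cons_val_two, Matrix.tail_cons, Fin.isValue,
      Matrix.cons_val', Matrix.cons_val_zero, Matrix.cons_val_one,
      Matrix.head_cons, Matrix.empty_val', Matrix.cons_val_fin_one,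
      Matrix.head_fin_const, Matrix.of_apply, Matrix.vecHead,
      Matrix.vecTail, Function.comp_apply, smul_eq_mul, LL1, LL2, LL3, w2, w1, w0, wm1, wm2, etr]
  all_goals try ring_nf
  all_goals try simp only [Complex.I_sq, I_cube, Complex.I_pow_four]
  all_goals try ring_nf

/-- **A Lie subalgebra of `sl(3,ℂ)` containing `so(3,ℂ)` is `so(3,ℂ)` or `sl(3,ℂ)`.** -/
theorem subalgebra_containing_so3
    (L : LieSubalgebra ℂ (Matrix (Fin 3) (Fin 3) ℂ))
    (hL : (L : Set (Matrix (Fin 3) (Fin 3) ℂ)) ⊆ sl3)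
    (hso : so3 ⊆ (L : Set (Matrix (Fin 3) (Fin 3) ℂ))) :
    (L : Set (Matrix (Fin 3) (Fin 3) ℂ)) = so3 ∨
    (L : Set (Matrix (Fin 3) (Fin 3) ℂ)) = sl3 := by
  by_cases hsub : (L : Set (Matrix (Fin 3) (Fin 3) ℂ)) ⊆ so3
  · exact Or.inl (Set.Subset.antisymm hsub hso)
  · right
    obtain ⟨X, hXL, hXn⟩ := Set.not_subset.mp hsub
    have htrX : Matrix.trace X = 0 := hL hXL
    -- basic so3 elements are in L
    have hL1 : LL1 ∈ L := hso LL1_mem_so3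
    have hL2 : LL2 ∈ L := hso LL2_mem_so3
    have hL3 : LL3 ∈ L := hso LL3_mem_so3
    have hEp : Epl ∈ L := by
      rw [Epl_eq]; exact L.add_mem hL1 (L.smul_mem I hL2)
    have hEm : Emi ∈ L := by
      rw [Emi_eq]; exact L.add_mem hL1 (L.smul_mem (-I) hL2)
    -- the symmetric part of X
    set S : Matrix (Fin 3) (Fin 3) ℂ := (2⁻¹ : ℂ) • (X + X.transpose) with hSdef
    have hAso : ((2⁻¹ : ℂ) • (X - X.transpose)) ∈ so3 := by
      constructor
      · simp [sl3, Matrix.trace_smul, Matrix.trace_sub, Matrix.trace_transpose]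
      · rw [Matrix.transpose_smul, Matrix.transpose_sub, Matrix.transpose_transpose]
        module
    have hSL : S ∈ L := by
      have h1 : S = X - (2⁻¹ : ℂ) • (X - X.transpose) := by
        rw [hSdef]; module
      rw [h1]
      exact L.sub_mem hXL (hso hAso)
    have hsym : S.transpose = S := by
      rw [hSdef, Matrix.transpose_smul, Matrix.transpose_add,
        Matrix.transpose_transpose, add_comm]
    have htrS : Matrix.trace S = 0 := by
      rw [hSdef]
      simp [Matrix.trace_smul, Matrix.trace_add, Matrix.trace_transpose, htrX]
    have hSne : S ≠ 0 := by
      intro h0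
      apply hXn
      have hXt : X.transpose = -X := by
        have h1 : (2⁻¹ : ℂ) • (X + X.transpose) = 0 := by rw [← hSdef, h0]
        have h2 : X + X.transpose = 0 := by
          have := smul_eq_zero.mp h1
          rcases this with h | h
          · norm_num at h
          · exact h
        linear_combination (norm := module) h2
      exact ⟨htrX, hXt⟩
    -- memberships of iterated brackets
    have hD1 : DD1 S ∈ L := brD1 S ▸ L.lie_mem hL3 hSL
    have hD2 : DD2 S ∈ L := brD2 S ▸ L.lie_mem hL3 hD1
    have hD3 : DD3 S ∈ L := brD3 S ▸ L.lie_mem hL3 hD2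
    have hD4 : DD4 S ∈ L := brD4 S ▸ L.lie_mem hL3 hD3
    -- ladder steps
    have dn1 : w2 ∈ L → w1 ∈ L := fun h => by
      rw [lad_w1]; exact L.smul_mem _ (L.lie_mem hEp h)
    have dn0 : w1 ∈ L → w0 ∈ L := fun h => by
      rw [lad_w0]; exact L.smul_mem _ (L.lie_mem hEp h)
    have dnm1 : w0 ∈ L → wm1 ∈ L := fun h => by
      rw [lad_wm1]; exact L.smul_mem _ (L.lie_mem hEp h)
    have dnm2 : wm1 ∈ L → wm2 ∈ L := fun h => by
      rw [lad_wm2]; exact L.smul_mem _ (L.lie_mem hEp h)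
    have up2 : w1 ∈ L → w2 ∈ L := fun h => by
      rw [lad_up_w2]; exact L.smul_mem _ (L.lie_mem hEm h)
    have up1 : w0 ∈ L → w1 ∈ L := fun h => by
      rw [lad_up_w1]; exact L.smul_mem _ (L.lie_mem hEm h)
    have up0 : wm1 ∈ L → w0 ∈ L := fun h => by
      rw [lad_up_w0]; exact L.smul_mem _ (L.lie_mem hEm h)
    have upm1 : wm2 ∈ L → wm1 ∈ L := fun h => by
      rw [lad_up_wm1]; exact L.smul_mem _ (L.lie_mem hEm h)
    have main : w2 ∈ L → w2 ∈ L ∧ w1 ∈ L ∧ w0 ∈ L ∧ wm1 ∈ L ∧ wm2 ∈ L := by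
      intro h2
      have h1 := dn1 h2
      have h0 := dn0 h1
      have hm1 := dnm1 h0
      exact ⟨h2, h1, h0, hm1, dnm2 hm1⟩
    -- find a nonzero spectral component
    have hAll : w2 ∈ L ∧ w1 ∈ L ∧ w0 ∈ L ∧ wm1 ∈ L ∧ wm2 ∈ L := by
      by_cases hc2 : ((S 0 0 - S 1 1)/4 + (S 0 1/2) * I) ≠ 0
      · apply main
        have hmem : ((S 0 0 - S 1 1)/4 + (S 0 1/2) * I) • w2 ∈ L := by
          rw [proj_w2 S hsym]
          exact L.add_mem (L.add_mem (L.add_mem (L.smul_mem _ hD1)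
            (L.smul_mem _ hD2)) (L.smul_mem _ hD3)) (L.smul_mem _ hD4)
        have := L.smul_mem ((S 0 0 - S 1 1)/4 + (S 0 1/2) * I)⁻¹ hmem
        rwa [inv_smul_smul₀ hc2] at this
      by_cases hcm2 : ((S 0 0 - S 1 1)/4 - (S 0 1/2) * I) ≠ 0
      · apply main
        apply up2; apply up1; apply up0; apply upm1
        have hmem : ((S 0 0 - S 1 1)/4 - (S 0 1/2) * I) • wm2 ∈ L := by
          rw [proj_wm2 S hsym]
          exact L.add_mem (L.add_mem (L.add_mem (L.smul_mem _ hD1)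
            (L.smul_mem _ hD2)) (L.smul_mem _ hD3)) (L.smul_mem _ hD4)
        have := L.smul_mem ((S 0 0 - S 1 1)/4 - (S 0 1/2) * I)⁻¹ hmem
        rwa [inv_smul_smul₀ hcm2] at this
      by_cases hc1 : ((S 0 2 + S 1 2 * I)/2) ≠ 0
      · apply main
        apply up2
        have hmem : ((S 0 2 + S 1 2 * I)/2) • w1 ∈ L := by
          rw [proj_w1 S hsym]
          exact L.add_mem (L.add_mem (L.add_mem (L.smul_mem _ hD1)
            (L.smul_mem _ hD2)) (L.smul_mem _ hD3)) (L.smul_mem _ hD4)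
        have := L.smul_mem ((S 0 2 + S 1 2 * I)/2)⁻¹ hmem
        rwa [inv_smul_smul₀ hc1] at this
      by_cases hcm1 : ((S 0 2 - S 1 2 * I)/2) ≠ 0
      · apply main
        apply up2; apply up1; apply up0
        have hmem : ((S 0 2 - S 1 2 * I)/2) • wm1 ∈ L := by
          rw [proj_wm1 S hsym]
          exact L.add_mem (L.add_mem (L.add_mem (L.smul_mem _ hD1)
            (L.smul_mem _ hD2)) (L.smul_mem _ hD3)) (L.smul_mem _ hD4)
        have := L.smul_mem ((S 0 2 - S 1 2 * I)/2)⁻¹ hmem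
        rwa [inv_smul_smul₀ hcm1] at this
      by_cases hc0 : ((S 0 0 + S 1 1)/2) ≠ 0
      · apply main
        apply up2; apply up1
        have hmem : ((S 0 0 + S 1 1)/2) • w0 ∈ L := by
          rw [proj_w0 S hsym htrS]
          exact L.add_mem (L.add_mem hSL (L.smul_mem _ hD2)) (L.smul_mem _ hD4)
        have := L.smul_mem ((S 0 0 + S 1 1)/2)⁻¹ hmem
        rwa [inv_smul_smul₀ hc0] at this
      -- all components vanish: S = 0, contradiction
      · exfalso
        push_neg at hc2 hcm2 hc1 hcm1 hc0
        apply hSne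
        have e10 : S 1 0 = S 0 1 := by simpa using congrFun (congrFun hsym 0) 1
        have e20 : S 2 0 = S 0 2 := by simpa using congrFun (congrFun hsym 0) 2
        have e21 : S 2 1 = S 1 2 := by simpa using congrFun (congrFun hsym 1) 2
        have etr : S 2 2 = -S 0 0 - S 1 1 := by
          simp [Matrix.trace, Matrix.diag, Fin.sum_univ_three] at htrS
          linear_combination htrS
        have hd : S 0 1 = 0 := by
          have h := sub_eq_zero.mpr (hc2.trans hcm2.symm)
          have h' : S 0 1 * I = 0 := by linear_combination h
          rcases mul_eq_zero.mp h' with h'' | h''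
          · exact h''
          · exact absurd h'' I_ne_zero
        have hab : S 0 0 - S 1 1 = 0 := by linear_combination 4*hc2 - 2*I*hd
        have hf : S 1 2 = 0 := by
          have h := sub_eq_zero.mpr (hc1.trans hcm1.symm)
          have h' : S 1 2 * I = 0 := by linear_combination h
          rcases mul_eq_zero.mp h' with h'' | h''
          · exact h''
          · exact absurd h'' I_ne_zero
        have he : S 0 2 = 0 := by linear_combination 2*hc1 - I*hf
        have ha : S 0 0 = 0 := by linear_combination hc0 + hab/2
        have hb : S 1 1 = 0 := by linear_combination hc0 - hab/2
        ext i j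
        fin_cases i <;> fin_cases j <;>
          simp [ha, hb, hd, he, hf, e10, e20, e21, etr, Matrix.vecHead, Matrix.vecTail]
    obtain ⟨hw2, hw1, hw0, hwm1, hwm2⟩ := hAll
    -- conclude: L = sl3
    apply Set.Subset.antisymm hL
    intro Y hY
    have htrY : Matrix.trace Y = 0 := hY
    rw [SetLike.mem_coe, decomp Y htrY]
    exact L.add_mem (L.add_mem (L.add_mem (L.add_mem (L.add_mem (L.add_mem
      (L.add_mem (L.smul_mem _ hL1) (L.smul_mem _ hL2)) (L.smul_mem _ hL3))
      (L.smul_mem _ hw2)) (L.smul_mem _ hw1)) (L.smul_mem _ hw0))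
      (L.smul_mem _ hwm1)) (L.smul_mem _ hwm2)
end
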